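/- arXiv:2510.23563 — 10 statements merged into one kernel-verified Lean document; each statement's English description precedes it below -/
import Mathlib

section
/- Let B_2(x) = x^2 - x + 1/6 be the second Bernoulli polynomial. If f : [0,1] → ℝ is convex, then ∫₀¹ B_2(x) f(x) dx ≥ 0. -/
open MeasureTheory intervalIntegral

private lemma bern2_line_integral_zero (b c : ℝ) :
    ∫ x in (0:ℝ)..1, (x ^ 2 - x + 1 / 6) * (c + b * x) = 0 := by
  have h : (fun x : ℝ => (x ^ 2 - x + 1 / 6) * (c + b * x))
      = fun x => b * x ^ 3 + (c - b) * x ^ 2 + (b / 6 - c) * x + c / 6 := by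
    funext x; ring
  rw [h]
  have i3 : IntervalIntegrable (fun x : ℝ => b * x ^ 3) volume 0 1 :=
    (Continuous.intervalIntegrable (by continuity) 0 1)
  have i2 : IntervalIntegrable (fun x : ℝ => (c - b) * x ^ 2) volume 0 1 :=
    (Continuous.intervalIntegrable (by continuity) 0 1)
  have i1 : IntervalIntegrable (fun x : ℝ => (b / 6 - c) * x) volume 0 1 :=
    (Continuous.intervalIntegrable (by continuity) 0 1)
  have i0 : IntervalIntegrable (fun _ : ℝ => c / 6) volume 0 1 :=
    (Continuous.intervalIntegrable (by continuity) 0 1)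
  rw [integral_add ((i3.add i2).add i1) i0, integral_add (i3.add i2) i1,
    integral_add i3 i2]
  simp only [intervalIntegral.integral_const_mul, integral_pow, intervalIntegral.integral_const,
    integral_id, mul_comm]
  norm_num
  ring

set_option maxHeartbeats 1000000 in
/-- If `f` is convex on `[0,1]`, then `∫₀¹ B₂(x) f(x) dx ≥ 0`, where
`B₂(x) = x² - x + 1/6` is the second Bernoulli polynomial. -/
theorem bernoulli2_convex_integral_nonneg (f : ℝ → ℝ)
    (hf : ConvexOn ℝ (Set.Icc (0 : ℝ) 1) f) :
    0 ≤ ∫ x in (0 : ℝ)..1, (x ^ 2 - x + 1 / 6) * f x := by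
  set q : ℝ := Real.sqrt 3 with hqdef
  have hq0 : (0:ℝ) ≤ q := Real.sqrt_nonneg 3
  have hqsq : q ^ 2 = 3 := Real.sq_sqrt (by norm_num)
  have hq1 : 1 < q := by nlinarith
  have hq2 : q < 2 := by nlinarith
  set x₁ : ℝ := (3 - q) / 6 with hx1def
  set x₂ : ℝ := (3 + q) / 6 with hx2def
  have hx12 : x₁ < x₂ := by simp only [hx1def, hx2def]; linarith
  have hx1m : x₁ ∈ Set.Icc (0:ℝ) 1 := by
    constructor <;> simp only [hx1def] <;> linarith
  have hx2m : x₂ ∈ Set.Icc (0:ℝ) 1 := by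
    constructor <;> simp only [hx2def] <;> linarith
  -- factorization of B₂
  have hsum : x₁ + x₂ = 1 := by simp only [hx1def, hx2def]; ring
  have hprod : x₁ * x₂ = 1 / 6 := by
    simp only [hx1def, hx2def]; linear_combination (-(1:ℝ)/36) * hqsq
  have hfact : ∀ x : ℝ, x ^ 2 - x + 1 / 6 = (x - x₁) * (x - x₂) := by
    intro x
    have : (x - x₁) * (x - x₂) = x ^ 2 - (x₁ + x₂) * x + x₁ * x₂ := by ring
    rw [this, hsum, hprod]; ring
  -- the secant line
  set σ : ℝ := (f x₂ - f x₁) / (x₂ - x₁) with hσdef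
  have hσmul : σ * (x₂ - x₁) = f x₂ - f x₁ :=
    div_mul_cancel₀ _ (by linarith)
  set L : ℝ → ℝ := fun x => (f x₁ - σ * x₁) + σ * x with hLdef
  have hLx1 : L x₁ = f x₁ := by simp only [hLdef]; ring
  have hLx2 : L x₂ = f x₂ := by simp only [hLdef]; nlinarith [hσmul]
  -- pointwise inequality B₂ * L ≤ B₂ * f on [0,1]
  have key : ∀ x ∈ Set.Icc (0:ℝ) 1, (x ^ 2 - x + 1 / 6) * L x ≤ (x ^ 2 - x + 1 / 6) * f x := by
    intro x hx
    obtain ⟨hx0, hx1⟩ := hx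
    rcases lt_trichotomy x x₁ with h | h | h
    · -- x < x₁ : B₂ ≥ 0 and L ≤ f
      have hB : 0 ≤ x ^ 2 - x + 1 / 6 := by
        rw [hfact]
        nlinarith [mul_nonneg (by linarith : (0:ℝ) ≤ x₁ - x) (by linarith : (0:ℝ) ≤ x₂ - x)]
      have h1 : (f x₁ - f x) / (x₁ - x) ≤ σ :=
        hf.slope_mono_adjacent ⟨hx0, hx1⟩ hx2m h hx12
      have h2 : f x₁ - f x ≤ σ * (x₁ - x) := by
        rw [div_le_iff₀ (by linarith)] at h1; linarith
      have hLf : L x ≤ f x := by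
        simp only [hLdef]; nlinarith
      exact mul_le_mul_of_nonneg_left hLf hB
    · simp [h, hLx1]
    · rcases lt_trichotomy x x₂ with h' | h' | h'
      · -- x₁ < x < x₂ : B₂ ≤ 0 and f ≤ L
        have hB : x ^ 2 - x + 1 / 6 ≤ 0 := by
          rw [hfact]
          exact mul_nonpos_of_nonneg_of_nonpos (by linarith) (by linarith)
        have h1 : (f x - f x₁) / (x - x₁) ≤ (f x₂ - f x) / (x₂ - x) :=
          hf.slope_mono_adjacent hx1m hx2m h h'
        rw [div_le_div_iff₀ (by linarith) (by linarith)] at h1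
        have hfL : f x ≤ L x := by
          simp only [hLdef]; nlinarith [hσmul]
        exact mul_le_mul_of_nonpos_left hfL hB
      · simp [h', hLx2]
      · -- x₂ < x : B₂ ≥ 0 and L ≤ f
        have hB : 0 ≤ x ^ 2 - x + 1 / 6 := by
          rw [hfact]
          exact mul_nonneg (by linarith) (by linarith)
        have h1 : σ ≤ (f x - f x₂) / (x - x₂) :=
          hf.slope_mono_adjacent hx1m ⟨hx0, hx1⟩ hx12 h'
        have h2 : σ * (x - x₂) ≤ f x - f x₂ := by
          rw [le_div_iff₀ (by linarith)] at h1; linarith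
        have hLf : L x ≤ f x := by
          simp only [hLdef]; nlinarith [hσmul]
        exact mul_le_mul_of_nonneg_left hLf hB
  -- boundedness of f on [0,1]
  have hM : ∀ y ∈ Set.Icc (0:ℝ) 1, f y ≤ |f 0| + |f 1| := by
    intro y hy
    obtain ⟨hy0, hy1⟩ := hy
    have hc := hf.2 (Set.left_mem_Icc.2 zero_le_one) (Set.right_mem_Icc.2 zero_le_one)
      (by linarith : (0:ℝ) ≤ 1 - y) (by linarith : (0:ℝ) ≤ y) (by ring)
    simp only [smul_eq_mul, mul_zero, mul_one, zero_add] at hc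
    have h0 : f 0 ≤ |f 0| := le_abs_self _
    have h1 : f 1 ≤ |f 1| := le_abs_self _
    nlinarith [mul_le_mul_of_nonneg_left h0 (by linarith : (0:ℝ) ≤ 1 - y),
      mul_le_mul_of_nonneg_left h1 hy0,
      mul_nonneg hy0 (abs_nonneg (f 0)), mul_nonneg hy0 (abs_nonneg (f 1)),
      abs_nonneg (f 0), abs_nonneg (f 1)]
  set C : ℝ := |f 0| + |f 1| + 2 * |f (1/2)| with hCdef
  have hC : ∀ x ∈ Set.Icc (0:ℝ) 1, |f x| ≤ C := by
    intro x hx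
    obtain ⟨hx0, hx1⟩ := hx
    have hup : f x ≤ |f 0| + |f 1| := hM x ⟨hx0, hx1⟩
    have hmid : f (1/2) ≤ (1/2) * f x + (1/2) * f (1 - x) := by
      have hc := hf.2 (Set.mem_Icc.2 ⟨hx0, hx1⟩)
        (show (1:ℝ) - x ∈ Set.Icc (0:ℝ) 1 from Set.mem_Icc.2 ⟨by linarith, by linarith⟩)
        (by norm_num : (0:ℝ) ≤ 1/2) (by norm_num : (0:ℝ) ≤ 1/2) (by norm_num)
      have hx' : (2⁻¹ : ℝ) * x + 2⁻¹ * (1 - x) = 2⁻¹ := by ring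
      simpa [smul_eq_mul, hx'] using hc
    have h1x : f (1 - x) ≤ |f 0| + |f 1| := hM (1 - x) ⟨by linarith, by linarith⟩
    have habs := neg_abs_le (f (1/2))
    have habs' := abs_nonneg (f (1/2))
    rw [abs_le]
    constructor
    · simp only [hCdef]; linarith
    · simp only [hCdef]; linarith
  have hBbd : ∀ x ∈ Set.Icc (0:ℝ) 1, |x ^ 2 - x + 1 / 6| ≤ 1 := by
    intro x hx
    obtain ⟨hx0, hx1⟩ := hx
    rw [abs_le]; constructor <;> nlinarith
  have hcontB : Continuous fun x : ℝ => x ^ 2 - x + 1 / 6 :=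
    ((continuous_pow 2).sub continuous_id).add continuous_const
  have hfint : IntegrableOn (fun x => (x ^ 2 - x + 1 / 6) * f x) (Set.Ioo (0:ℝ) 1) volume := by
    have hcont : ContinuousOn (fun x => (x ^ 2 - x + 1 / 6) * f x) (Set.Ioo (0:ℝ) 1) := by
      apply ContinuousOn.mul hcontB.continuousOn
      have := hf.continuousOn_interior
      rwa [interior_Icc] at this
    refine ⟨hcont.aestronglyMeasurable measurableSet_Ioo, ?_⟩
    apply MeasureTheory.HasFiniteIntegral.restrict_of_bounded (C := 1 * (|C| + 1))
      (measure_Ioo_lt_top)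
    refine (ae_restrict_iff' measurableSet_Ioo).2 (Filter.Eventually.of_forall fun x hx => ?_)
    have hx' : x ∈ Set.Icc (0:ℝ) 1 := Set.Ioo_subset_Icc_self hx
    rw [Real.norm_eq_abs, abs_mul]
    have h1 := hBbd x hx'
    have h2 := hC x hx'
    have h3 : |f x| ≤ |C| + 1 := le_trans h2 (by cases abs_cases C <;> linarith)
    exact mul_le_mul h1 h3 (abs_nonneg _) (by norm_num)
  have hIf : IntervalIntegrable (fun x => (x ^ 2 - x + 1 / 6) * f x) volume 0 1 := by
    rw [intervalIntegrable_iff_integrableOn_Ioo_of_le zero_le_one]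
    exact hfint
  have hIL : IntervalIntegrable (fun x => (x ^ 2 - x + 1 / 6) * L x) volume 0 1 := by
    apply Continuous.intervalIntegrable
    exact hcontB.mul (continuous_const.add (continuous_const.mul continuous_id))
  have hmono := intervalIntegral.integral_mono_on zero_le_one hIL hIf key
  have hzero : ∫ x in (0:ℝ)..1, (x ^ 2 - x + 1 / 6) * L x = 0 := by
    simp only [hLdef]
    exact bern2_line_integral_zero σ (f x₁ - σ * x₁)
  linarith [hmono]
end

section
/- For 0 < α < 1, n ∈ ℕ with n ≥ 1, and t ∈ (0,1] with nt ∉ ℕ, define f_n(t) = ∫₀ᵗ (t-s)^{α-1} (⌈ns⌉ - ns - 1/2) ds. Then f_n(t) = (1/α) Σ_{k=1}^{⌊nt⌋} (t - k/n)^α + (1/(2α)) t^α - (n/(α(α+1))) t^{α+1}. -/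
open MeasureTheory intervalIntegral

private lemma abel_aux (b : ℕ → ℝ) (M : ℕ) :
    ∑ k ∈ Finset.range M, ((k : ℝ) + 1) * (b k - b (k + 1))
      = ∑ k ∈ Finset.range M, b k - (M : ℝ) * b M := by
  induction M with
  | zero => simp
  | succ M ih =>
      rw [Finset.sum_range_succ, Finset.sum_range_succ (f := b), ih]
      push_cast
      ring

/-- Explicit formula for `f_n(t) = ∫₀ᵗ (t-s)^{α-1} (⌈ns⌉ - ns - 1/2) ds`
when `0 < α < 1`, `n ≥ 1`, `t ∈ (0,1]` and `nt` is not an integer. -/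
theorem fn_explicit_formula (α : ℝ) (hα : α ∈ Set.Ioo (0 : ℝ) 1)
    (n : ℕ) (hn : 1 ≤ n) (t : ℝ) (ht : t ∈ Set.Ioc (0 : ℝ) 1)
    (hnt : ∀ k : ℕ, (n : ℝ) * t ≠ k) :
    ∫ s in (0 : ℝ)..t, (t - s) ^ (α - 1) * ((⌈(n : ℝ) * s⌉ : ℝ) - n * s - 1 / 2)
      = (1 / α) * ∑ k ∈ Finset.Icc 1 ⌊(n : ℝ) * t⌋₊, (t - (k : ℝ) / n) ^ α
        + (1 / (2 * α)) * t ^ α - ((n : ℝ) / (α * (α + 1))) * t ^ (α + 1) := by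
  obtain ⟨hα0, hα1⟩ := hα
  obtain ⟨ht0, ht1⟩ := ht
  have hn0 : (0:ℝ) < n := by exact_mod_cast hn
  have hα0' : α ≠ 0 := ne_of_gt hα0
  have hα1' : α + 1 ≠ 0 := by positivity
  have hαm1 : (-1:ℝ) < α - 1 := by linarith
  set m := ⌊(n : ℝ) * t⌋₊ with hm_def
  have hnt0 : (0:ℝ) < n * t := mul_pos hn0 ht0
  have hmlt : (m : ℝ) < n * t :=
    lt_of_le_of_ne (Nat.floor_le hnt0.le) (fun h => hnt m h.symm)
  have hltm1 : (n:ℝ) * t < m + 1 := Nat.lt_floor_add_one _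
  -- base integrability
  have hbase : ∀ a b : ℝ, IntervalIntegrable (fun s => (t - s) ^ (α - 1)) volume a b := by
    intro a b
    have := (intervalIntegral.intervalIntegrable_rpow' hαm1
      (a := t - a) (b := t - b)).comp_sub_left t
    simpa using this
  -- value of base integral from a to t
  have hval : ∀ a : ℝ, (∫ s in a..t, (t - s) ^ (α - 1)) = (t - a) ^ α / α := by
    intro a
    have h1 : (∫ s in a..t, (fun u : ℝ => u ^ (α - 1)) (t - s))
        = ∫ u in (t - t)..(t - a), u ^ (α - 1) :=
      integral_comp_sub_left (fun u : ℝ => u ^ (α - 1)) t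
    rw [show (∫ s in a..t, (t - s) ^ (α - 1))
        = ∫ s in a..t, (fun u : ℝ => u ^ (α - 1)) (t - s) from rfl, h1, sub_self,
      integral_rpow (Or.inl hαm1)]
    have he : α - 1 + 1 = α := by ring
    rw [he, Real.zero_rpow hα0', sub_zero]
  -- partition points
  set a : ℕ → ℝ := fun k => if k ≤ m then (k : ℝ) / n else t with ha_def
  have ha0 : a 0 = 0 := by simp [ha_def]
  have haM : a (m + 1) = t := by simp [ha_def]
  have hak : ∀ k, k ≤ m → a k = (k:ℝ)/n := by
    intro k hk; simp [ha_def, hk]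
  have hdiv : ∀ k : ℕ, k ≤ m → (k:ℝ)/n < t := by
    intro k hk
    rw [div_lt_iff₀ hn0]
    have hk' : (k:ℝ) ≤ m := by exact_mod_cast hk
    nlinarith
  have hle : ∀ k, k ≤ m → a k ≤ a (k+1) := by
    intro k hk
    rw [hak k hk]
    by_cases h : k + 1 ≤ m
    · rw [hak _ h]
      gcongr
      exact_mod_cast Nat.le_succ k
    · have h' : a (k+1) = t := by simp [ha_def, h]
      rw [h']
      exact (hdiv k hk).le
  -- ceiling value on pieces
  have hceil : ∀ k, k ≤ m → ∀ s ∈ Set.Ioc (a k) (a (k+1)),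
      ((⌈(n:ℝ) * s⌉ : ℤ) : ℝ) = (k:ℝ) + 1 := by
    intro k hk s hs
    have h1 : (k:ℝ)/n < s := by rw [hak k hk] at hs; exact hs.1
    have hlow : (k:ℝ) < n * s := by
      rw [div_lt_iff₀ hn0] at h1; linarith [h1]
    have hupp : n * s ≤ (k:ℝ) + 1 := by
      by_cases h : k + 1 ≤ m
      · have h2 : s ≤ ((k+1:ℕ):ℝ)/n := by rw [← hak _ h]; exact hs.2
        rw [le_div_iff₀ hn0] at h2
        push_cast at h2
        linarith
      · have h' : a (k+1) = t := by simp [ha_def, h]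
        have hkm : k = m := by omega
        have h2 : s ≤ t := by rw [← h']; exact hs.2
        have : (n:ℝ) * s ≤ n * t := by nlinarith
        rw [hkm]
        push_cast
        linarith
    have hc : ⌈(n:ℝ)*s⌉ = (k:ℤ)+1 := by
      rw [Int.ceil_eq_iff]
      constructor <;> push_cast <;> linarith
    rw [hc]; push_cast; ring
  -- the three pieces of the integrand
  set f1 : ℝ → ℝ := fun s => (t - s) ^ (α - 1) * ((⌈(n:ℝ) * s⌉ : ℤ) : ℝ) with hf1
  -- piecewise integrability
  have hpieceInt : ∀ k < m + 1, IntervalIntegrable f1 volume (a k) (a (k+1)) := by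
    intro k hk
    have hk' : k ≤ m := by omega
    rw [intervalIntegrable_iff_integrableOn_Ioc_of_le (hle k hk')]
    have hconst : IntegrableOn (fun s => (t - s)^(α-1) * ((k:ℝ)+1))
        (Set.Ioc (a k) (a (k+1))) volume := by
      rw [← intervalIntegrable_iff_integrableOn_Ioc_of_le (hle k hk')]
      exact (hbase _ _).mul_const _
    exact hconst.congr_fun (fun s hs => by rw [hf1]; simp only; rw [hceil k hk' s hs])
      measurableSet_Ioc
  have hf1int : IntervalIntegrable f1 volume 0 t := by
    have := IntervalIntegrable.trans_iterate hpieceInt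
    rwa [ha0, haM] at this
  -- value of each piece
  have hpieceval : ∀ k, k ≤ m → (∫ s in a k..a (k+1), f1 s)
      = ((k:ℝ)+1) * ((t - a k)^α - (t - a (k+1))^α) / α := by
    intro k hk
    have h1 : (∫ s in a k..a (k+1), f1 s)
        = ∫ s in a k..a (k+1), (t - s)^(α-1) * ((k:ℝ)+1) := by
      rw [integral_of_le (hle k hk), integral_of_le (hle k hk)]
      exact setIntegral_congr_fun measurableSet_Ioc
        (fun s hs => by rw [hf1]; simp only; rw [hceil k hk s hs])
    rw [h1, intervalIntegral.integral_mul_const]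
    have h2 : (∫ s in a k..a (k+1), (t-s)^(α-1))
        = (t - a k)^α/α - (t - a (k+1))^α/α := by
      have h3 := integral_add_adjacent_intervals (hbase (a k) (a (k+1))) (hbase (a (k+1)) t)
      rw [hval, hval] at h3
      linarith
    rw [h2]; ring
  -- value of I1
  have hI1 : (∫ s in (0:ℝ)..t, f1 s)
      = (1/α) * ((t:ℝ)^α + ∑ k ∈ Finset.Icc 1 m, (t - (k:ℝ)/n)^α) := by
    have key := sum_integral_adjacent_intervals hpieceInt
    rw [ha0, haM] at key
    rw [← key]
    rw [Finset.sum_congr rfl (fun k hk => hpieceval k (by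
      simpa using Nat.lt_succ_iff.mp (Finset.mem_range.mp hk)))]
    have : ∑ k ∈ Finset.range (m+1), ((k:ℝ)+1) * ((t - a k)^α - (t - a (k+1))^α) / α
        = (∑ k ∈ Finset.range (m+1), ((k:ℝ)+1) * ((t - a k)^α - (t - a (k+1))^α)) / α := by
      rw [Finset.sum_div]
    rw [this, abel_aux (fun k => (t - a k)^α) (m+1)]
    have hbM : (t - a (m+1))^α = 0 := by rw [haM, sub_self, Real.zero_rpow hα0']
    rw [hbM, mul_zero, sub_zero]
    rw [Finset.sum_range_succ' (fun k => (t - a k)^α) m]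
    rw [ha0, sub_zero]
    have hIcc : ∑ k ∈ Finset.Icc 1 m, (t - (k:ℝ)/n)^α
        = ∑ k ∈ Finset.range m, (t - ((1+k:ℕ):ℝ)/n)^α := by
      rw [← Finset.Ico_add_one_right_eq_Icc, Finset.sum_Ico_eq_sum_range]
      simp
    have hterm : ∀ k ∈ Finset.range m, (t - a (k+1))^α = (t - ((1+k:ℕ):ℝ)/n)^α := by
      intro k hk
      have hk' : k + 1 ≤ m := Finset.mem_range.mp hk
      rw [hak _ hk']
      congr 2
      push_cast; ring
    rw [Finset.sum_congr rfl hterm, ← hIcc]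
    ring
  -- value of I2
  have hI2 : (∫ s in (0:ℝ)..t, (t - s)^(α-1) * ((n:ℝ) * s))
      = (n:ℝ) * t * (t^α / α) - (n:ℝ) * (t^(α+1) / (α+1)) := by
    have h1 : (∫ s in (0:ℝ)..t, (t - s)^(α-1) * ((n:ℝ)*s))
        = ∫ s in (0:ℝ)..t, (fun u : ℝ => u^(α-1) * ((n:ℝ)*(t - u))) (t - s) := by
      apply integral_congr
      intro s _
      simp only
      rw [show t - (t - s) = s by ring]
    rw [h1, integral_comp_sub_left (fun u : ℝ => u^(α-1) * ((n:ℝ)*(t - u))) t,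
      sub_self, sub_zero]
    have h2 : (∫ u in (0:ℝ)..t, u^(α-1)*((n:ℝ)*(t-u)))
        = ∫ u in (0:ℝ)..t, ((n:ℝ)*t*u^(α-1) - (n:ℝ)*u^α) := by
      apply integral_congr
      intro u hu
      show u ^ (α - 1) * ((n:ℝ) * (t - u)) = (n:ℝ) * t * u ^ (α - 1) - (n:ℝ) * u ^ α
      have hu0 : 0 ≤ u := by
        rw [Set.uIcc_of_le ht0.le] at hu; exact hu.1
      rcases eq_or_lt_of_le hu0 with h|h
      · simp only [← h, Real.zero_rpow hα0', Real.zero_rpow (show α - 1 ≠ 0 by linarith)]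
        ring
      · have h3 : u^(α-1) * u = u^α := by
          rw [← Real.rpow_add_one h.ne']
          congr 1; ring
        rw [← h3]; ring
    rw [h2, integral_sub (((intervalIntegral.intervalIntegrable_rpow' hαm1)).const_mul _)
      ((intervalIntegral.intervalIntegrable_rpow' (by linarith : (-1:ℝ) < α)).const_mul _),
      intervalIntegral.integral_const_mul, intervalIntegral.integral_const_mul, integral_rpow (Or.inl hαm1),
      integral_rpow (Or.inl (by linarith : (-1:ℝ) < α))]
    have he : α - 1 + 1 = α := by ring
    rw [he, Real.zero_rpow hα0', Real.zero_rpow hα1', sub_zero, sub_zero]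
  -- value of I3
  have hI3 : (∫ s in (0:ℝ)..t, (t - s)^(α-1) * (1/2 : ℝ)) = t^α/α * (1/2) := by
    rw [intervalIntegral.integral_mul_const, hval 0, sub_zero]
  -- integrability of I2, I3
  have h2int : IntervalIntegrable (fun s => (t - s)^(α-1) * ((n:ℝ)*s)) volume 0 t :=
    (hbase 0 t).mul_continuousOn (by fun_prop)
  have h3int : IntervalIntegrable (fun s => (t - s)^(α-1) * (1/2 : ℝ)) volume 0 t :=
    (hbase 0 t).mul_const _
  -- put everything together
  rw [integral_congr (g := fun s => f1 s - ((t - s)^(α-1) * ((n:ℝ)*s)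
      + (t - s)^(α-1) * (1/2:ℝ))) (fun s _ => by rw [hf1]; simp only; push_cast; ring)]
  rw [integral_sub hf1int (h2int.add h3int), integral_add h2int h3int, hI1, hI2, hI3]
  have htpow : t ^ (α+1) = t^α * t := Real.rpow_add_one ht0.ne' α
  rw [htpow]
  field_simp
  ring
end

section
/- For 0 < α < 1 and 0 < γ < 1, define R_2(γ) = (α(1-α)/2) ∫₀^∞ B_2({x}) (γ+x)^{α-2} dx, where {x} is the fractional part and B_2(x) = x² - x + 1/6. Then R_2 is well-defined (the integral converges absolutely) and R_2 is nonincreasing on (0,1). -/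
open MeasureTheory Set

lemma rpow_shift_integrable {γ p : ℝ} (hγ : 0 < γ) (hp : p < -1) :
    IntegrableOn (fun x : ℝ => (γ + x) ^ p) (Set.Ioi 0) := by
  have h1 : IntegrableOn (fun t : ℝ => t ^ p) (Set.Ioi γ) :=
    integrableOn_Ioi_rpow_of_lt hp hγ
  have h2 : Integrable ((Set.Ioi γ).indicator fun t : ℝ => t ^ p) := by
    rwa [integrable_indicator_iff measurableSet_Ioi]
  have h3 := h2.comp_add_left γ
  have h4 : (fun x : ℝ => ((Set.Ioi γ).indicator fun t : ℝ => t ^ p) (γ + x))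
      = (Set.Ioi (0:ℝ)).indicator fun x => (γ + x) ^ p := by
    funext x
    simp only [Set.indicator_apply, Set.mem_Ioi]
    by_cases hx : 0 < x
    · rw [if_pos (by linarith), if_pos hx]
    · rw [if_neg (fun h => hx (by linarith)), if_neg hx]
  rw [← integrable_indicator_iff measurableSet_Ioi, ← h4]
  exact h3

lemma main_integrable {α γ : ℝ} (hα1 : α < 1) (hγ : 0 < γ) :
    IntegrableOn
      (fun x : ℝ => ((Int.fract x) ^ 2 - Int.fract x + 1 / 6) * (γ + x) ^ (α - 2))
      (Set.Ioi 0) := by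
  have hint := rpow_shift_integrable hγ (by linarith : α - 2 < -1)
  refine Integrable.mono (hint.const_mul (1/6 : ℝ)) ?_ ?_
  · exact (((measurable_fract.pow_const 2).sub measurable_fract).add_const
      (1/6 : ℝ)).aestronglyMeasurable.mul hint.aestronglyMeasurable
  · filter_upwards [ae_restrict_mem measurableSet_Ioi] with x hx
    have h0 := Int.fract_nonneg x
    have h1 := Int.fract_lt_one x
    have hpos : (0:ℝ) < γ + x := by have : (0:ℝ) < x := hx; linarith
    have hrp : (0:ℝ) ≤ (γ + x) ^ (α - 2) := Real.rpow_nonneg hpos.le _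
    rw [norm_mul, norm_mul, Real.norm_eq_abs, Real.norm_eq_abs, Real.norm_eq_abs]
    have hb : |(Int.fract x) ^ 2 - Int.fract x + 1 / 6| ≤ |(1:ℝ)/6| := by
      rw [abs_of_pos (by norm_num : (0:ℝ) < 1/6)]
      refine abs_le.mpr ⟨by nlinarith, by nlinarith⟩
    exact mul_le_mul hb (le_of_eq rfl) (abs_nonneg _) (abs_nonneg _)

lemma interval_nonpos {α γ₁ γ₂ : ℝ} (hα0 : 0 < α) (hα1 : α < 1)
    (h1 : 0 < γ₁) (h12 : γ₁ ≤ γ₂) (n : ℕ) :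
    ∫ x in Set.Ioc (n : ℝ) (n + 1),
      ((Int.fract x) ^ 2 - Int.fract x + 1 / 6) *
        ((γ₂ + x) ^ (α - 2) - (γ₁ + x) ^ (α - 2)) ≤ 0 := by
  have h2 : 0 < γ₂ := lt_of_lt_of_le h1 h12
  set a : ℝ := (n : ℝ) with ha_def
  have ha : 0 ≤ a := Nat.cast_nonneg n
  set p : ℝ := α - 2 with hp_def
  -- replace fract with polynomial
  have hcongr : Set.EqOn
      (fun x : ℝ => ((Int.fract x) ^ 2 - Int.fract x + 1 / 6) *
        ((γ₂ + x) ^ p - (γ₁ + x) ^ p))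
      (fun x : ℝ => ((x - a) ^ 2 - (x - a) + 1 / 6) *
        ((γ₂ + x) ^ p - (γ₁ + x) ^ p))
      (Set.Ioc a (a + 1)) := by
    intro x hx
    dsimp only
    rcases eq_or_lt_of_le hx.2 with h | h
    · subst h
      have hfr : Int.fract (a + 1) = 0 := by
        have hcast : a + 1 = ((n + 1 : ℕ) : ℝ) := by push_cast [ha_def]; ring
        rw [hcast, Int.fract_natCast]
      rw [hfr]
      ring
    · have hfl : ⌊x⌋ = (n : ℤ) := by
        rw [Int.floor_eq_iff]
        constructor
        · push_cast; linarith [hx.1]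
        · push_cast; linarith
      have hfr : Int.fract x = x - a := by
        rw [Int.fract, hfl, ha_def]; push_cast; ring
      simp only [hfr]
  rw [setIntegral_congr_fun measurableSet_Ioc hcongr,
    ← intervalIntegral.integral_of_le (by linarith : a ≤ a + 1)]
  -- derivative facts
  have hpos : ∀ γ : ℝ, 0 < γ → ∀ x ∈ Set.uIcc a (a + 1), (0 : ℝ) < γ + x := by
    intro γ hγ x hx
    rw [Set.uIcc_of_le (by linarith)] at hx
    linarith [hx.1]
  have hder : ∀ (γ : ℝ), 0 < γ → ∀ (q : ℝ), ∀ x ∈ Set.uIcc a (a + 1),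
      HasDerivAt (fun y : ℝ => (γ + y) ^ q) (q * (γ + x) ^ (q - 1)) x := by
    intro γ hγ q x hx
    have hadd : HasDerivAt (fun y : ℝ => γ + y) 1 x := (hasDerivAt_id x).const_add γ
    have := hadd.rpow_const (p := q) (Or.inl (ne_of_gt (hpos γ hγ x hx)))
    simpa using this
  have hd_h : ∀ x ∈ Set.uIcc a (a + 1),
      HasDerivAt (fun y : ℝ => (γ₂ + y) ^ p - (γ₁ + y) ^ p)
        (p * (γ₂ + x) ^ (p - 1) - p * (γ₁ + x) ^ (p - 1)) x :=
    fun x hx => (hder γ₂ h2 p x hx).sub (hder γ₁ h1 p x hx)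
  have hd_h' : ∀ x ∈ Set.uIcc a (a + 1),
      HasDerivAt (fun y : ℝ => p * (γ₂ + y) ^ (p - 1) - p * (γ₁ + y) ^ (p - 1))
        (p * ((p - 1) * (γ₂ + x) ^ (p - 1 - 1)) - p * ((p - 1) * (γ₁ + x) ^ (p - 1 - 1))) x :=
    fun x hx => ((hder γ₂ h2 (p - 1) x hx).const_mul p).sub
      ((hder γ₁ h1 (p - 1) x hx).const_mul p)
  have hd_u1 : ∀ x : ℝ, HasDerivAt (fun y : ℝ => (y - a) ^ 3 / 3 - (y - a) ^ 2 / 2 + (y - a) / 6)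
      ((x - a) ^ 2 - (x - a) + 1 / 6) x := by
    intro x
    have hid : HasDerivAt (fun y : ℝ => y - a) 1 x := (hasDerivAt_id x).sub_const a
    refine ((((hid.pow 3).div_const 3).sub ((hid.pow 2).div_const 2)).add
      (hid.div_const 6)).congr_deriv ?_
    push_cast; ring
  have hd_u2 : ∀ x : ℝ, HasDerivAt (fun y : ℝ => (y - a) ^ 2 * (y - a - 1) ^ 2 / 12)
      ((x - a) ^ 3 / 3 - (x - a) ^ 2 / 2 + (x - a) / 6) x := by
    intro x
    have hid : HasDerivAt (fun y : ℝ => y - a) 1 x := (hasDerivAt_id x).sub_const a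
    have hid1 : HasDerivAt (fun y : ℝ => y - a - 1) 1 x := hid.sub_const 1
    refine (((hid.pow 2).mul (hid1.pow 2)).div_const 12).congr_deriv ?_
    simp only [Pi.pow_apply]
    push_cast; ring
  -- interval integrability facts
  have hrpow_cont : ∀ (γ : ℝ), 0 < γ → ∀ (q : ℝ),
      ContinuousOn (fun y : ℝ => (γ + y) ^ q) (Set.uIcc a (a + 1)) := by
    intro γ hγ q
    exact (continuousOn_const.add continuousOn_id).rpow_const
      (fun x hx => Or.inl (ne_of_gt (hpos γ hγ x hx)))
  have hB_int : IntervalIntegrable (fun x : ℝ => (x - a) ^ 2 - (x - a) + 1 / 6)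
      volume a (a + 1) := (by fun_prop : Continuous fun x : ℝ => (x - a) ^ 2 - (x - a) + 1 / 6).intervalIntegrable a (a + 1)
  have hH'_int : IntervalIntegrable
      (fun x : ℝ => p * (γ₂ + x) ^ (p - 1) - p * (γ₁ + x) ^ (p - 1)) volume a (a + 1) :=
    (((hrpow_cont γ₂ h2 (p - 1)).const_smul p).sub
      ((hrpow_cont γ₁ h1 (p - 1)).const_smul p)).intervalIntegrable
  have hU1_int : IntervalIntegrable
      (fun x : ℝ => (x - a) ^ 3 / 3 - (x - a) ^ 2 / 2 + (x - a) / 6) volume a (a + 1) :=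
    (by fun_prop : Continuous fun x : ℝ => (x - a) ^ 3 / 3 - (x - a) ^ 2 / 2 + (x - a) / 6).intervalIntegrable a (a + 1)
  have hH''_int : IntervalIntegrable
      (fun x : ℝ => p * ((p - 1) * (γ₂ + x) ^ (p - 1 - 1)) -
        p * ((p - 1) * (γ₁ + x) ^ (p - 1 - 1))) volume a (a + 1) :=
    ((((hrpow_cont γ₂ h2 (p - 1 - 1)).const_smul (p - 1)).const_smul p).sub
      (((hrpow_cont γ₁ h1 (p - 1 - 1)).const_smul (p - 1)).const_smul p)).intervalIntegrable
  -- first integration by parts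
  have ibp1 := intervalIntegral.integral_mul_deriv_eq_deriv_mul
    (u := fun y : ℝ => (y - a) ^ 3 / 3 - (y - a) ^ 2 / 2 + (y - a) / 6)
    (u' := fun x : ℝ => (x - a) ^ 2 - (x - a) + 1 / 6)
    (v := fun y : ℝ => (γ₂ + y) ^ p - (γ₁ + y) ^ p)
    (v' := fun x : ℝ => p * (γ₂ + x) ^ (p - 1) - p * (γ₁ + x) ^ (p - 1))
    (a := a) (b := a + 1)
    (fun x _ => hd_u1 x) hd_h hB_int hH'_int
  -- second integration by parts
  have ibp2 := intervalIntegral.integral_mul_deriv_eq_deriv_mul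
    (u := fun y : ℝ => p * (γ₂ + y) ^ (p - 1) - p * (γ₁ + y) ^ (p - 1))
    (u' := fun x : ℝ => p * ((p - 1) * (γ₂ + x) ^ (p - 1 - 1)) -
      p * ((p - 1) * (γ₁ + x) ^ (p - 1 - 1)))
    (v := fun y : ℝ => (y - a) ^ 2 * (y - a - 1) ^ 2 / 12)
    (v' := fun x : ℝ => (x - a) ^ 3 / 3 - (x - a) ^ 2 / 2 + (x - a) / 6)
    (a := a) (b := a + 1)
    hd_h' (fun x _ => hd_u2 x) hH''_int hU1_int
  -- simplify boundary terms
  have hb1 : ((a + 1 : ℝ) - a) ^ 3 / 3 - ((a + 1 : ℝ) - a) ^ 2 / 2 + ((a + 1 : ℝ) - a) / 6 = 0 := by ring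
  have hb2 : ((a : ℝ) - a) ^ 3 / 3 - ((a : ℝ) - a) ^ 2 / 2 + ((a : ℝ) - a) / 6 = 0 := by ring
  have hb3 : ((a + 1 : ℝ) - a) ^ 2 * ((a + 1 : ℝ) - a - 1) ^ 2 / 12 = 0 := by ring
  have hb4 : ((a : ℝ) - a) ^ 2 * ((a : ℝ) - a - 1) ^ 2 / 12 = 0 := by ring
  rw [hb1, hb2, zero_mul, zero_mul, sub_zero, zero_sub] at ibp1
  rw [hb3, hb4, mul_zero, mul_zero, sub_zero, zero_sub] at ibp2
  have hcomm : (∫ x in a..(a + 1),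
        ((x - a) ^ 3 / 3 - (x - a) ^ 2 / 2 + (x - a) / 6) *
        (p * (γ₂ + x) ^ (p - 1) - p * (γ₁ + x) ^ (p - 1)))
      = ∫ x in a..(a + 1),
        (p * (γ₂ + x) ^ (p - 1) - p * (γ₁ + x) ^ (p - 1)) *
        ((x - a) ^ 3 / 3 - (x - a) ^ 2 / 2 + (x - a) / 6) :=
    intervalIntegral.integral_congr (fun x _ => mul_comm _ _)
  -- the final integrand is nonpositive
  have hle : (∫ x in a..(a + 1),
      (p * ((p - 1) * (γ₂ + x) ^ (p - 1 - 1)) -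
        p * ((p - 1) * (γ₁ + x) ^ (p - 1 - 1))) *
      ((x - a) ^ 2 * (x - a - 1) ^ 2 / 12)) ≤ 0 := by
    have h0 : 0 ≤ ∫ x in a..(a + 1),
        -((p * ((p - 1) * (γ₂ + x) ^ (p - 1 - 1)) -
          p * ((p - 1) * (γ₁ + x) ^ (p - 1 - 1))) *
        ((x - a) ^ 2 * (x - a - 1) ^ 2 / 12)) := by
      apply intervalIntegral.integral_nonneg (by linarith : a ≤ a + 1)
      intro x hx
      rw [neg_nonneg]
      have hpos1 : (0 : ℝ) < γ₁ + x := by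
        have := hx.1
        linarith
      have hfactor : p * (p - 1) > 0 := by
        have hpneg : p < 0 := by rw [hp_def]; linarith
        nlinarith
      have hmono : (γ₂ + x) ^ (p - 1 - 1) ≤ (γ₁ + x) ^ (p - 1 - 1) :=
        Real.rpow_le_rpow_of_nonpos hpos1 (by linarith) (by rw [hp_def]; linarith)
      have hleft : p * ((p - 1) * (γ₂ + x) ^ (p - 1 - 1)) -
          p * ((p - 1) * (γ₁ + x) ^ (p - 1 - 1)) ≤ 0 := by nlinarith
      have hright : (0 : ℝ) ≤ (x - a) ^ 2 * (x - a - 1) ^ 2 / 12 := by positivity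
      exact mul_nonpos_of_nonpos_of_nonneg hleft hright
    rw [intervalIntegral.integral_neg] at h0
    linarith
  linarith [ibp1, ibp2, hcomm, hle]

lemma union_Ioc : (⋃ n : ℕ, Set.Ioc (n : ℝ) (n + 1)) = Set.Ioi 0 := by
  ext x
  simp only [Set.mem_iUnion, Set.mem_Ioc, Set.mem_Ioi]
  constructor
  · rintro ⟨n, hn, -⟩
    have : (0 : ℝ) ≤ n := Nat.cast_nonneg n
    linarith
  · intro hx
    have hc : (1 : ℤ) ≤ ⌈x⌉ := Int.ceil_pos.mpr hx
    have ht : (((⌈x⌉ - 1).toNat : ℤ) : ℝ) = (⌈x⌉ : ℝ) - 1 := by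
      rw [Int.toNat_of_nonneg (by omega)]; push_cast; ring
    have hcast : (((⌈x⌉ - 1).toNat : ℕ) : ℝ) = (⌈x⌉ : ℝ) - 1 := by exact_mod_cast ht
    have hlt := Int.ceil_lt_add_one x
    have hle := Int.le_ceil x
    refine ⟨(⌈x⌉ - 1).toNat, ?_, ?_⟩
    · rw [hcast]
      have : (⌈x⌉ : ℝ) < x + 1 := by exact_mod_cast hlt
      linarith
    · rw [hcast]
      have : x ≤ (⌈x⌉ : ℝ) := hle
      linarith

lemma total_nonpos {α γ₁ γ₂ : ℝ} (hα0 : 0 < α) (hα1 : α < 1)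
    (h1 : 0 < γ₁) (h12 : γ₁ ≤ γ₂) :
    ∫ x in Set.Ioi (0 : ℝ),
      ((Int.fract x) ^ 2 - Int.fract x + 1 / 6) *
        ((γ₂ + x) ^ (α - 2) - (γ₁ + x) ^ (α - 2)) ≤ 0 := by
  have h2 : 0 < γ₂ := lt_of_lt_of_le h1 h12
  have hfi : IntegrableOn
      (fun x : ℝ => ((Int.fract x) ^ 2 - Int.fract x + 1 / 6) *
        ((γ₂ + x) ^ (α - 2) - (γ₁ + x) ^ (α - 2))) (Set.Ioi 0) := by
    have heq : (fun x : ℝ => ((Int.fract x) ^ 2 - Int.fract x + 1 / 6) *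
        ((γ₂ + x) ^ (α - 2) - (γ₁ + x) ^ (α - 2)))
        = fun x : ℝ => ((Int.fract x) ^ 2 - Int.fract x + 1 / 6) * (γ₂ + x) ^ (α - 2) -
          ((Int.fract x) ^ 2 - Int.fract x + 1 / 6) * (γ₁ + x) ^ (α - 2) := by
      funext x; ring
    rw [heq]
    exact (main_integrable hα1 h2).sub (main_integrable hα1 h1)
  have hd : Pairwise (Function.onFun Disjoint fun n : ℕ => Set.Ioc (n : ℝ) (n + 1)) := by
    intro m n hmn
    refine Set.Ioc_disjoint_Ioc.mpr ?_
    rcases lt_or_gt_of_ne hmn with h | h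
    · have : (m : ℝ) + 1 ≤ n := by exact_mod_cast Nat.succ_le_of_lt h
      calc min ((m : ℝ) + 1) ((n : ℝ) + 1) ≤ (m : ℝ) + 1 := min_le_left _ _
        _ ≤ (n : ℝ) := this
        _ ≤ max (m : ℝ) n := le_max_right _ _
    · have : (n : ℝ) + 1 ≤ m := by exact_mod_cast Nat.succ_le_of_lt h
      calc min ((m : ℝ) + 1) ((n : ℝ) + 1) ≤ (n : ℝ) + 1 := min_le_right _ _
        _ ≤ (m : ℝ) := this
        _ ≤ max (m : ℝ) n := le_max_left _ _
  rw [← union_Ioc] at hfi ⊢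
  rw [integral_iUnion (fun n => measurableSet_Ioc) hd hfi]
  exact tsum_nonpos (fun n => interval_nonpos hα0 hα1 h1 h12 n)

open MeasureTheory

/-- For `0 < α < 1`, the function
`R₂(γ) = (α(1-α)/2) ∫₀^∞ B₂({x}) (γ+x)^{α-2} dx` is well defined (the
integrand is integrable on `(0,∞)`) for every `γ ∈ (0,1)`, and `R₂` is
nonincreasing on `(0,1)`. Here `{x}` is the fractional part and
`B₂(x) = x² - x + 1/6`. -/
theorem R2_integrable_and_antitone (α : ℝ) (hα : α ∈ Set.Ioo (0 : ℝ) 1) :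
    (∀ γ ∈ Set.Ioo (0 : ℝ) 1,
      IntegrableOn
        (fun x : ℝ => ((Int.fract x) ^ 2 - Int.fract x + 1 / 6) * (γ + x) ^ (α - 2))
        (Set.Ioi 0)) ∧
    AntitoneOn
      (fun γ : ℝ => α * (1 - α) / 2 *
        ∫ x in Set.Ioi (0 : ℝ),
          ((Int.fract x) ^ 2 - Int.fract x + 1 / 6) * (γ + x) ^ (α - 2))
      (Set.Ioo 0 1) := by
  obtain ⟨hα0, hα1⟩ := hα
  constructor
  · intro γ hγ
    exact main_integrable hα1 hγ.1
  · intro γ₁ hγ₁ γ₂ hγ₂ h12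
    have h1 : 0 < γ₁ := hγ₁.1
    have h2 : 0 < γ₂ := hγ₂.1
    have hc : 0 ≤ α * (1 - α) / 2 := by nlinarith
    have hdiff : (∫ x in Set.Ioi (0 : ℝ),
          ((Int.fract x) ^ 2 - Int.fract x + 1 / 6) * (γ₂ + x) ^ (α - 2))
        - (∫ x in Set.Ioi (0 : ℝ),
          ((Int.fract x) ^ 2 - Int.fract x + 1 / 6) * (γ₁ + x) ^ (α - 2)) ≤ 0 := by
      have hsub : (∫ x in Set.Ioi (0 : ℝ),
            ((Int.fract x) ^ 2 - Int.fract x + 1 / 6) * (γ₂ + x) ^ (α - 2))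
          - (∫ x in Set.Ioi (0 : ℝ),
            ((Int.fract x) ^ 2 - Int.fract x + 1 / 6) * (γ₁ + x) ^ (α - 2))
          = ∫ x in Set.Ioi (0 : ℝ),
            (((Int.fract x) ^ 2 - Int.fract x + 1 / 6) * (γ₂ + x) ^ (α - 2) -
              ((Int.fract x) ^ 2 - Int.fract x + 1 / 6) * (γ₁ + x) ^ (α - 2)) :=
        (integral_sub (main_integrable hα1 h2) (main_integrable hα1 h1)).symm
      rw [hsub]
      have heq : ∀ x : ℝ,
          ((Int.fract x) ^ 2 - Int.fract x + 1 / 6) * (γ₂ + x) ^ (α - 2) -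
            ((Int.fract x) ^ 2 - Int.fract x + 1 / 6) * (γ₁ + x) ^ (α - 2)
          = ((Int.fract x) ^ 2 - Int.fract x + 1 / 6) *
            ((γ₂ + x) ^ (α - 2) - (γ₁ + x) ^ (α - 2)) := fun x => by ring
      simp only [heq]
      exact total_nonpos hα0 hα1 h1 h12
    have := mul_le_mul_of_nonneg_left (by linarith : (∫ x in Set.Ioi (0 : ℝ),
        ((Int.fract x) ^ 2 - Int.fract x + 1 / 6) * (γ₂ + x) ^ (α - 2)) ≤
      ∫ x in Set.Ioi (0 : ℝ),
        ((Int.fract x) ^ 2 - Int.fract x + 1 / 6) * (γ₁ + x) ^ (α - 2)) hc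
    exact this
end

section
/- For 0 < α < 1, let R(γ) = -(1/(α(1+α))) γ^{α+1} + (1/(2α)) γ^α - (1/12) γ^{α-1} + (1/α) R_2(γ), where R_2(γ) = (α(1-α)/2) ∫₀^∞ B_2({x})(γ+x)^{α-2} dx. Then ∫₀¹ R(γ)(1/2 - γ) dγ ≥ (1-α)(3-α) / (24 α (α+1)(α+3)) > 0. -/
open MeasureTheory Set Filter intervalIntegral

private lemma B2_abs_le (x : ℝ) : |Int.fract x ^ 2 - Int.fract x + 1 / 6| ≤ 1 / 6 := by
  have h0 := Int.fract_nonneg x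
  have h1 := (Int.fract_lt_one x).le
  rw [abs_le]
  constructor <;> nlinarith [sq_nonneg (Int.fract x - 1/2)]

private lemma key_interval (u u' u'' : ℝ → ℝ)
    (hu : ∀ t ∈ Icc (0:ℝ) 1, HasDerivAt u (u' t) t)
    (hu' : ∀ t ∈ Icc (0:ℝ) 1, HasDerivAt u' (u'' t) t)
    (hc : ContinuousOn u'' (Icc (0:ℝ) 1))
    (hpos : ∀ t ∈ Icc (0:ℝ) 1, 0 ≤ u'' t) :
    0 ≤ ∫ t in (0:ℝ)..1, (t ^ 2 - t + 1 / 6) * u t := by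
  set φ : ℝ → ℝ := fun t => (t^4 - 2*t^3 + t^2) / 12 with hφdef
  set φd : ℝ → ℝ := fun t => (4*t^3 - 6*t^2 + 2*t) / 12 with hφddef
  have hφ : ∀ t : ℝ, HasDerivAt φ (φd t) t := by
    intro t
    have h := (((hasDerivAt_pow 4 t).sub ((hasDerivAt_pow 3 t).const_mul 2)).add
      (hasDerivAt_pow 2 t)).div_const 12
    refine h.congr_deriv ?_
    simp [hφddef]; ring
  have hφd : ∀ t : ℝ, HasDerivAt φd (t^2 - t + 1/6) t := by
    intro t
    have h := ((((hasDerivAt_pow 3 t).const_mul 4).sub ((hasDerivAt_pow 2 t).const_mul 6)).add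
      ((hasDerivAt_id t).const_mul 2)).div_const 12
    refine h.congr_deriv ?_
    push_cast
    ring
  have hucont : ContinuousOn u (Icc (0:ℝ) 1) :=
    fun t ht => (hu t ht).continuousAt.continuousWithinAt
  have hφcont : Continuous φ := by fun_prop
  have hB2cont : Continuous fun t : ℝ => t^2 - t + 1/6 := by fun_prop
  have hint1 : IntervalIntegrable (fun t => φ t * u'' t) volume 0 1 := by
    apply ContinuousOn.intervalIntegrable
    rw [uIcc_of_le zero_le_one]
    exact hφcont.continuousOn.mul hc
  have hint2 : IntervalIntegrable (fun t => (t^2 - t + 1/6) * u t) volume 0 1 := by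
    apply ContinuousOn.intervalIntegrable
    rw [uIcc_of_le zero_le_one]
    exact hB2cont.continuousOn.mul hucont
  have hF : ∀ t ∈ uIcc (0:ℝ) 1, HasDerivAt (fun s => φ s * u' s - φd s * u s)
      (φ t * u'' t - (t^2 - t + 1/6) * u t) t := by
    intro t ht
    rw [uIcc_of_le zero_le_one] at ht
    have h1 := (hφ t).mul (hu' t ht)
    have h2 := (hφd t).mul (hu t ht)
    refine (h1.sub h2).congr_deriv ?_
    ring
  have hFTC := intervalIntegral.integral_eq_sub_of_hasDerivAt hF (hint1.sub hint2)
  have hends : φ 1 * u' 1 - φd 1 * u 1 - (φ 0 * u' 0 - φd 0 * u 0) = 0 := by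
    simp [hφdef, hφddef]
    norm_num
  rw [intervalIntegral.integral_sub hint1 hint2, hends] at hFTC
  have heq : (∫ t in (0:ℝ)..1, (t^2 - t + 1/6) * u t) = ∫ t in (0:ℝ)..1, φ t * u'' t := by
    linarith
  rw [heq]
  apply intervalIntegral.integral_nonneg zero_le_one
  intro t ht
  have hφnn : 0 ≤ φ t := by
    have : t^4 - 2*t^3 + t^2 = (t*(1-t))^2 := by ring
    simp only [hφdef]
    nlinarith [sq_nonneg (t*(1-t))]
  exact mul_nonneg hφnn (hpos t ht)


private lemma chunk (h h' h'' : ℝ → ℝ) (n : ℕ)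
    (hd : ∀ x ∈ Icc (n:ℝ) (n+1), HasDerivAt h (h' x) x)
    (hd' : ∀ x ∈ Icc (n:ℝ) (n+1), HasDerivAt h' (h'' x) x)
    (hc : ContinuousOn h'' (Icc (n:ℝ) (n+1)))
    (hpos : ∀ x ∈ Icc (n:ℝ) (n+1), 0 ≤ h'' x) :
    0 ≤ ∫ x in (n:ℝ)..(n+1), (Int.fract x ^ 2 - Int.fract x + 1/6) * h x := by
  have hshift : ∫ x in (n:ℝ)..((n:ℝ)+1), (Int.fract x ^ 2 - Int.fract x + 1/6) * h x
      = ∫ t in (0:ℝ)..1,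
          (Int.fract ((n:ℝ)+t) ^ 2 - Int.fract ((n:ℝ)+t) + 1/6) * h ((n:ℝ)+t) := by
    have := intervalIntegral.integral_comp_add_left (a := (0:ℝ)) (b := 1)
      (fun x => (Int.fract x ^ 2 - Int.fract x + 1/6) * h x) (n:ℝ)
    simpa using this.symm
  rw [hshift]
  have h1 : ∀ᵐ t : ℝ, t ≠ (1:ℝ) := by
    refine ae_iff.mpr ?_
    simpa [not_not, Set.setOf_eq_eq_singleton] using Real.volume_singleton (x := (1:ℝ))
  have hae : ∀ᵐ t : ℝ, t ∈ Set.uIoc (0:ℝ) 1 →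
      (Int.fract ((n:ℝ)+t) ^ 2 - Int.fract ((n:ℝ)+t) + 1/6) * h ((n:ℝ)+t)
        = (t^2 - t + 1/6) * h ((n:ℝ)+t) := by
    filter_upwards [h1] with t ht hmem
    rw [Set.uIoc_of_le zero_le_one] at hmem
    have hfr : Int.fract ((n:ℝ) + t) = t := by
      rw [Int.fract_natCast_add]
      exact Int.fract_eq_self.mpr ⟨hmem.1.le, lt_of_le_of_ne hmem.2 ht⟩
    rw [hfr]
  rw [intervalIntegral.integral_congr_ae hae]
  have comp : ∀ (g g' : ℝ → ℝ), (∀ x ∈ Icc (n:ℝ) (n+1), HasDerivAt g (g' x) x) →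
      ∀ t ∈ Icc (0:ℝ) 1, HasDerivAt (fun s => g ((n:ℝ)+s)) (g' ((n:ℝ)+t)) t := by
    intro g g' hg t ht
    have hmem : (n:ℝ) + t ∈ Icc (n:ℝ) ((n:ℝ)+1) := ⟨by linarith [ht.1], by linarith [ht.2]⟩
    have := HasDerivAt.comp t (hg _ hmem) ((hasDerivAt_id t).const_add (n:ℝ))
    simpa [Function.comp_def] using this
  refine key_interval (fun t => h ((n:ℝ)+t)) (fun t => h' ((n:ℝ)+t)) (fun t => h'' ((n:ℝ)+t))
    (comp h h' hd) (comp h' h'' hd') ?_ ?_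
  · refine hc.comp ((continuous_const.add continuous_id).continuousOn) ?_
    intro t ht
    exact ⟨by simpa using ht.1, by simpa using add_le_add_left ht.2 (n:ℝ)⟩
  · intro t ht
    exact hpos _ ⟨by linarith [ht.1], by linarith [ht.2]⟩

private lemma ioi_nonneg (h h' h'' : ℝ → ℝ)
    (hint : IntegrableOn (fun x => (Int.fract x ^ 2 - Int.fract x + 1/6) * h x) (Ioi (0:ℝ)))
    (hd : ∀ x ∈ Ici (0:ℝ), HasDerivAt h (h' x) x)
    (hd' : ∀ x ∈ Ici (0:ℝ), HasDerivAt h' (h'' x) x)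
    (hc : ContinuousOn h'' (Ici (0:ℝ)))
    (hpos : ∀ x ∈ Ici (0:ℝ), 0 ≤ h'' x) :
    0 ≤ ∫ x in Ioi (0:ℝ), (Int.fract x ^ 2 - Int.fract x + 1/6) * h x := by
  set f := fun x => (Int.fract x ^ 2 - Int.fract x + 1/6) * h x with hf
  have hsubIci : ∀ n : ℕ, Icc (n:ℝ) ((n:ℝ)+1) ⊆ Ici (0:ℝ) := by
    intro n x hx
    have : (0:ℝ) ≤ (n:ℝ) := Nat.cast_nonneg n
    exact le_trans this hx.1
  have hIc : ∀ n : ℕ, IntervalIntegrable f volume (n:ℝ) ((n:ℝ)+1) := by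
    intro n
    rw [intervalIntegrable_iff_integrableOn_Ioc_of_le (by linarith)]
    refine hint.mono_set ?_
    intro x hx
    have : (0:ℝ) ≤ (n:ℝ) := Nat.cast_nonneg n
    exact lt_of_le_of_lt this hx.1
  have hchunk : ∀ n : ℕ, 0 ≤ ∫ x in (n:ℝ)..((n:ℝ)+1), f x := fun n =>
    chunk h h' h'' n (fun x hx => hd x (hsubIci n hx)) (fun x hx => hd' x (hsubIci n hx))
      (hc.mono (hsubIci n)) (fun x hx => hpos x (hsubIci n hx))
  have hsum : ∀ N : ℕ, (0:ℝ) ≤ ∫ x in (0:ℝ)..(N:ℝ), f x := by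
    intro N
    have hadj := intervalIntegral.sum_integral_adjacent_intervals
      (a := fun k : ℕ => (k:ℝ)) (n := N) (μ := volume) (f := f)
      (fun k _ => by push_cast; exact hIc k)
    have hs : (0:ℝ) ≤ ∑ k ∈ Finset.range N, ∫ x in ((k:ℕ):ℝ)..(((k+1:ℕ)):ℝ), f x := by
      refine Finset.sum_nonneg fun k _ => ?_
      have := hchunk k
      rwa [show ((k:ℝ)+1) = ((k+1:ℕ):ℝ) by push_cast; ring] at this
    simp only [Nat.cast_zero] at hadj
    calc (0:ℝ) ≤ _ := hs
      _ = _ := hadj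
  have htend := intervalIntegral_tendsto_integral_Ioi (μ := volume) 0 hint
    tendsto_natCast_atTop_atTop
  exact ge_of_tendsto' htend hsum


private lemma hasDerivAt_shift_rpow {γ : ℝ} (hγ : 0 < γ) (p : ℝ) {x : ℝ} (hx : 0 ≤ x) :
    HasDerivAt (fun y => (γ + y) ^ p) (p * (γ + x) ^ (p - 1)) x := by
  have hpos : 0 < γ + x := by linarith
  have h := Real.hasDerivAt_rpow_const (x := γ + x) (p := p) (Or.inl hpos.ne')
  have h2 := HasDerivAt.comp x h ((hasDerivAt_id x).const_add γ)
  simpa [Function.comp_def] using h2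

private lemma contOn_shift_rpow {γ : ℝ} (hγ : 0 < γ) (p : ℝ) :
    ContinuousOn (fun x : ℝ => (γ + x) ^ p) (Ici (0:ℝ)) := by
  refine ContinuousOn.rpow_const ((continuous_const.add continuous_id).continuousOn) ?_
  intro x hx
  have : 0 < γ + x := by simp at hx; linarith
  exact Or.inl this.ne'

private lemma preimage_add_Ioi (γ : ℝ) : (fun x : ℝ => γ + x) ⁻¹' (Ioi γ) = Ioi (0:ℝ) := by
  ext x
  simp [Set.mem_preimage, Set.mem_Ioi]

private lemma integrableOn_shift_rpow {γ : ℝ} (hγ : 0 < γ) {p : ℝ} (hp : p < -1) :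
    IntegrableOn (fun x : ℝ => (γ + x) ^ p) (Ioi (0:ℝ)) := by
  have base : IntegrableOn (fun x : ℝ => x ^ p) (Ioi γ) := integrableOn_Ioi_rpow_of_lt hp hγ
  have hmp : MeasurePreserving (fun x : ℝ => γ + x) volume volume :=
    measurePreserving_add_left volume γ
  have hemb : MeasurableEmbedding (fun x : ℝ => γ + x) :=
    (MeasurableEquiv.addLeft γ).measurableEmbedding
  have := (hmp.integrableOn_comp_preimage hemb
    (f := fun x : ℝ => x ^ p) (s := Ioi γ)).mpr base
  rwa [preimage_add_Ioi] at this

private lemma integral_shift_rpow {γ : ℝ} (hγ : 0 < γ) {p : ℝ} (hp : p < -1) :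
    ∫ x in Ioi (0:ℝ), (γ + x) ^ p = -γ ^ (p+1) / (p+1) := by
  have hmp : MeasurePreserving (fun x : ℝ => γ + x) volume volume :=
    measurePreserving_add_left volume γ
  have hemb : MeasurableEmbedding (fun x : ℝ => γ + x) :=
    (MeasurableEquiv.addLeft γ).measurableEmbedding
  have := hmp.setIntegral_preimage_emb hemb (fun x : ℝ => x ^ p) (Ioi γ)
  rw [preimage_add_Ioi] at this
  rw [this]
  exact integral_Ioi_rpow_of_lt hp hγ

private lemma B2_abs_le' (x : ℝ) : |Int.fract x ^ 2 - Int.fract x + 1 / 6| ≤ 1 / 6 := by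
  have h0 := Int.fract_nonneg x
  have h1 := (Int.fract_lt_one x).le
  rw [abs_le]
  constructor <;> nlinarith [sq_nonneg (Int.fract x - 1/2)]

private lemma integrableOn_B2_shift {γ : ℝ} (hγ : 0 < γ) {p : ℝ} (hp : p < -1) :
    IntegrableOn (fun x => (Int.fract x ^ 2 - Int.fract x + 1/6) * (γ + x) ^ p) (Ioi (0:ℝ)) := by
  have hg := integrableOn_shift_rpow hγ hp
  refine Integrable.mono' (hg.const_mul (1/6)) ?_ ?_
  · have hm : Measurable (fun x : ℝ => Int.fract x ^ 2 - Int.fract x + 1/6) :=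
      ((measurable_fract.pow_const 2).sub measurable_fract).add measurable_const
    exact (hm.aestronglyMeasurable).mul
      (((contOn_shift_rpow hγ p).mono Ioi_subset_Ici_self).aestronglyMeasurable measurableSet_Ioi)
  · refine (ae_restrict_iff' measurableSet_Ioi).mpr (Filter.Eventually.of_forall ?_)
    intro x hx
    have hpos : (0:ℝ) < γ + x := by have := hx.out; linarith
    have hb : 0 ≤ (γ + x) ^ p := Real.rpow_nonneg hpos.le p
    rw [norm_mul, Real.norm_eq_abs, Real.norm_eq_abs, abs_of_nonneg hb]
    exact mul_le_mul_of_nonneg_right (B2_abs_le' x) hb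


section main
variable {α : ℝ} (hα0 : 0 < α) (hα1 : α < 1)

-- the inner integral
private noncomputable def II (α γ : ℝ) : ℝ :=
  ∫ x in Set.Ioi (0 : ℝ), ((Int.fract x) ^ 2 - Int.fract x + 1 / 6) * (γ + x) ^ (α - 2)

include hα0 hα1 in
private lemma II_abs_le {γ : ℝ} (hγ : 0 < γ) :
    |II α γ| ≤ γ ^ (α - 1) / (6 * (1 - α)) := by
  have hp : α - 2 < -1 := by linarith
  have hg := integrableOn_shift_rpow hγ hp
  have hbound : ∀ᵐ x ∂(volume.restrict (Ioi (0:ℝ))),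
      ‖(Int.fract x ^ 2 - Int.fract x + 1/6) * (γ + x) ^ (α-2)‖ ≤ 1/6 * (γ + x) ^ (α-2) := by
    refine (ae_restrict_iff' measurableSet_Ioi).mpr (Filter.Eventually.of_forall ?_)
    intro x hx
    have hpos : (0:ℝ) < γ + x := by have := hx.out; linarith
    have hb : 0 ≤ (γ + x) ^ (α-2) := Real.rpow_nonneg hpos.le _
    rw [norm_mul, Real.norm_eq_abs, Real.norm_eq_abs, abs_of_nonneg hb]
    exact mul_le_mul_of_nonneg_right (B2_abs_le' x) hb
  have hnorm := norm_integral_le_of_norm_le (hg.const_mul (1/6)) hbound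
  rw [Real.norm_eq_abs] at hnorm
  calc |II α γ| ≤ ∫ x in Ioi (0:ℝ), 1/6 * (γ + x) ^ (α-2) := hnorm
    _ = 1/6 * (-γ ^ (α-2+1) / (α-2+1)) := by
        rw [MeasureTheory.integral_const_mul, integral_shift_rpow hγ hp]
    _ = γ ^ (α - 1) / (6 * (1 - α)) := by
        rw [show α - 2 + 1 = α - 1 by ring, show (6:ℝ)*(1-α) = -(6*(α-1)) by ring, div_neg,
          show (6:ℝ)*(α-1) = (α-1)*6 by ring, ← div_div]
        ring

include hα0 hα1 in
private lemma II_antitone {γ₁ γ₂ : ℝ} (h1 : 0 < γ₁) (h12 : γ₁ ≤ γ₂) :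
    II α γ₂ ≤ II α γ₁ := by
  have h2 : 0 < γ₂ := lt_of_lt_of_le h1 h12
  have hp : α - 2 < -1 := by linarith
  set h : ℝ → ℝ := fun x => (γ₁ + x) ^ (α-2) - (γ₂ + x) ^ (α-2) with hh
  set h' : ℝ → ℝ := fun x =>
    (α-2) * (γ₁ + x) ^ (α-2-1) - (α-2) * (γ₂ + x) ^ (α-2-1) with hh'
  set h'' : ℝ → ℝ := fun x =>
    (α-2) * ((α-2-1) * (γ₁ + x) ^ (α-2-1-1)) - (α-2) * ((α-2-1) * (γ₂ + x) ^ (α-2-1-1)) with hh''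
  have hint1 := integrableOn_B2_shift h1 hp
  have hint2 := integrableOn_B2_shift h2 hp
  have hintd : IntegrableOn (fun x => (Int.fract x ^ 2 - Int.fract x + 1/6) * h x)
      (Ioi (0:ℝ)) := by
    refine MeasureTheory.IntegrableOn.congr_fun (hint1.sub hint2) ?_ measurableSet_Ioi
    intro x _
    simp only [hh, Pi.sub_apply]
    ring
  have key : 0 ≤ ∫ x in Ioi (0:ℝ), (Int.fract x ^ 2 - Int.fract x + 1/6) * h x := by
    refine ioi_nonneg h h' h'' hintd ?_ ?_ ?_ ?_
    · intro x hx
      exact ((hasDerivAt_shift_rpow h1 (α-2) hx).sub (hasDerivAt_shift_rpow h2 (α-2) hx))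
    · intro x hx
      exact (((hasDerivAt_shift_rpow h1 (α-2-1) hx).const_mul (α-2)).sub
        ((hasDerivAt_shift_rpow h2 (α-2-1) hx).const_mul (α-2)))
    · exact ((((contOn_shift_rpow h1 (α-2-1-1)).const_smul ((α-2-1):ℝ)).const_smul
        ((α-2):ℝ)).sub (((contOn_shift_rpow h2 (α-2-1-1)).const_smul ((α-2-1):ℝ)).const_smul
        ((α-2):ℝ))).congr (fun x _ => by simp only [hh'', Pi.sub_apply, Pi.smul_apply, smul_eq_mul]; try ring)
    · intro x hx
      have hx0 : (0:ℝ) ≤ x := hx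
      have hb1 : 0 < γ₁ + x := by linarith
      have hle : (γ₂ + x) ^ (α-2-1-1) ≤ (γ₁ + x) ^ (α-2-1-1) :=
        Real.rpow_le_rpow_of_nonpos hb1 (by linarith) (by linarith)
      have hcc : 0 < (α-2) * (α-2-1) := by nlinarith
      simp only [hh'']
      nlinarith
  have hdiff : II α γ₁ - II α γ₂
      = ∫ x in Ioi (0:ℝ), (Int.fract x ^ 2 - Int.fract x + 1/6) * h x := by
    rw [II, II, ← integral_sub hint1 hint2]
    refine setIntegral_congr_fun measurableSet_Ioi ?_
    intro x _
    simp only [hh]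
    ring
  linarith [hdiff ▸ key]
end main


private lemma intervalIntegrable_rpow_weight {s : ℝ} (hs : -1 < s) :
    IntervalIntegrable (fun γ : ℝ => γ ^ s * (1/2 - γ)) volume 0 1 :=
  (intervalIntegrable_rpow' hs).mul_continuousOn (by fun_prop)

private lemma integral_rpow_weight {s : ℝ} (hs : -1 < s) :
    ∫ γ in (0:ℝ)..1, γ ^ s * (1/2 - γ) = 1/(2*(s+1)) - 1/(s+2) := by
  have hs1 : s + 1 ≠ 0 := by linarith
  have hs2 : s + 2 ≠ 0 := by linarith
  have heq : EqOn (fun γ : ℝ => γ ^ s * (1/2 - γ))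
      (fun γ : ℝ => (1/2) * γ ^ s - γ ^ (s+1)) (uIcc (0:ℝ) 1) := by
    intro γ _
    rcases eq_or_ne γ 0 with rfl | hne
    · simp [Real.zero_rpow hs1]
      ring
    · simp only
      rw [Real.rpow_add_one hne]
      ring
  rw [intervalIntegral.integral_congr heq,
    intervalIntegral.integral_sub ((intervalIntegrable_rpow' hs).const_mul (1/2))
      (intervalIntegrable_rpow' (by linarith)),
    intervalIntegral.integral_const_mul,
    integral_rpow (Or.inl hs), integral_rpow (Or.inl (by linarith : (-1:ℝ) < s + 1))]
  rw [Real.zero_rpow (by intro h; apply hs1; linarith [h]; ), Real.one_rpow]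
  rw [Real.zero_rpow (by intro h; apply hs2; linarith [h]; ), Real.one_rpow]
  rw [show s + 1 + 1 = s + 2 by ring]
  field_simp
  try ring

section J
variable {α : ℝ} (hα0 : 0 < α) (hα1 : α < 1) (R₂ : ℝ → ℝ)
  (hR₂ : ∀ γ : ℝ, R₂ γ = α * (1 - α) / 2 * II α γ)

include hα0 hα1 hR₂ in
private lemma R2_abs_le {γ : ℝ} (hγ : 0 < γ) : |R₂ γ| ≤ γ ^ (α - 1) := by
  rw [hR₂]
  rw [abs_mul]
  have hc : |α * (1 - α) / 2| = α * (1 - α) / 2 := abs_of_nonneg (by nlinarith)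
  rw [hc]
  have h1 := II_abs_le hα0 hα1 hγ
  have h2 : 0 ≤ γ ^ (α - 1) := Real.rpow_nonneg hγ.le _
  have h3 : α * (1 - α) / 2 * (γ ^ (α - 1) / (6 * (1 - α))) ≤ γ ^ (α - 1) := by
    have h3eq : α * (1 - α) / 2 * (γ ^ (α - 1) / (6 * (1 - α))) = α * γ ^ (α - 1) / 12 := by
      rw [div_mul_div_comm,
        div_eq_div_iff (by nlinarith : (0:ℝ) < 2 * (6 * (1 - α))).ne' (by norm_num : (12:ℝ) ≠ 0)]
      ring
    rw [h3eq]
    nlinarith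
  calc α * (1 - α) / 2 * |II α γ| ≤ α * (1 - α) / 2 * (γ ^ (α - 1) / (6 * (1 - α))) := by
        apply mul_le_mul_of_nonneg_left h1 (by nlinarith)
    _ ≤ γ ^ (α - 1) := h3

include hα0 hα1 hR₂ in
private lemma R2_anti : AntitoneOn R₂ (Ioi (0:ℝ)) := by
  intro γ₁ h1 γ₂ h2 h12
  rw [hR₂, hR₂]
  have := II_antitone hα0 hα1 (h1.out) h12
  have hc : 0 ≤ α * (1 - α) / 2 := by nlinarith
  exact mul_le_mul_of_nonneg_left this hc

include hα0 hα1 hR₂ in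
private lemma R2w_intInt {a b : ℝ} (ha : 0 ≤ a) (hab : a ≤ b) (hb : b ≤ 1) :
    IntervalIntegrable (fun γ => R₂ γ * (1/2 - γ)) volume a b := by
  rw [intervalIntegrable_iff_integrableOn_Ioc_of_le hab]
  have hbnd : IntegrableOn (fun γ : ℝ => γ ^ (α - 1)) (Ioc a b) := by
    have := intervalIntegrable_rpow' (a := a) (b := b) (r := α - 1) (by linarith)
    rwa [intervalIntegrable_iff_integrableOn_Ioc_of_le hab] at this
  refine Integrable.mono' hbnd ?_ ?_
  · have hmeas : AEMeasurable R₂ (volume.restrict (Ioc a b)) := by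
      refine aemeasurable_restrict_of_antitoneOn measurableSet_Ioc ?_
      exact (R2_anti hα0 hα1 R₂ hR₂).mono (fun x hx => lt_of_le_of_lt ha hx.1)
    exact hmeas.aestronglyMeasurable.mul (by fun_prop)
  · refine (ae_restrict_iff' measurableSet_Ioc).mpr (Filter.Eventually.of_forall ?_)
    intro γ hγ
    have hγ0 : 0 < γ := lt_of_le_of_lt ha hγ.1
    have hγ1 : γ ≤ 1 := le_trans hγ.2 hb
    rw [norm_mul, Real.norm_eq_abs, Real.norm_eq_abs]
    have h1 : |R₂ γ| ≤ γ ^ (α - 1) := R2_abs_le hα0 hα1 R₂ hR₂ hγ0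
    have h2 : |1/2 - γ| ≤ 1 := by rw [abs_le]; constructor <;> linarith
    calc |R₂ γ| * |1/2 - γ| ≤ γ ^ (α - 1) * 1 :=
          mul_le_mul h1 h2 (abs_nonneg _) (Real.rpow_nonneg hγ0.le _)
      _ = γ ^ (α - 1) := mul_one _

include hα0 hα1 hR₂ in
private lemma J_nonneg : 0 ≤ ∫ γ in (0:ℝ)..1, R₂ γ * (1/2 - γ) := by
  set F : ℝ → ℝ := fun γ => R₂ γ * (1/2 - γ) with hF
  have hI1 : IntervalIntegrable F volume 0 (1/2) :=
    R2w_intInt hα0 hα1 R₂ hR₂ le_rfl (by norm_num) (by norm_num)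
  have hI2 : IntervalIntegrable F volume (1/2) 1 :=
    R2w_intInt hα0 hα1 R₂ hR₂ (by norm_num) (by norm_num) le_rfl
  have hsplit : ∫ γ in (0:ℝ)..1, F γ
      = (∫ γ in (0:ℝ)..(1/2:ℝ), F γ) + ∫ γ in (1/2:ℝ)..1, F γ :=
    (intervalIntegral.integral_add_adjacent_intervals hI1 hI2).symm
  have hrefl : ∫ γ in (1/2:ℝ)..1, F γ = ∫ γ in (0:ℝ)..(1/2:ℝ), F (1 - γ) := by
    have h := intervalIntegral.integral_comp_sub_left (a := (0:ℝ)) (b := 1/2) F 1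
    rw [show (1:ℝ)-(1/2:ℝ) = 1/2 by norm_num, show (1:ℝ)-0 = 1 by norm_num] at h
    exact h.symm
  have hIcomp : IntervalIntegrable (fun γ => F (1 - γ)) volume 0 (1/2) := by
    have h := hI2.comp_sub_left 1
    rw [show (1:ℝ)-(1/2:ℝ) = 1/2 by norm_num, show (1:ℝ)-(1:ℝ) = 0 by norm_num] at h
    exact h.symm
  have hcomb : (∫ γ in (0:ℝ)..(1/2:ℝ), F γ) + ∫ γ in (0:ℝ)..(1/2:ℝ), F (1 - γ)
      = ∫ γ in (0:ℝ)..(1/2:ℝ), (F γ + F (1 - γ)) :=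
    (intervalIntegral.integral_add hI1 hIcomp).symm
  have hnn : 0 ≤ ∫ γ in (0:ℝ)..(1/2:ℝ), (F γ + F (1 - γ)) := by
    refine intervalIntegral.integral_nonneg_of_ae_restrict (by norm_num) ?_
    have hne0 : ∀ᵐ γ : ℝ ∂(volume.restrict (Icc (0:ℝ) (1/2))), γ ≠ 0 := by
      refine ae_iff.mpr ?_
      have : {γ : ℝ | ¬ γ ≠ 0} = {0} := by ext γ; simp
      rw [this]
      exact le_antisymm (le_trans (Measure.restrict_le_self _) (le_of_eq Real.volume_singleton))
        zero_le
    have hmem := ae_restrict_mem (μ := volume) (measurableSet_Icc (a := (0:ℝ)) (b := 1/2))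
    filter_upwards [hne0, hmem] with γ hne hmemγ
    have hγ0 : 0 < γ := lt_of_le_of_ne hmemγ.1 (Ne.symm hne)
    have hγh : γ ≤ 1/2 := hmemγ.2
    have hanti := R2_anti hα0 hα1 R₂ hR₂ (mem_Ioi.mpr hγ0)
      (mem_Ioi.mpr (by linarith : (0:ℝ) < 1 - γ)) (by linarith)
    have : F γ + F (1 - γ) = (1/2 - γ) * (R₂ γ - R₂ (1 - γ)) := by
      simp only [hF]; ring
    rw [this]
    apply mul_nonneg (by linarith) (by linarith)
  rw [hsplit, hrefl]
  rw [hcomb]  -- hcomb : A + B = C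
  exact hnn
end J


/-- For `0 < α < 1`, with
`R(γ) = -(1/(α(1+α))) γ^{α+1} + (1/(2α)) γ^α - (1/12) γ^{α-1} + (1/α) R₂(γ)`
where `R₂(γ) = (α(1-α)/2) ∫₀^∞ B₂({x})(γ+x)^{α-2} dx`, we have
`∫₀¹ R(γ)(1/2 - γ) dγ ≥ (1-α)(3-α)/(24α(α+1)(α+3)) > 0`. -/
theorem R_weighted_integral_pos (α : ℝ) (hα : α ∈ Set.Ioo (0 : ℝ) 1)
    (R₂ : ℝ → ℝ)
    (hR₂ : ∀ γ : ℝ, R₂ γ = α * (1 - α) / 2 *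
      ∫ x in Set.Ioi (0 : ℝ),
        ((Int.fract x) ^ 2 - Int.fract x + 1 / 6) * (γ + x) ^ (α - 2))
    (R : ℝ → ℝ)
    (hR : ∀ γ : ℝ, R γ = -(1 / (α * (1 + α))) * γ ^ (α + 1)
        + (1 / (2 * α)) * γ ^ α - (1 / 12) * γ ^ (α - 1) + (1 / α) * R₂ γ) :
    (1 - α) * (3 - α) / (24 * α * (α + 1) * (α + 3))
        ≤ ∫ γ in (0 : ℝ)..1, R γ * (1 / 2 - γ) ∧
      0 < (1 - α) * (3 - α) / (24 * α * (α + 1) * (α + 3)) := by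
  obtain ⟨hα0, hα1⟩ := hα
  have hR₂' : ∀ γ : ℝ, R₂ γ = α * (1 - α) / 2 * II α γ := hR₂
  have hden : 0 < 24 * α * (α + 1) * (α + 3) := by
    have h1 : 0 < 24 * α := by linarith
    have h2 : 0 < α + 1 := by linarith
    have h3 : 0 < α + 3 := by linarith
    exact mul_pos (mul_pos h1 h2) h3
  have hKpos : 0 < (1 - α) * (3 - α) / (24 * α * (α + 1) * (α + 3)) :=
    div_pos (mul_pos (by linarith) (by linarith)) hden
  refine ⟨?_, hKpos⟩
  have I1 : IntervalIntegrable
      (fun γ : ℝ => -(1 / (α * (1 + α))) * (γ ^ (α + 1) * (1/2 - γ))) volume 0 1 :=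
    (intervalIntegrable_rpow_weight (by linarith)).const_mul _
  have I2 : IntervalIntegrable
      (fun γ : ℝ => 1 / (2 * α) * (γ ^ α * (1/2 - γ))) volume 0 1 :=
    (intervalIntegrable_rpow_weight (by linarith)).const_mul _
  have I3 : IntervalIntegrable
      (fun γ : ℝ => -(1 / 12) * (γ ^ (α - 1) * (1/2 - γ))) volume 0 1 :=
    (intervalIntegrable_rpow_weight (by linarith)).const_mul _
  have I4 : IntervalIntegrable
      (fun γ : ℝ => 1 / α * (R₂ γ * (1/2 - γ))) volume 0 1 :=
    (R2w_intInt hα0 hα1 R₂ hR₂' le_rfl zero_le_one le_rfl).const_mul _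
  have hcong : ∫ γ in (0:ℝ)..1, R γ * (1 / 2 - γ)
      = ∫ γ in (0:ℝ)..1, (-(1 / (α * (1 + α))) * (γ ^ (α + 1) * (1/2 - γ))
        + 1 / (2 * α) * (γ ^ α * (1/2 - γ))
        + -(1 / 12) * (γ ^ (α - 1) * (1/2 - γ))
        + 1 / α * (R₂ γ * (1/2 - γ))) := by
    refine intervalIntegral.integral_congr ?_
    intro γ _
    simp only
    rw [hR]
    ring
  rw [hcong, intervalIntegral.integral_add ((I1.add I2).add I3) I4,
    intervalIntegral.integral_add (I1.add I2) I3, intervalIntegral.integral_add I1 I2,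
    intervalIntegral.integral_const_mul, intervalIntegral.integral_const_mul,
    intervalIntegral.integral_const_mul, intervalIntegral.integral_const_mul,
    integral_rpow_weight (by linarith : (-1:ℝ) < α + 1),
    integral_rpow_weight (by linarith : (-1:ℝ) < α),
    integral_rpow_weight (by linarith : (-1:ℝ) < α - 1)]
  have hJ : 0 ≤ 1 / α * ∫ γ in (0:ℝ)..1, R₂ γ * (1/2 - γ) :=
    mul_nonneg (by positivity) (J_nonneg hα0 hα1 R₂ hR₂')
  have hval : -(1 / (α * (1 + α))) * (1/(2*(α+1+1)) - 1/(α+1+2))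
      + 1 / (2 * α) * (1/(2*(α+1)) - 1/(α+2))
      + -(1/12) * (1/(2*(α-1+1)) - 1/(α-1+2))
      = (1 - α) * (3 - α) / (24 * α * (α + 1) * (α + 3)) := by
    rw [show α+1+1 = α+2 by ring, show α+1+2 = α+3 by ring, show α-1+1 = α by ring,
      show α-1+2 = α+1 by ring]
    have h0 : α ≠ 0 := ne_of_gt hα0
    have h1 : α + 1 ≠ 0 := by linarith
    have h1' : 1 + α ≠ 0 := by linarith
    have h2 : α + 2 ≠ 0 := by linarith
    have h3 : α + 3 ≠ 0 := by linarith
    field_simp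
    ring
  linarith [hval, hJ]
end

section
/- For 0 < α < 1, n ≥ 1, and t ∈ (0,1] with nt ∉ ℕ, let f_n(t) = ∫₀ᵗ (t-s)^{α-1}(⌈ns⌉ - ns - 1/2) ds and let R(γ) be as in the paper (R(γ) = -(1/(α(1+α)))γ^{α+1} + (1/(2α))γ^α - (1/12)γ^{α-1} + (1/α)R_2(γ)). Then |n^α f_n(t) - R({nt})| ≤ (1/6)(nt)^{α-1}. -/
open MeasureTheory

namespace NFRaux

open Set intervalIntegral

noncomputable def v (α γ : ℝ) (j : ℕ) : ℝ :=
  (1/2 - (γ + j + 1)) * ((γ + j + 1) ^ α - (γ + j) ^ α) / α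
    + ((γ + j + 1) ^ (α+1) - (γ + j) ^ (α+1)) / (α+1)

noncomputable def w (α γ : ℝ) (j : ℕ) : ℝ :=
  ((γ + j + 1) ^ (α+1) - (γ + j) ^ (α+1)) / (α+1)
    - (2*(γ + j) + 1) * ((γ + j + 1) ^ α - (γ + j) ^ α) / α
    + ((γ + j)^2 + (γ + j) + 1/6) * ((γ + j + 1) ^ (α-1) - (γ + j) ^ (α-1)) / (α-1)

lemma integral_sub_rpow {r : ℝ} (hr : -1 < r) (c a b : ℝ) :
    ∫ u in a..b, (c - u) ^ r = ((c - a) ^ (r+1) - (c - b) ^ (r+1)) / (r+1) := by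
  rw [show (fun u : ℝ => (c - u) ^ r) = (fun u : ℝ => (fun y : ℝ => y ^ r) (c - u)) from rfl,
    intervalIntegral.integral_comp_sub_left (fun y : ℝ => y ^ r) c,
    integral_rpow (Or.inl hr)]

lemma integral_add_rpow {r : ℝ} (hr : r ≠ -1) (c a b : ℝ)
    (h : (0:ℝ) ∉ Set.uIcc (c + a) (c + b)) :
    ∫ x in a..b, (c + x) ^ r = ((c + b) ^ (r+1) - (c + a) ^ (r+1)) / (r+1) := by
  rw [show (fun x : ℝ => (c + x) ^ r) = (fun x : ℝ => (fun y : ℝ => y ^ r) (c + x)) from rfl,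
    intervalIntegral.integral_comp_add_left (fun y : ℝ => y ^ r) c,
    integral_rpow (Or.inr ⟨hr, h⟩)]

lemma abs_B2_le (x : ℝ) : |Int.fract x ^ 2 - Int.fract x + 1/6| ≤ 1/6 := by
  have h1 := Int.fract_nonneg x
  have h2 := Int.fract_lt_one x
  rw [abs_le]
  constructor <;> nlinarith

/-- interval integrability of the main integrand on any interval -/
lemma F_intervalIntegrable {α : ℝ} (hα0 : 0 < α) (hα1 : α < 1) (T a b : ℝ) :
    IntervalIntegrable (fun u : ℝ => (T - u) ^ (α-1) * ((⌈u⌉ : ℝ) - u - 1/2)) volume a b := by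
  have hg0 : IntervalIntegrable (fun u : ℝ => (T - u) ^ (α-1)) volume a b := by
    have h := (intervalIntegrable_rpow' (show (-1:ℝ) < α - 1 by linarith)
      (a := T - a) (b := T - b)).comp_sub_left T
    simpa [sub_sub_cancel] using h
  rw [intervalIntegrable_iff] at hg0 ⊢
  have hmeas : Measurable (fun u : ℝ => (⌈u⌉ : ℝ) - u - 1/2) :=
    ((measurable_from_top.comp Int.measurable_ceil).sub measurable_id).sub measurable_const
  have hbdd : ∀ u : ℝ, ‖(⌈u⌉ : ℝ) - u - 1/2‖ ≤ 1 := by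
    intro u
    have h1 : (u:ℝ) ≤ ⌈u⌉ := Int.le_ceil u
    have h2 : (⌈u⌉:ℝ) < u + 1 := Int.ceil_lt_add_one u
    rw [Real.norm_eq_abs, abs_le]; constructor <;> linarith
  have := Integrable.bdd_mul (c := 1) hg0 (hmeas.aestronglyMeasurable.restrict)
    (Filter.Eventually.of_forall hbdd)
  exact this.congr (Filter.Eventually.of_forall fun x => mul_comm _ _)

/-- value over an initial slice [0,b] with b ≤ 1, b ≤ c -/
lemma integral_slice {α : ℝ} (hα0 : 0 < α) (hα1 : α < 1) {b c : ℝ}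
    (hb0 : 0 < b) (hb1 : b ≤ 1) (hbc : b ≤ c) :
    ∫ u in (0:ℝ)..b, (c - u) ^ (α-1) * ((⌈u⌉ : ℝ) - u - 1/2)
      = (1/2 - c) * (c ^ α - (c-b) ^ α) / α + (c ^ (α+1) - (c-b) ^ (α+1)) / (α+1) := by
  have h1 : ∫ u in (0:ℝ)..b, (c - u) ^ (α-1) * ((⌈u⌉ : ℝ) - u - 1/2)
      = ∫ u in (0:ℝ)..b, ((1/2 - c) * (c - u) ^ (α-1) + (c - u) ^ α) := by
    apply intervalIntegral.integral_congr_ae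
    apply Filter.Eventually.of_forall
    intro u hu
    rw [Set.uIoc_of_le hb0.le] at hu
    have hceil : (⌈u⌉ : ℝ) = 1 := by
      have : ⌈u⌉ = 1 := by
        rw [Int.ceil_eq_iff]
        constructor
        · push_cast; linarith [hu.1]
        · push_cast; linarith [hu.2]
      rw [this]; norm_num
    have hcu : 0 ≤ c - u := by linarith [hu.2]
    rcases eq_or_lt_of_le hcu with h | h
    · rw [← h, Real.zero_rpow (show α - 1 ≠ 0 from ne_of_lt (by linarith)),
        Real.zero_rpow hα0.ne']
      ring
    · have he : (c - u) ^ α = (c - u) ^ (α-1) * (c - u) := by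
        rw [← Real.rpow_add_one h.ne' (α - 1)]; norm_num
      rw [hceil, he]; ring
  rw [h1, intervalIntegral.integral_add
      (((intervalIntegrable_rpow' (show (-1:ℝ) < α - 1 by linarith)
          (a := c - 0) (b := c - b)).comp_sub_left c).mono_set
        (by rw [sub_sub_cancel, sub_sub_cancel])
        |>.const_mul _)
      (((intervalIntegrable_rpow' (show (-1:ℝ) < α by linarith)
          (a := c - 0) (b := c - b)).comp_sub_left c).mono_set
        (by rw [sub_sub_cancel, sub_sub_cancel])),
    intervalIntegral.integral_const_mul,
    integral_sub_rpow (show (-1:ℝ) < α - 1 by linarith) c 0 b,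
    integral_sub_rpow (show (-1:ℝ) < α by linarith) c 0 b,
    show α - 1 + 1 = α by ring, sub_zero]
  ring

/-- Part B: the value of the interval integral. -/
lemma partB {α γ : ℝ} (hα0 : 0 < α) (hα1 : α < 1) (hγ0 : 0 < γ) (hγ1 : γ < 1) (m : ℕ) :
    ∫ u in (0:ℝ)..(γ + m), (γ + m - u) ^ (α-1) * ((⌈u⌉ : ℝ) - u - 1/2)
      = (∑ j ∈ Finset.range m, v α γ j) + (1/2 - γ) * γ ^ α / α + γ ^ (α+1) / (α+1) := by
  induction m with
  | zero =>
      simp only [Nat.cast_zero, add_zero, Finset.range_zero, Finset.sum_empty, zero_add]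
      rw [integral_slice hα0 hα1 hγ0 hγ1.le (le_refl γ), sub_self,
        Real.zero_rpow hα0.ne', Real.zero_rpow (show α + 1 ≠ 0 by positivity),
        sub_zero, sub_zero]
  | succ m ih =>
      rw [Nat.cast_add, Nat.cast_one, ← add_assoc]
      have hm0 : (0:ℝ) ≤ (m:ℝ) := Nat.cast_nonneg m
      rw [← intervalIntegral.integral_add_adjacent_intervals
        (F_intervalIntegrable hα0 hα1 (γ+(m:ℝ)+1) 0 1)
        (F_intervalIntegrable hα0 hα1 (γ+(m:ℝ)+1) 1 (γ+(m:ℝ)+1))]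
      have h1 := integral_slice (b := (1:ℝ)) (c := γ+(m:ℝ)+1) hα0 hα1 one_pos le_rfl
        (by linarith)
      have h2 : (∫ u in (1:ℝ)..(γ+(m:ℝ)+1), (γ+(m:ℝ)+1-u) ^ (α-1) * ((⌈u⌉:ℝ) - u - 1/2))
          = ∫ u in (0:ℝ)..(γ+(m:ℝ)), (γ+(m:ℝ)-u) ^ (α-1) * ((⌈u⌉:ℝ) - u - 1/2) := by
        have hshift := intervalIntegral.integral_comp_add_left (a := (0:ℝ)) (b := γ+(m:ℝ))
          (fun u : ℝ => (γ+(m:ℝ)+1-u) ^ (α-1) * ((⌈u⌉:ℝ) - u - 1/2)) 1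
        rw [show (1:ℝ)+0 = 1 by ring, show (1:ℝ)+(γ+(m:ℝ)) = γ+(m:ℝ)+1 by ring] at hshift
        rw [← hshift]
        apply intervalIntegral.integral_congr
        intro x _
        simp only
        rw [show (1:ℝ)+x = x+1 by ring, Int.ceil_add_one,
          show γ+(m:ℝ)+1-(x+1) = γ+(m:ℝ)-x by ring]
        push_cast
        ring
      rw [h1, h2, ih, Finset.sum_range_succ]
      unfold v
      rw [show γ+(m:ℝ)+1-1 = γ+(m:ℝ) by ring]
      ring

/-- the fract-integrand equals a polynomial one a.e. on each Ioc k (k+1) -/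
lemma fract_integrand_ae {α γ : ℝ} (k : ℕ) :
    ∀ᵐ x ∂(volume : Measure ℝ), x ∈ Set.Ioc (k:ℝ) (k+1) →
      (Int.fract x ^ 2 - Int.fract x + 1/6) * (γ + x) ^ (α-2)
        = ((x - k)^2 - (x - k) + 1/6) * (γ + x) ^ (α-2) := by
  have h0 : ∀ᵐ x ∂(volume : Measure ℝ), x ∉ ({((k:ℝ)+1)} : Set ℝ) :=
    measure_eq_zero_iff_ae_notMem.mp (measure_singleton _)
  filter_upwards [h0] with x hx hmem
  have hx' : x ≠ (k:ℝ)+1 := by simpa using hx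
  have hxk : (k:ℝ) < x := hmem.1
  have hxk1 : x < (k:ℝ)+1 := lt_of_le_of_ne hmem.2 hx'
  have hfl : ⌊x⌋ = (k:ℤ) := by
    rw [Int.floor_eq_iff]
    constructor
    · push_cast; linarith
    · push_cast; linarith
  have hfr : Int.fract x = x - (k:ℝ) := by
    rw [← Int.self_sub_floor, hfl]
    push_cast
    ring
  rw [hfr]

lemma poly_interval_value {α γ : ℝ} (hα0 : 0 < α) (hα1 : α < 1) (hγ0 : 0 < γ) (k : ℕ) :
    ∫ x in (k:ℝ)..(k+1), ((x - k)^2 - (x - k) + 1/6) * (γ + x) ^ (α-2) = w α γ k := by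
  have hk0 : (0:ℝ) ≤ (k:ℝ) := Nat.cast_nonneg k
  have hle : (k:ℝ) ≤ (k:ℝ)+1 := by linarith
  have hpos : ∀ x ∈ Set.uIcc (k:ℝ) ((k:ℝ)+1), 0 < γ + x := by
    intro x hx
    rw [Set.uIcc_of_le hle] at hx
    have := hx.1
    linarith
  have hcongr : Set.EqOn (fun x : ℝ => ((x - k)^2 - (x - k) + 1/6) * (γ + x) ^ (α-2))
      (fun x : ℝ => (γ+x) ^ α - (2*(γ+(k:ℝ))+1) * (γ+x) ^ (α-1)
        + ((γ+(k:ℝ))^2 + (γ+(k:ℝ)) + 1/6) * (γ+x) ^ (α-2))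
      (Set.uIcc (k:ℝ) ((k:ℝ)+1)) := by
    intro x hx
    have hy : 0 < γ + x := hpos x hx
    simp only
    have e2 : (γ+x) ^ (α-2) * (γ+x) = (γ+x) ^ (α-1) := by
      rw [← Real.rpow_add_one hy.ne' (α-2), show α-2+1 = α-1 by ring]
    have e1 : (γ+x) ^ (α-2) * (γ+x) * (γ+x) = (γ+x) ^ α := by
      rw [← Real.rpow_add_one hy.ne' (α-2), ← Real.rpow_add_one hy.ne' (α-2+1),
        show α-2+1+1 = α by ring]
    rw [← e1, ← e2]
    ring
  rw [intervalIntegral.integral_congr hcongr]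
  have hcont : ∀ r : ℝ, ContinuousOn (fun x : ℝ => (γ+x) ^ r) (Set.uIcc (k:ℝ) ((k:ℝ)+1)) := by
    intro r
    exact (continuousOn_const.add continuousOn_id).rpow_const
      (fun x hx => Or.inl (hpos x hx).ne')
  have hii : ∀ r : ℝ, IntervalIntegrable (fun x : ℝ => (γ+x) ^ r) volume (k:ℝ) ((k:ℝ)+1) :=
    fun r => (hcont r).intervalIntegrable
  have hni : (0:ℝ) ∉ Set.uIcc (γ+(k:ℝ)) (γ+((k:ℝ)+1)) := by
    rw [Set.uIcc_of_le (by linarith)]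
    intro hmem
    have := hmem.1
    linarith
  rw [intervalIntegral.integral_add (((hii α).sub ((hii (α-1)).const_mul _)))
      ((hii (α-2)).const_mul _),
    intervalIntegral.integral_sub (hii α) ((hii (α-1)).const_mul _),
    intervalIntegral.integral_const_mul, intervalIntegral.integral_const_mul,
    integral_add_rpow (show α ≠ -1 by linarith) γ (k:ℝ) ((k:ℝ)+1) hni,
    integral_add_rpow (show α - 1 ≠ -1 by intro h; apply hα0.ne'; linarith) γ (k:ℝ) ((k:ℝ)+1) hni,
    integral_add_rpow (show α - 2 ≠ -1 by intro h; apply (show α ≠ 1 from ne_of_lt hα1); linarith) γ (k:ℝ) ((k:ℝ)+1) hni,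
    show α - 1 + 1 = α by ring, show α - 2 + 1 = α - 1 by ring,
    show γ + ((k:ℝ)+1) = γ + (k:ℝ) + 1 by ring]
  unfold w
  ring

lemma step_id {α : ℝ} (hα0 : 0 < α) (hα1 : α < 1) {c : ℝ} (hc : 0 < c) :
    (1/2 - (c+1)) * ((c+1) ^ α - c ^ α) / α + ((c+1) ^ (α+1) - c ^ (α+1)) / (α+1)
      - (1-α)/2 * ( ((c+1) ^ (α+1) - c ^ (α+1)) / (α+1)
          - (2*c + 1) * ((c+1) ^ α - c ^ α) / α
          + (c^2 + c + 1/6) * ((c+1) ^ (α-1) - c ^ (α-1)) / (α-1) )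
      = 1/12 * ((c+1) ^ (α-1) - c ^ (α-1)) := by
  have hc1 : (0:ℝ) < c + 1 := by linarith
  have hα1' : α - 1 ≠ 0 := ne_of_lt (by linarith)
  have hα1'' : α + 1 ≠ 0 := by positivity
  rw [Real.rpow_add_one hc.ne' α, Real.rpow_add_one hc1.ne' α,
    Real.rpow_sub_one hc.ne' α, Real.rpow_sub_one hc1.ne' α]
  field_simp
  ring

lemma key_alg {α γ : ℝ} (hα0 : 0 < α) (hα1 : α < 1) (hγ0 : 0 < γ) (m : ℕ) :
    (∑ j ∈ Finset.range m, v α γ j) + (1/2 - γ) * γ ^ α / α + γ ^ (α+1) / (α+1)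
      + γ ^ (α+1) / (α * (α+1)) - γ ^ α / (2*α) + γ ^ (α-1) / 12
      - (1-α)/2 * (∑ j ∈ Finset.range m, w α γ j)
      = 1/12 * (γ + m) ^ (α-1) := by
  induction m with
  | zero =>
      simp only [Finset.range_zero, Finset.sum_empty, Nat.cast_zero, add_zero]
      rw [Real.rpow_add_one hγ0.ne' α, Real.rpow_sub_one hγ0.ne' α]
      have hα1'' : α + 1 ≠ 0 := by positivity
      field_simp
      ring
  | succ m ih =>
      rw [Finset.sum_range_succ, Finset.sum_range_succ]
      have hc : (0:ℝ) < γ + m := by positivity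
      have hs := step_id hα0 hα1 hc
      have hs' : v α γ m - (1-α)/2 * w α γ m
          = 1/12 * ((γ + (m:ℝ) + 1) ^ (α-1) - (γ + (m:ℝ)) ^ (α-1)) := by
        unfold v w; linear_combination hs
      rw [Nat.cast_add, Nat.cast_one, ← add_assoc]
      linear_combination ih + hs'

lemma tail_hasDeriv {α γ : ℝ} (hα0 : 0 < α) (hα1 : α < 1) (hγ0 : 0 < γ) (m : ℕ) :
    ∀ x ∈ Set.Ici (m:ℝ), HasDerivAt (fun y : ℝ => (γ+y) ^ (α-1) / (α-1)) ((γ+x) ^ (α-2)) x := by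
  intro x hx
  have hm0 : (0:ℝ) ≤ (m:ℝ) := Nat.cast_nonneg m
  have hmx : (m:ℝ) ≤ x := hx
  have hyx : (0:ℝ) < γ + x := by linarith
  have h1 : HasDerivAt (fun y : ℝ => γ + y) 1 x := by
    simpa using (hasDerivAt_id x).const_add γ
  have h2 := (Real.hasDerivAt_rpow_const (x := γ+x) (p := α-1) (Or.inl hyx.ne')).comp x h1
  have h3 := h2.div_const (α-1)
  refine h3.congr_deriv ?_
  rw [show α - 1 - 1 = α - 2 by ring]
  have hne : α - 1 ≠ 0 := ne_of_lt (by linarith)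
  field_simp

lemma tail_nonneg {α γ : ℝ} (hγ0 : 0 < γ) (m : ℕ) :
    ∀ x ∈ Set.Ioi (m:ℝ), 0 ≤ (γ+x) ^ (α-2) := by
  intro x hx
  have hm0 : (0:ℝ) ≤ (m:ℝ) := Nat.cast_nonneg m
  have : (m:ℝ) < x := hx
  exact Real.rpow_nonneg (by linarith) _

lemma tail_tendsto {α γ : ℝ} (hα0 : 0 < α) (hα1 : α < 1) (hγ0 : 0 < γ) :
    Filter.Tendsto (fun y : ℝ => (γ+y) ^ (α-1) / (α-1)) Filter.atTop (nhds 0) := by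
  have h1 : Filter.Tendsto (fun y : ℝ => γ + y) Filter.atTop Filter.atTop :=
    Filter.tendsto_atTop_add_const_left _ γ Filter.tendsto_id
  have h2 := (tendsto_rpow_neg_atTop (show (0:ℝ) < 1 - α by linarith)).comp h1
  rw [show -(1-α) = α - 1 by ring] at h2
  have h3 := h2.div_const (α-1)
  simpa [Function.comp] using h3

lemma tail_value {α γ : ℝ} (hα0 : 0 < α) (hα1 : α < 1) (hγ0 : 0 < γ) (m : ℕ) :
    ∫ x in Set.Ioi (m:ℝ), (γ + x) ^ (α-2) = (γ + m) ^ (α-1) / (1-α) := by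
  rw [MeasureTheory.integral_Ioi_of_hasDerivAt_of_nonneg'
    (tail_hasDeriv hα0 hα1 hγ0 m) (tail_nonneg hγ0 m) (tail_tendsto hα0 hα1 hγ0)]
  show (0:ℝ) - (γ+(m:ℝ)) ^ (α-1) / (α-1) = (γ+(m:ℝ)) ^ (α-1) / (1-α)
  rw [zero_sub, show (1:ℝ)-α = -(α-1) by ring, div_neg]

lemma tail_integrable {α γ : ℝ} (hα0 : 0 < α) (hα1 : α < 1) (hγ0 : 0 < γ) (m : ℕ) :
    IntegrableOn (fun x : ℝ => (γ + x) ^ (α-2)) (Set.Ioi (m:ℝ)) :=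
  MeasureTheory.integrableOn_Ioi_deriv_of_nonneg'
    (tail_hasDeriv hα0 hα1 hγ0 m) (tail_nonneg hγ0 m) (tail_tendsto hα0 hα1 hγ0)

lemma J_split {α γ : ℝ} (hα0 : 0 < α) (hα1 : α < 1) (hγ0 : 0 < γ) (m : ℕ) :
    ∫ x in Set.Ioi (0:ℝ), (Int.fract x ^ 2 - Int.fract x + 1/6) * (γ + x) ^ (α-2)
      = (∑ k ∈ Finset.range m, w α γ k)
        + ∫ x in Set.Ioi (m:ℝ), (Int.fract x ^ 2 - Int.fract x + 1/6) * (γ + x) ^ (α-2) := by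
  set f : ℝ → ℝ := fun x => (Int.fract x ^ 2 - Int.fract x + 1/6) * (γ + x) ^ (α-2) with hfdef
  have hpoly : ∀ k : ℕ, IntegrableOn
      (fun x : ℝ => ((x - k)^2 - (x - k) + 1/6) * (γ + x) ^ (α-2))
      (Set.Ioc (k:ℝ) ((k:ℝ)+1)) := by
    intro k
    have hk0 : (0:ℝ) ≤ (k:ℝ) := Nat.cast_nonneg k
    apply (ContinuousOn.integrableOn_Icc ?_).mono_set Set.Ioc_subset_Icc_self
    apply ContinuousOn.mul
    · exact (((continuousOn_id.sub continuousOn_const).pow 2).sub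
        (continuousOn_id.sub continuousOn_const)).add continuousOn_const
    · apply (continuousOn_const.add continuousOn_id).rpow_const
      intro x hx
      simp only [Pi.add_apply, id_eq]
      exact Or.inl (ne_of_gt (by have := hx.1; linarith))
  have haeeq : ∀ k : ℕ, (fun x : ℝ => ((x - k)^2 - (x - k) + 1/6) * (γ + x) ^ (α-2))
      =ᵐ[volume.restrict (Set.Ioc (k:ℝ) ((k:ℝ)+1))] f := by
    intro k
    filter_upwards [MeasureTheory.ae_restrict_of_ae (fract_integrand_ae (α := α) (γ := γ) k),
      MeasureTheory.ae_restrict_mem (measurableSet_Ioc :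
        MeasurableSet (Set.Ioc (k:ℝ) ((k:ℝ)+1)))] with x hx hmem
    exact (hx hmem).symm
  have hfk : ∀ k : ℕ, IntegrableOn f (Set.Ioc (k:ℝ) ((k:ℝ)+1)) :=
    fun k => (hpoly k).congr (haeeq k)
  have hIoc : IntegrableOn f (Set.Ioc (0:ℝ) (m:ℝ)) := by
    have h : ∀ j : ℕ, IntervalIntegrable f volume 0 (j:ℝ) := by
      intro j
      induction j with
      | zero => simp only [Nat.cast_zero]; exact IntervalIntegrable.refl
      | succ j ihj =>
          have hj := (intervalIntegrable_iff_integrableOn_Ioc_of_le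
            (show (j:ℝ) ≤ (j:ℝ)+1 by linarith)).mpr (hfk j)
          rw [Nat.cast_add, Nat.cast_one]
          exact ihj.trans hj
    exact (intervalIntegrable_iff_integrableOn_Ioc_of_le (Nat.cast_nonneg m)).mp (h m)
  have hmeasB : Measurable (fun x : ℝ => Int.fract x ^ 2 - Int.fract x + 1/6) :=
    ((measurable_fract.pow measurable_const).sub measurable_fract).add measurable_const
  have hIoi : IntegrableOn f (Set.Ioi (m:ℝ)) := by
    apply MeasureTheory.Integrable.bdd_mul (c := 1/6) (tail_integrable hα0 hα1 hγ0 m)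
      hmeasB.aestronglyMeasurable.restrict
    exact Filter.Eventually.of_forall fun x => by
      simpa [Real.norm_eq_abs] using abs_B2_le x
  rw [← Set.Ioc_union_Ioi_eq_Ioi (show (0:ℝ) ≤ (m:ℝ) from Nat.cast_nonneg m),
    MeasureTheory.setIntegral_union (Set.Ioc_disjoint_Ioi le_rfl) measurableSet_Ioi hIoc hIoi]
  congr 1
  rw [← intervalIntegral.integral_of_le (show (0:ℝ) ≤ (m:ℝ) from Nat.cast_nonneg m)]
  have hadj := intervalIntegral.sum_integral_adjacent_intervals
    (a := fun k : ℕ => (k:ℝ)) (n := m) (f := f) (μ := volume) ?_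
  · rw [Nat.cast_zero] at hadj
    rw [← hadj]
    apply Finset.sum_congr rfl
    intro k _
    simp only [Nat.cast_add, Nat.cast_one]
    have hcongr : (∫ x in (k:ℝ)..((k:ℝ)+1), f x)
        = ∫ x in (k:ℝ)..((k:ℝ)+1), ((x - k)^2 - (x - k) + 1/6) * (γ + x) ^ (α-2) := by
      apply intervalIntegral.integral_congr_ae
      filter_upwards [fract_integrand_ae (α := α) (γ := γ) k] with x hx hmem
      rw [Set.uIoc_of_le (show (k:ℝ) ≤ (k:ℝ)+1 by linarith)] at hmem
      exact hx hmem
    rw [hcongr, poly_interval_value hα0 hα1 hγ0 k]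
  · intro k _
    simp only [Nat.cast_add, Nat.cast_one]
    exact (intervalIntegrable_iff_integrableOn_Ioc_of_le
      (show (k:ℝ) ≤ (k:ℝ)+1 by linarith)).mpr (hfk k)

lemma f_integrableOn_Ioi {α γ : ℝ} (hα0 : 0 < α) (hα1 : α < 1) (hγ0 : 0 < γ) (m : ℕ) :
    IntegrableOn (fun x : ℝ => (Int.fract x ^ 2 - Int.fract x + 1/6) * (γ + x) ^ (α-2))
      (Set.Ioi (m:ℝ)) := by
  have hmeasB : Measurable (fun x : ℝ => Int.fract x ^ 2 - Int.fract x + 1/6) :=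
    ((measurable_fract.pow measurable_const).sub measurable_fract).add measurable_const
  apply MeasureTheory.Integrable.bdd_mul (c := 1/6) (tail_integrable hα0 hα1 hγ0 m)
    hmeasB.aestronglyMeasurable.restrict
  exact Filter.Eventually.of_forall fun x => by
    simpa [Real.norm_eq_abs] using abs_B2_le x

lemma tail_bound {α γ : ℝ} (hα0 : 0 < α) (hα1 : α < 1) (hγ0 : 0 < γ) (m : ℕ) :
    |∫ x in Set.Ioi (m:ℝ), (Int.fract x ^ 2 - Int.fract x + 1/6) * (γ + x) ^ (α-2)|
      ≤ 1/6 * ((γ + m) ^ (α-1) / (1-α)) := by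
  have hm0 : (0:ℝ) ≤ (m:ℝ) := Nat.cast_nonneg m
  have h1 : |∫ x in Set.Ioi (m:ℝ), (Int.fract x ^ 2 - Int.fract x + 1/6) * (γ + x) ^ (α-2)|
      ≤ ∫ x in Set.Ioi (m:ℝ), ‖(Int.fract x ^ 2 - Int.fract x + 1/6) * (γ + x) ^ (α-2)‖ := by
    rw [← Real.norm_eq_abs]
    exact MeasureTheory.norm_integral_le_integral_norm _
  refine h1.trans ?_
  have h2 : (∫ x in Set.Ioi (m:ℝ), ‖(Int.fract x ^ 2 - Int.fract x + 1/6) * (γ + x) ^ (α-2)‖)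
      ≤ ∫ x in Set.Ioi (m:ℝ), 1/6 * (γ + x) ^ (α-2) := by
    apply MeasureTheory.setIntegral_mono_on
    · exact (f_integrableOn_Ioi hα0 hα1 hγ0 m).norm
    · exact (tail_integrable hα0 hα1 hγ0 m).const_mul _
    · exact measurableSet_Ioi
    · intro x hx
      have hxm : (m:ℝ) < x := hx
      have hxp : (0:ℝ) ≤ (γ + x) ^ (α-2) := Real.rpow_nonneg (by linarith) _
      rw [norm_mul, Real.norm_eq_abs, Real.norm_eq_abs, abs_of_nonneg hxp]
      exact mul_le_mul_of_nonneg_right (abs_B2_le x) hxp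
  refine h2.trans ?_
  rw [MeasureTheory.integral_const_mul, tail_value hα0 hα1 hγ0 m]

end NFRaux

open NFRaux

/-- For `0 < α < 1`, `n ≥ 1`, `t ∈ (0,1]` with `nt ∉ ℕ`, letting
`f_n(t) = ∫₀ᵗ (t-s)^{α-1}(⌈ns⌉ - ns - 1/2) ds` and `R` as in the paper,
we have `|n^α f_n(t) - R({nt})| ≤ (1/6)(nt)^{α-1}`. -/
theorem nalpha_fn_close_to_R (α : ℝ) (hα : α ∈ Set.Ioo (0 : ℝ) 1)
    (R₂ : ℝ → ℝ)
    (hR₂ : ∀ γ : ℝ, R₂ γ = α * (1 - α) / 2 *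
      ∫ x in Set.Ioi (0 : ℝ),
        ((Int.fract x) ^ 2 - Int.fract x + 1 / 6) * (γ + x) ^ (α - 2))
    (R : ℝ → ℝ)
    (hR : ∀ γ : ℝ, R γ = -(1 / (α * (1 + α))) * γ ^ (α + 1)
        + (1 / (2 * α)) * γ ^ α - (1 / 12) * γ ^ (α - 1) + (1 / α) * R₂ γ)
    (n : ℕ) (hn : 1 ≤ n) (t : ℝ) (ht : t ∈ Set.Ioc (0 : ℝ) 1)
    (hnt : ∀ k : ℕ, (n : ℝ) * t ≠ k) :
    |(n : ℝ) ^ α *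
        (∫ s in (0 : ℝ)..t, (t - s) ^ (α - 1) * ((⌈(n : ℝ) * s⌉ : ℝ) - n * s - 1 / 2))
      - R (Int.fract ((n : ℝ) * t))|
      ≤ (1 / 6) * ((n : ℝ) * t) ^ (α - 1) := by
  obtain ⟨hα0, hα1⟩ := hα
  obtain ⟨ht0, ht1⟩ := ht
  have hn0 : (0:ℝ) < n := by
    have : (1:ℝ) ≤ (n:ℝ) := by exact_mod_cast hn
    linarith
  set T : ℝ := (n:ℝ) * t with hTdef
  have hT0 : (0:ℝ) < T := mul_pos hn0 ht0
  set γ : ℝ := Int.fract T with hγdef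
  have hγ1 : γ < 1 := Int.fract_lt_one T
  have hfl0 : (0:ℤ) ≤ ⌊T⌋ := Int.floor_nonneg.mpr hT0.le
  have hγ0 : 0 < γ := by
    rcases lt_or_eq_of_le (Int.fract_nonneg T) with h | h
    · exact h
    · exfalso
      have hsf : T - (⌊T⌋:ℝ) = 0 := by rw [Int.self_sub_floor]; exact h.symm
      refine hnt ⌊T⌋.toNat ?_
      have hmc : ((⌊T⌋.toNat : ℕ) : ℝ) = ((⌊T⌋ : ℤ) : ℝ) := by
        exact_mod_cast congrArg (fun z : ℤ => (z:ℝ)) (Int.toNat_of_nonneg hfl0)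
      rw [hmc]
      linarith
  set m : ℕ := ⌊T⌋.toNat with hmdef
  have hmcast : ((m:ℕ):ℝ) = (⌊T⌋:ℝ) := by
    rw [hmdef]
    exact_mod_cast congrArg (Int.cast : ℤ → ℝ) (Int.toNat_of_nonneg hfl0)
  have hmT : T = γ + m := by
    rw [hmcast, hγdef, Int.fract]
    ring
  set tail : ℝ := ∫ x in Set.Ioi ((m:ℕ):ℝ),
    (Int.fract x ^ 2 - Int.fract x + 1/6) * (γ + x) ^ (α-2) with htaildef
  have hA : (n:ℝ) ^ α *
        (∫ s in (0:ℝ)..t, (t - s) ^ (α - 1) * ((⌈(n:ℝ) * s⌉ : ℝ) - n * s - 1/2))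
      = ∫ u in (0:ℝ)..T, (T - u) ^ (α - 1) * ((⌈u⌉ : ℝ) - u - 1/2) := by
    have h1 := intervalIntegral.smul_integral_comp_mul_left (a := (0:ℝ)) (b := t)
      (f := fun u : ℝ => (T - u) ^ (α - 1) * ((⌈u⌉ : ℝ) - u - 1/2)) ((n:ℝ))
    rw [mul_zero, ← hTdef] at h1
    have h2 : (∫ x in (0:ℝ)..t,
          (fun u : ℝ => (T - u) ^ (α - 1) * ((⌈u⌉ : ℝ) - u - 1/2)) ((n:ℝ) * x))
        = (n:ℝ) ^ (α - 1) *
          ∫ s in (0:ℝ)..t, (t - s) ^ (α - 1) * ((⌈(n:ℝ) * s⌉ : ℝ) - n * s - 1/2) := by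
      rw [← intervalIntegral.integral_const_mul]
      apply intervalIntegral.integral_congr_ae
      apply Filter.Eventually.of_forall
      intro s hs
      rw [Set.uIoc_of_le ht0.le] at hs
      simp only
      have hts : 0 ≤ t - s := by linarith [hs.2]
      rw [hTdef, show (n:ℝ) * t - (n:ℝ) * s = (n:ℝ) * (t - s) by ring,
        Real.mul_rpow hn0.le hts]
      ring
    rw [h2] at h1
    have h3 : (n:ℝ) * (n:ℝ) ^ (α - 1) = (n:ℝ) ^ α := by
      nth_rewrite 1 [show (n:ℝ) = (n:ℝ) ^ (1:ℝ) from (Real.rpow_one _).symm]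
      rw [← Real.rpow_add hn0]
      norm_num
    rw [← h1, smul_eq_mul, ← mul_assoc, h3]
  have hsimp : 1 / α * (α * (1 - α) / 2 * ((∑ k ∈ Finset.range m, w α γ k) + tail))
      = (1 - α) / 2 * ((∑ k ∈ Finset.range m, w α γ k) + tail) := by
    field_simp
  have hkey := key_alg hα0 hα1 hγ0 m
  have hmain : (n:ℝ) ^ α *
        (∫ s in (0:ℝ)..t, (t - s) ^ (α - 1) * ((⌈(n:ℝ) * s⌉ : ℝ) - n * s - 1/2))
      - R γ = 1/12 * (γ + m) ^ (α-1) - (1-α)/2 * tail := by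
    rw [hA, hmT, partB hα0 hα1 hγ0 hγ1 m, hR γ, hR₂ γ,
      J_split hα0 hα1 hγ0 m, ← htaildef, hsimp]
    linear_combination hkey
  rw [show (1:ℝ)/2 = 1/2 from rfl] at hmain
  rw [hmT, hmain]
  have hP : (0:ℝ) ≤ (γ + (m:ℝ)) ^ (α-1) := Real.rpow_nonneg (by positivity) _
  have htb := tail_bound hα0 hα1 hγ0 m
  rw [← htaildef] at htb
  have h2 : |(1-α)/2 * tail| ≤ 1/12 * (γ + (m:ℝ)) ^ (α-1) := by
    rw [abs_mul, abs_of_nonneg (show (0:ℝ) ≤ (1-α)/2 by linarith)]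
    calc (1-α)/2 * |tail| ≤ (1-α)/2 * (1/6 * ((γ + (m:ℝ)) ^ (α-1) / (1-α))) :=
          mul_le_mul_of_nonneg_left htb (by linarith)
      _ = 1/12 * (γ + (m:ℝ)) ^ (α-1) := by
          have h1a : (1:ℝ) - α ≠ 0 := ne_of_gt (by linarith)
          field_simp [h1a]
          ring
  have h1 : |1/12 * (γ + (m:ℝ)) ^ (α-1) - (1-α)/2 * tail|
      ≤ |1/12 * (γ + (m:ℝ)) ^ (α-1)| + |(1-α)/2 * tail| := by
    rw [sub_eq_add_neg]
    refine (abs_add_le _ _).trans ?_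
    rw [abs_neg]
  refine h1.trans ?_
  rw [abs_of_nonneg (by positivity : (0:ℝ) ≤ 1/12 * (γ + (m:ℝ)) ^ (α-1))]
  linarith
end

section
/- Let F(a,b,c) = a/√(bc) on the domain b, c > 0, and let U = (x₁₂, x₁₁, x₂₂) with x₁₁, x₂₂ > 0. Let Σ_r be the symmetric 3×3 matrix with entries Σ_r[1,1] = x₁₁ + x₂₂ + 2r x₁₂, Σ_r[1,2] = Σ_r[2,1] = 2x₁₂ + 2r x₁₁, Σ_r[1,3] = Σ_r[3,1] = 2x₁₂ + 2r x₂₂, Σ_r[2,2] = 4x₁₁, Σ_r[2,3] = Σ_r[3,2] = 4r x₁₂, Σ_r[3,3] = 4x₂₂. Then ∇F(U)ᵀ Σ_r ∇F(U) = (x₁₁ x₂₂ - x₁₂²)(x₁₁ + x₂₂ - 2r x₁₂) / (x₁₁ x₂₂)². -/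
lemma rpow_neg_half (x : ℝ) (hx : 0 < x) : x ^ (-(1:ℝ)/2) = (Real.sqrt x)⁻¹ := by
  rw [show (-(1:ℝ)/2) = -(1/2) by ring, Real.rpow_neg hx.le, ← Real.sqrt_eq_rpow]

lemma rpow_neg_3half (x : ℝ) (hx : 0 < x) : x ^ (-(3:ℝ)/2) = (Real.sqrt x)⁻¹ * x⁻¹ := by
  rw [show (-(3:ℝ)/2) = -(1/2) + (-1) by ring, Real.rpow_add hx, Real.rpow_neg hx.le,
    ← Real.sqrt_eq_rpow, Real.rpow_neg_one]

/-- Quadratic form identity: with `F(a,b,c) = a/√(bc)`,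
`U = (x₁₂, x₁₁, x₂₂)`, `∇F(U) = ((x₁₁x₂₂)^{-1/2}, -(x₁₂/2)x₁₁^{-3/2}x₂₂^{-1/2},
-(x₁₂/2)x₁₁^{-1/2}x₂₂^{-3/2})`, and `Σ_r` the indicated symmetric matrix,
`∇F(U)ᵀ Σ_r ∇F(U) = (x₁₁x₂₂ - x₁₂²)(x₁₁ + x₂₂ - 2r x₁₂)/(x₁₁x₂₂)²`. -/
theorem gradF_quadratic_form (r x₁₂ x₁₁ x₂₂ : ℝ) (h₁ : 0 < x₁₁) (h₂ : 0 < x₂₂) :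
    let g : Fin 3 → ℝ :=
      ![(x₁₁ * x₂₂) ^ (-(1 : ℝ) / 2),
        -(x₁₂ / 2) * x₁₁ ^ (-(3 : ℝ) / 2) * x₂₂ ^ (-(1 : ℝ) / 2),
        -(x₁₂ / 2) * x₁₁ ^ (-(1 : ℝ) / 2) * x₂₂ ^ (-(3 : ℝ) / 2)]
    let Sr : Matrix (Fin 3) (Fin 3) ℝ :=
      !![x₁₁ + x₂₂ + 2 * r * x₁₂, 2 * x₁₂ + 2 * r * x₁₁, 2 * x₁₂ + 2 * r * x₂₂;
         2 * x₁₂ + 2 * r * x₁₁, 4 * x₁₁, 4 * r * x₁₂;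
         2 * x₁₂ + 2 * r * x₂₂, 4 * r * x₁₂, 4 * x₂₂]
    ∑ i : Fin 3, ∑ j : Fin 3, g i * Sr i j * g j
      = (x₁₁ * x₂₂ - x₁₂ ^ 2) * (x₁₁ + x₂₂ - 2 * r * x₁₂) / (x₁₁ * x₂₂) ^ 2 := by
  intro g Sr
  obtain ⟨s, hs0, rfl⟩ : ∃ s, 0 < s ∧ x₁₁ = s ^ 2 :=
    ⟨Real.sqrt x₁₁, Real.sqrt_pos.2 h₁, (Real.sq_sqrt h₁.le).symm⟩
  obtain ⟨t, ht0, rfl⟩ : ∃ t, 0 < t ∧ x₂₂ = t ^ 2 :=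
    ⟨Real.sqrt x₂₂, Real.sqrt_pos.2 h₂, (Real.sq_sqrt h₂.le).symm⟩
  simp only [g, Sr, Fin.sum_univ_three, Matrix.cons_val_zero, Matrix.cons_val_one,
    Matrix.head_cons, Matrix.cons_val_two, Matrix.tail_cons, Matrix.head_fin_const,
    Matrix.cons_val', Matrix.empty_val', Matrix.cons_val_fin_one, Matrix.of_apply]
  rw [rpow_neg_half _ (mul_pos h₁ h₂), rpow_neg_half _ h₁, rpow_neg_half _ h₂,
    rpow_neg_3half _ h₁, rpow_neg_3half _ h₂, Real.sqrt_mul h₁.le,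
    Real.sqrt_sq hs0.le, Real.sqrt_sq ht0.le]
  field_simp
  ring
end

section
/- Let 0 < α < 1 and define, for n ≥ 1 and t ∈ [0,1], V_n(t) = 2 ∫₀ᵗ f_n(s) (⌈ns⌉ - ns - 1/2) ds where f_n(s) = ∫₀ˢ (s-u)^{α-1}(⌈nu⌉ - nu - 1/2) du. Then there is a constant M_α depending only on α such that |V_n(t)| ≤ M_α n^{-α} for all n ≥ 1 and t ∈ [0,1]; hence V_n(t) → 0 as n → ∞. -/
open MeasureTheory Filter Set intervalIntegral



noncomputable def VnG (n : ℕ) (u : ℝ) : ℝ :=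
  Int.fract ((n:ℝ)*u) * (1 - Int.fract ((n:ℝ)*u)) / (2*n)

noncomputable def VngR (n : ℕ) (u : ℝ) : ℝ := 1/2 - Int.fract ((n:ℝ)*u)

lemma VngR_meas (n : ℕ) : Measurable (VngR n) := by
  exact (measurable_const.sub ((measurable_fract).comp (measurable_const_mul _)))

lemma abs_VngR_le (n : ℕ) (u : ℝ) : |VngR n u| ≤ 1/2 := by
  have h1 := Int.fract_nonneg ((n:ℝ)*u)
  have h2 := Int.fract_lt_one ((n:ℝ)*u)
  rw [abs_le]; constructor <;> [unfold VngR; unfold VngR] <;> linarith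

lemma VnG_cont (n : ℕ) : Continuous (VnG n) := by
  have h : Continuous ((fun y : ℝ => y * (1 - y) / (2*n)) ∘ Int.fract) := by
    apply ContinuousOn.comp_fract''
    · exact (Continuous.continuousOn (by continuity))
    · simp
  have : Continuous fun u : ℝ => (n:ℝ) * u := continuous_const.mul continuous_id
  exact h.comp this

lemma VnG_nonneg (n : ℕ) (u : ℝ) : 0 ≤ VnG n u := by
  have h1 := Int.fract_nonneg ((n:ℝ)*u)
  have h2 := Int.fract_lt_one ((n:ℝ)*u)
  have : (0:ℝ) ≤ (n:ℝ) := Nat.cast_nonneg n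
  apply div_nonneg (mul_nonneg h1 (by linarith)) (by linarith)

lemma VnG_le (n : ℕ) (hn : 1 ≤ n) (u : ℝ) : VnG n u ≤ 1/(8*n) := by
  have h1 := Int.fract_nonneg ((n:ℝ)*u)
  have h2 := Int.fract_lt_one ((n:ℝ)*u)
  have hn' : (1:ℝ) ≤ (n:ℝ) := by exact_mod_cast hn
  have key : Int.fract ((n:ℝ)*u) * (1 - Int.fract ((n:ℝ)*u)) ≤ 1/4 := by
    nlinarith [sq_nonneg (Int.fract ((n:ℝ)*u) - 1/2)]
  unfold VnG
  rw [div_le_div_iff₀ (by linarith) (by linarith)]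
  nlinarith


lemma fract_eventually (n : ℕ) (hn : 1 ≤ n) (u : ℝ) :
    ∀ᶠ x in nhdsWithin u (Ici u),
      Int.fract ((n:ℝ)*x) = Int.fract ((n:ℝ)*u) + (n:ℝ)*(x - u) := by
  have hn0 : (0:ℝ) < n := by exact_mod_cast hn
  set a := Int.fract ((n:ℝ)*u) with ha
  have h2 := Int.fract_lt_one ((n:ℝ)*u)
  have hδ : (0:ℝ) < (1 - a)/n := div_pos (by linarith) hn0
  have hmem : Ico u (u + (1-a)/n) ∈ nhdsWithin u (Ici u) :=
    Ico_mem_nhdsGE (by linarith)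
  filter_upwards [hmem] with x hx
  obtain ⟨hx1, hx2⟩ := hx
  have hfl : ⌊(n:ℝ)*x⌋ = ⌊(n:ℝ)*u⌋ := by
    rw [Int.floor_eq_iff]
    constructor
    · calc ((⌊(n:ℝ)*u⌋:ℝ)) ≤ (n:ℝ)*u := Int.floor_le _
      _ ≤ (n:ℝ)*x := by nlinarith
    · have hlt : (n:ℝ)*x < (n:ℝ)*u + (1-a) := by
        have := mul_lt_mul_of_pos_left hx2 hn0
        rwa [mul_add, mul_div_cancel₀ _ hn0.ne'] at this
      have ha' : a = (n:ℝ)*u - ⌊(n:ℝ)*u⌋ := (Int.self_sub_floor _).symm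
      push_cast
      linarith
  have ha' : a = (n:ℝ)*u - ⌊(n:ℝ)*u⌋ := (Int.self_sub_floor _).symm
  have h3 : Int.fract ((n:ℝ)*x) = (n:ℝ)*x - ⌊(n:ℝ)*x⌋ := (Int.self_sub_floor _).symm
  rw [h3, hfl]
  linarith

lemma hasDerivWithinAt_VnG (n : ℕ) (hn : 1 ≤ n) (u : ℝ) :
    HasDerivWithinAt (VnG n) (VngR n u) (Ici u) u := by
  have hn0 : (0:ℝ) < n := by exact_mod_cast hn
  set a := Int.fract ((n:ℝ)*u) with ha
  have hP : HasDerivAt (fun x : ℝ => (a + (n:ℝ)*(x-u)) * (1 - (a + (n:ℝ)*(x-u))) / (2*n))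
      (VngR n u) u := by
    have h1 : HasDerivAt (fun x : ℝ => a + (n:ℝ)*(x-u)) (n:ℝ) u := by
      simpa using ((hasDerivAt_id u).sub_const u).const_mul (n:ℝ) |>.const_add a
    have h2 : HasDerivAt (fun x : ℝ => 1 - (a + (n:ℝ)*(x-u))) (-(n:ℝ)) u :=
      (h1.const_sub 1)
    have := (h1.mul h2).div_const (2*n)
    refine this.congr_deriv ?_
    unfold VngR
    field_simp
    ring
  have heq := fract_eventually n hn u
  have hval : VnG n u = (a + (n:ℝ)*(u-u)) * (1 - (a + (n:ℝ)*(u-u))) / (2*n) := by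
    simp [VnG, ha]
  refine (hP.hasDerivWithinAt).congr_of_eventuallyEq ?_ hval
  have : nhdsWithin u (Ici u) = nhdsWithin u (Ici u) := rfl
  filter_upwards [heq] with x hx
  simp only [VnG, hx, ha]

lemma VngR_intervalIntegrable (n : ℕ) (a b : ℝ) : IntervalIntegrable (VngR n) volume a b := by
  apply IntervalIntegrable.mono_fun' (g := fun _ => (1:ℝ)/2)
  · exact intervalIntegrable_const
  · exact (VngR_meas n).aestronglyMeasurable
  · exact Eventually.of_forall (fun u => by simpa using abs_VngR_le n u)

lemma integral_VngR (n : ℕ) (hn : 1 ≤ n) {a b : ℝ} (hab : a ≤ b) :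
    ∫ u in a..b, VngR n u = VnG n b - VnG n a := by
  apply integral_eq_sub_of_hasDeriv_right_of_le hab
  · exact (VnG_cont n).continuousOn
  · intro x _
    exact (hasDerivWithinAt_VnG n hn x).mono Ioi_subset_Ici_self
  · exact VngR_intervalIntegrable n a b

lemma g_ae_eq (n : ℕ) (hn : 1 ≤ n) :
    (fun u : ℝ => (⌈(n:ℝ)*u⌉:ℝ) - (n:ℝ)*u - 1/2) =ᵐ[volume] VngR n := by
  have hcnt : Set.Countable {u : ℝ | ∃ k : ℤ, (n:ℝ)*u = k} := by
    have : {u : ℝ | ∃ k : ℤ, (n:ℝ)*u = k} ⊆ Set.range (fun k : ℤ => (k:ℝ)/n) := by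
      rintro u ⟨k, hk⟩
      refine ⟨k, ?_⟩
      have hn0 : (0:ℝ) < n := by exact_mod_cast hn
      field_simp [hk.symm]
      exact hk.symm
    exact Set.Countable.mono this (Set.countable_range _)
  have h0 : volume {u : ℝ | ∃ k : ℤ, (n:ℝ)*u = k} = 0 := hcnt.measure_zero _
  refine (ae_iff.mpr ?_)
  apply measure_mono_null _ h0
  intro u hu
  simp only [Set.mem_setOf_eq] at hu ⊢
  by_contra hni
  apply hu
  have hceil : (⌈(n:ℝ)*u⌉:ℤ) = ⌊(n:ℝ)*u⌋ + 1 := by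
    have h1 : (⌊(n:ℝ)*u⌋:ℝ) < (n:ℝ)*u := by
      rcases lt_or_eq_of_le (Int.floor_le ((n:ℝ)*u)) with h | h
      · exact h
      · exact absurd ⟨⌊(n:ℝ)*u⌋, h.symm⟩ hni
    have h2 : (⌊(n:ℝ)*u⌋:ℤ) < ⌈(n:ℝ)*u⌉ := by
      have := Int.le_ceil ((n:ℝ)*u)
      exact_mod_cast lt_of_lt_of_le h1 this
    have h3 := Int.ceil_le_floor_add_one ((n:ℝ)*u)
    omega
  unfold VngR
  have hfr' : Int.fract ((n:ℝ)*u) = (n:ℝ)*u - ⌊(n:ℝ)*u⌋ := (Int.self_sub_floor _).symm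
  rw [hfr']
  have hc : ((⌈(n:ℝ)*u⌉:ℤ):ℝ) = ((⌊(n:ℝ)*u⌋:ℤ):ℝ) + 1 := by exact_mod_cast hceil
  rw [hc]
  ring

lemma integral_sub_rpow {α : ℝ} (hα : α ∈ Set.Ioo (0:ℝ) 1) {s a b : ℝ} (hab : a ≤ b)
    (hbs : b ≤ s) :
    ∫ u in a..b, (s-u)^(α-1) = ((s-a)^α - (s-b)^α)/α := by
  obtain ⟨hα0, hα1⟩ := hα
  have h1 : (∫ u in a..b, (s-u)^(α-1)) = ∫ x in (s-b)..(s-a), x^(α-1) :=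
    intervalIntegral.integral_comp_sub_left (fun x => x^(α-1)) s
  rw [h1, integral_rpow (Or.inl (by linarith))]
  rw [sub_add_cancel]

lemma fn_bound {α : ℝ} (hα : α ∈ Set.Ioo (0:ℝ) 1) {n : ℕ} (hn : 1 ≤ n) {s : ℝ}
    (hs0 : 0 < s) (hs1 : s ≤ 1) :
    |∫ u in (0:ℝ)..s, (s-u)^(α-1) * VngR n u| ≤ (1/(2*α) + 1/4) * (n:ℝ)^(-α) := by
  obtain ⟨hα0, hα1⟩ := hα
  have hn0 : (0:ℝ) < n := by exact_mod_cast hn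
  have hn1 : (1:ℝ) ≤ n := by exact_mod_cast hn
  have hnpow : (0:ℝ) < (n:ℝ)^(-α) := Real.rpow_pos_of_pos hn0 _
  have hinv : (0:ℝ) < 1/(n:ℝ) := by positivity
  have hmeas : Measurable (fun u : ℝ => (s-u)^(α-1) * VngR n u) :=
    (by fun_prop : Measurable fun u : ℝ => (s-u)^(α-1)).mul (VngR_meas n)
  -- the key identity : (1/n)^α = n^(-α), (1/n)^(α-1) = n^(1-α)
  have hkey1 : ((1:ℝ)/n)^α = (n:ℝ)^(-α) := by
    rw [one_div, Real.inv_rpow hn0.le, ← Real.rpow_neg hn0.le]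
  have hkey2 : ((1:ℝ)/n)^(α-1) = (n:ℝ)^(1-α) := by
    rw [one_div, Real.inv_rpow hn0.le, ← Real.rpow_neg hn0.le, neg_sub]
  have hkey3 : (n:ℝ)^(1-α) * (1/(8*n)) = (n:ℝ)^(-α)/8 := by
    have : (n:ℝ)^(1-α) * ((1:ℝ)/n) = (n:ℝ)^(-α) := by
      rw [one_div, ← Real.rpow_neg_one n, ← Real.rpow_add hn0]
      congr 1
      ring
    calc (n:ℝ)^(1-α) * (1/(8*n)) = ((n:ℝ)^(1-α) * (1/n))/8 := by ring
      _ = (n:ℝ)^(-α)/8 := by rw [this]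
  -- tail bound on [m,s]
  have tail_bound : ∀ m : ℝ, 0 ≤ m → m ≤ s →
      |∫ u in m..s, (s-u)^(α-1) * VngR n u| ≤ (s-m)^α/(2*α) := by
    intro m hm0 hms
    have hψint : IntervalIntegrable (fun u => (s-u)^(α-1)) volume m s := by
      have := (intervalIntegrable_rpow' (a := 0) (b := s - m) (r := α-1)
        (by linarith)).comp_sub_left s
      simpa using this.symm
    have hptwise : ∀ᵐ t ∂(volume.restrict (Set.uIoc m s)),
        ‖(s-t)^(α-1) * VngR n t‖ ≤ (s-t)^(α-1) * (1/2) := by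
      rw [ae_restrict_iff' measurableSet_uIoc]
      apply Eventually.of_forall
      intro u hu
      rw [uIoc_of_le hms] at hu
      have hsu : 0 ≤ s - u := by linarith [hu.2]
      have h1 : 0 ≤ (s-u)^(α-1) := Real.rpow_nonneg hsu _
      simp only [norm_mul, Real.norm_eq_abs, abs_of_nonneg h1]
      exact mul_le_mul_of_nonneg_left (abs_VngR_le n u) h1
    have := intervalIntegral.norm_integral_le_abs_of_norm_le hptwise (hψint.mul_const _)
    rw [Real.norm_eq_abs] at this
    apply this.trans
    rw [intervalIntegral.integral_mul_const, integral_sub_rpow ⟨hα0, hα1⟩ hms le_rfl]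
    rw [sub_self, Real.zero_rpow (ne_of_gt hα0), sub_zero]
    have hnn : (0:ℝ) ≤ (s-m)^α/α * (1/2) :=
      mul_nonneg (div_nonneg (Real.rpow_nonneg (by linarith) _) hα0.le) (by norm_num)
    rw [abs_of_nonneg hnn]
    exact le_of_eq (by ring)
  by_cases hcase : s ≤ 1/n
  · -- small s : direct bound
    have h1 := tail_bound 0 le_rfl hs0.le
    rw [sub_zero] at h1
    refine h1.trans ?_
    have h2 : s^α ≤ ((1:ℝ)/n)^α := Real.rpow_le_rpow hs0.le hcase hα0.le
    rw [hkey1] at h2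
    calc s^α/(2*α) ≤ (n:ℝ)^(-α)/(2*α) := by
          apply div_le_div_of_nonneg_right h2 (by linarith) |>.trans_eq rfl
      _ = (1/(2*α)) * (n:ℝ)^(-α) := by ring
      _ ≤ (1/(2*α) + 1/4) * (n:ℝ)^(-α) := by nlinarith
  · -- large s : split at m = s - 1/n
    push_neg at hcase
    set m := s - 1/n with hm
    have hm0 : 0 < m := by rw [hm]; linarith
    have hms : m ≤ s := by rw [hm]; linarith
    have hsm : s - m = 1/n := by rw [hm]; ring
    -- integrability of the integrand on [0,m]
    have hbound_phi : ∀ u : ℝ, u ∈ Set.Ioc (0:ℝ) m → (s-u)^(α-1) ≤ (n:ℝ)^(1-α) := by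
      intro u hu
      rw [← hkey2]
      exact Real.rpow_le_rpow_of_nonpos hinv
        (by rw [← hsm]; linarith [hu.2]) (by linarith)
    have hint0m : IntervalIntegrable (fun u => (s-u)^(α-1) * VngR n u) volume 0 m := by
      apply IntervalIntegrable.mono_fun' (g := fun _ => (n:ℝ)^(1-α) * (1/2))
        intervalIntegrable_const hmeas.aestronglyMeasurable
      rw [Filter.EventuallyLE, ae_restrict_iff' measurableSet_uIoc]
      apply Eventually.of_forall
      intro u hu
      rw [uIoc_of_le hm0.le] at hu
      have hsu : 0 ≤ s - u := by linarith [hu.2, hms]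
      have h1 : 0 ≤ (s-u)^(α-1) := Real.rpow_nonneg hsu _
      simp only [norm_mul, Real.norm_eq_abs, abs_of_nonneg h1]
      exact mul_le_mul (hbound_phi u hu) (abs_VngR_le n u) (abs_nonneg _)
        (Real.rpow_nonneg hn0.le _)
    have hintms : IntervalIntegrable (fun u => (s-u)^(α-1) * VngR n u) volume m s := by
      have hψint : IntervalIntegrable (fun u => (s-u)^(α-1)) volume m s := by
        have := (intervalIntegrable_rpow' (a := 0) (b := s - m) (r := α-1)
          (by linarith)).comp_sub_left s
        simpa using this.symm
      apply IntervalIntegrable.mono_fun' (g := fun u => (s-u)^(α-1) * (1/2)) (hψint.mul_const _)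
      · exact hmeas.aestronglyMeasurable
      · rw [Filter.EventuallyLE, ae_restrict_iff' measurableSet_uIoc]
        apply Eventually.of_forall
        intro u hu
        rw [uIoc_of_le hms] at hu
        have hsu : 0 ≤ s - u := by linarith [hu.2]
        have h1 : 0 ≤ (s-u)^(α-1) := Real.rpow_nonneg hsu _
        simp only [norm_mul, Real.norm_eq_abs, abs_of_nonneg h1]
        exact mul_le_mul_of_nonneg_left (abs_VngR_le n u) h1
    -- split the integral
    have hsplit : (∫ u in (0:ℝ)..s, (s-u)^(α-1) * VngR n u)
        = (∫ u in (0:ℝ)..m, (s-u)^(α-1) * VngR n u)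
          + ∫ u in m..s, (s-u)^(α-1) * VngR n u :=
      (intervalIntegral.integral_add_adjacent_intervals hint0m hintms).symm
    -- IBP on [0,m]
    have hpos : ∀ x : ℝ, x ∈ Set.Icc (0:ℝ) m → 0 < s - x := by
      intro x hx
      have h2 := hx.2
      have h3 : (0:ℝ) < s - m := by rw [hsm]; exact hinv
      linarith
    have hFcont : ContinuousOn (fun u => (s-u)^(α-1) * VnG n u) (Set.Icc 0 m) := by
      apply ContinuousOn.mul _ (VnG_cont n).continuousOn
      apply ContinuousOn.rpow_const ((continuous_const.sub continuous_id).continuousOn)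
      intro x hx
      exact Or.inl (ne_of_gt (hpos x hx))
    have hFderiv : ∀ x ∈ Set.Ioo (0:ℝ) m,
        HasDerivWithinAt (fun u => (s-u)^(α-1) * VnG n u)
          (((α-1) * (s-x)^(α-1-1) * (-1)) * VnG n x + (s-x)^(α-1) * VngR n x)
          (Set.Ioi x) x := by
      intro x hx
      have hφ : HasDerivAt (fun u : ℝ => (s-u)^(α-1)) ((α-1) * (s-x)^(α-1-1) * (-1)) x := by
        have h1 : HasDerivAt (fun u : ℝ => s - u) (-1) x := by
          simpa using (hasDerivAt_id x).const_sub s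
        have := h1.rpow_const (p := α-1) (Or.inl (ne_of_gt (hpos x ⟨hx.1.le, hx.2.le⟩)))
        convert this using 1
        ring
      exact (hφ.hasDerivWithinAt).mul ((hasDerivWithinAt_VnG n hn x).mono Ioi_subset_Ici_self)
    have hψ'cont : ContinuousOn (fun u : ℝ => ((α-1) * (s-u)^(α-1-1) * (-1)) * VnG n u)
        (Set.Icc 0 m) := by
      apply ContinuousOn.mul _ (VnG_cont n).continuousOn
      apply ContinuousOn.mul _ continuousOn_const
      apply ContinuousOn.mul continuousOn_const
      apply ContinuousOn.rpow_const ((continuous_const.sub continuous_id).continuousOn)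
      intro x hx
      exact Or.inl (ne_of_gt (hpos x hx))
    have hderint : IntervalIntegrable
        (fun u => ((α-1) * (s-u)^(α-1-1) * (-1)) * VnG n u + (s-u)^(α-1) * VngR n u)
        volume 0 m := by
      apply IntervalIntegrable.add _ hint0m
      have huicc : Set.uIcc (0:ℝ) m = Set.Icc 0 m := uIcc_of_le hm0.le
      exact ContinuousOn.intervalIntegrable (by rw [huicc]; exact hψ'cont)
    have hG0 : VnG n 0 = 0 := by simp [VnG]
    have hFTC : (∫ u in (0:ℝ)..m,
          (((α-1) * (s-u)^(α-1-1) * (-1)) * VnG n u + (s-u)^(α-1) * VngR n u))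
        = (s-m)^(α-1) * VnG n m - (s-0)^(α-1) * VnG n 0 :=
      intervalIntegral.integral_eq_sub_of_hasDeriv_right_of_le hm0.le hFcont hFderiv hderint
    rw [hG0, mul_zero, sub_zero] at hFTC
    have hadd : (∫ u in (0:ℝ)..m,
          (((α-1) * (s-u)^(α-1-1) * (-1)) * VnG n u + (s-u)^(α-1) * VngR n u))
        = (∫ u in (0:ℝ)..m, ((α-1) * (s-u)^(α-1-1) * (-1)) * VnG n u)
          + ∫ u in (0:ℝ)..m, (s-u)^(α-1) * VngR n u := by
      apply intervalIntegral.integral_add _ hint0m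
      have huicc : Set.uIcc (0:ℝ) m = Set.Icc 0 m := uIcc_of_le hm0.le
      exact ContinuousOn.intervalIntegrable (by rw [huicc]; exact hψ'cont)
    -- bound the boundary term
    have hbdry : |(s-m)^(α-1) * VnG n m| ≤ (n:ℝ)^(-α)/8 := by
      rw [hsm, hkey2, abs_mul, abs_of_nonneg (Real.rpow_nonneg hn0.le _),
        abs_of_nonneg (VnG_nonneg n m), ← hkey3]
      exact mul_le_mul_of_nonneg_left (VnG_le n hn m) (Real.rpow_nonneg hn0.le _)
    -- bound the integral of the derivative term
    have hder_bound : |∫ u in (0:ℝ)..m, ((α-1) * (s-u)^(α-1-1) * (-1)) * VnG n u|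
        ≤ (n:ℝ)^(-α)/8 := by
      have hgint : IntervalIntegrable (fun u : ℝ => (1-α) * (s-u)^(α-1-1) * (1/(8*n)))
          volume 0 m := by
        apply ContinuousOn.intervalIntegrable
        rw [uIcc_of_le hm0.le]
        apply ContinuousOn.mul _ continuousOn_const
        apply ContinuousOn.mul continuousOn_const
        apply ContinuousOn.rpow_const ((continuous_const.sub continuous_id).continuousOn)
        intro x hx
        exact Or.inl (ne_of_gt (hpos x hx))
      have hptw : ∀ᵐ t ∂(volume.restrict (Set.uIoc 0 m)),
          ‖((α-1) * (s-t)^(α-1-1) * (-1)) * VnG n t‖ ≤ (1-α) * (s-t)^(α-1-1) * (1/(8*n)) := by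
        rw [ae_restrict_iff' measurableSet_uIoc]
        apply Eventually.of_forall
        intro u hu
        rw [uIoc_of_le hm0.le] at hu
        have hsu : 0 < s - u := hpos u ⟨hu.1.le, hu.2⟩
        have h1 : 0 ≤ (s-u)^(α-1-1) := Real.rpow_nonneg hsu.le _
        rw [norm_mul, norm_mul, norm_mul]
        simp only [Real.norm_eq_abs, abs_neg, abs_one, mul_one, abs_of_nonneg h1]
        rw [abs_of_nonneg (VnG_nonneg n u), abs_of_nonpos (by linarith : α - 1 ≤ 0)]
        rw [neg_sub]
        exact mul_le_mul_of_nonneg_left (VnG_le n hn u)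
          (mul_nonneg (by linarith) h1)
      have := intervalIntegral.norm_integral_le_abs_of_norm_le hptw hgint
      rw [Real.norm_eq_abs] at this
      apply this.trans
      -- compute the comparison integral
      have hcomp : (∫ u in (0:ℝ)..m, (1-α) * (s-u)^(α-1-1) * (1/(8*n)))
          = (1-α) * (1/(8*n)) * ∫ u in (0:ℝ)..m, (s-u)^(α-1-1) := by
        rw [← intervalIntegral.integral_const_mul]
        apply intervalIntegral.integral_congr
        intro x _
        ring
      have hval : (∫ u in (0:ℝ)..m, (s-u)^(α-1-1)) = ∫ x in (s-m)..(s-0), x^(α-1-1) :=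
        intervalIntegral.integral_comp_sub_left (fun x => x^(α-1-1)) s
      have hrpow : (∫ x in (s-m)..(s-0), x^(α-1-1))
          = ((s-0)^(α-1-1+1) - (s-m)^(α-1-1+1))/(α-1-1+1) := by
        apply integral_rpow
        right
        refine ⟨by intro h; rw [sub_eq_iff_eq_add] at h; norm_num at h; linarith, ?_⟩
        intro hmem
        rcases Set.mem_uIcc.mp hmem with ⟨h1, _⟩ | ⟨h1, _⟩
        · rw [hsm] at h1; linarith
        · rw [sub_zero] at h1; linarith
      have hsimp : α - 1 - 1 + 1 = α - 1 := by ring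
      rw [hcomp, hval, hrpow, hsimp, sub_zero, hsm, hkey2]
      have hs1' : 0 ≤ s^(α-1) := Real.rpow_nonneg hs0.le _
      have hne : α - 1 ≠ 0 := by intro h; rw [sub_eq_zero] at h; linarith
      have hYX : s^(α-1) ≤ (n:ℝ)^(1-α) := by
        rw [← hkey2]
        exact Real.rpow_le_rpow_of_nonpos hinv (le_of_lt hcase) (by linarith)
      have heq : (1-α) * (1/(8*(n:ℝ))) * ((s^(α-1) - (n:ℝ)^(1-α))/(α-1))
          = ((n:ℝ)^(1-α) - s^(α-1)) * (1/(8*(n:ℝ))) := by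
        field_simp
        ring
      rw [heq, abs_of_nonneg (mul_nonneg (by linarith) (by positivity))]
      calc ((n:ℝ)^(1-α) - s^(α-1)) * (1/(8*(n:ℝ)))
          ≤ (n:ℝ)^(1-α) * (1/(8*(n:ℝ))) :=
            mul_le_mul_of_nonneg_right (by linarith) (by positivity)
        _ = (n:ℝ)^(-α)/8 := hkey3
    -- assemble
    rw [hsplit]
    have h1 : |∫ u in (0:ℝ)..m, (s-u)^(α-1) * VngR n u| ≤ (n:ℝ)^(-α)/8 + (n:ℝ)^(-α)/8 := by
      have hrepr : (∫ u in (0:ℝ)..m, (s-u)^(α-1) * VngR n u)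
          = (s-m)^(α-1) * VnG n m
            - ∫ u in (0:ℝ)..m, ((α-1) * (s-u)^(α-1-1) * (-1)) * VnG n u := by
        rw [← hFTC, hadd]; ring
      rw [hrepr, sub_eq_add_neg]
      apply (abs_add_le _ _).trans
      rw [abs_neg]
      exact add_le_add hbdry hder_bound
    have h2 := tail_bound m hm0.le hms
    rw [hsm, hkey1] at h2
    apply (abs_add_le _ _).trans
    calc |∫ u in (0:ℝ)..m, (s-u)^(α-1) * VngR n u| + |∫ u in m..s, (s-u)^(α-1) * VngR n u|
        ≤ ((n:ℝ)^(-α)/8 + (n:ℝ)^(-α)/8) + (n:ℝ)^(-α)/(2*α) := add_le_add h1 h2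
      _ = (1/(2*α) + 1/4) * (n:ℝ)^(-α) := by
          field_simp
          ring

lemma abs_ceil_sub (x : ℝ) : |(⌈x⌉:ℝ) - x - 1/2| ≤ 1/2 := by
  have h1 := Int.le_ceil x
  have h2 := Int.ceil_lt_add_one x
  rw [abs_le]; constructor <;> linarith

/-- With `f_n(s) = ∫₀ˢ (s-u)^{α-1}(⌈nu⌉ - nu - 1/2) du` and
`V_n(t) = 2 ∫₀ᵗ f_n(s)(⌈ns⌉ - ns - 1/2) ds`, there is a constant `M_α`
with `|V_n(t)| ≤ M_α n^{-α}` for all `n ≥ 1`, `t ∈ [0,1]`; hence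
`V_n(t) → 0` as `n → ∞`. -/
theorem Vn_bound_and_tendsto_zero (α : ℝ) (hα : α ∈ Set.Ioo (0 : ℝ) 1) :
    ∃ M : ℝ, (∀ n : ℕ, 1 ≤ n → ∀ t ∈ Set.Icc (0 : ℝ) 1,
        |2 * ∫ s in (0 : ℝ)..t,
            (∫ u in (0 : ℝ)..s, (s - u) ^ (α - 1) * ((⌈(n : ℝ) * u⌉ : ℝ) - n * u - 1 / 2))
              * ((⌈(n : ℝ) * s⌉ : ℝ) - n * s - 1 / 2)|
          ≤ M * (n : ℝ) ^ (-α)) ∧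
      ∀ t ∈ Set.Icc (0 : ℝ) 1,
        Tendsto (fun n : ℕ =>
          2 * ∫ s in (0 : ℝ)..t,
            (∫ u in (0 : ℝ)..s, (s - u) ^ (α - 1) * ((⌈(n : ℝ) * u⌉ : ℝ) - n * u - 1 / 2))
              * ((⌈(n : ℝ) * s⌉ : ℝ) - n * s - 1 / 2)) atTop (nhds 0) := by
  obtain ⟨hα0, hα1⟩ := hα
  have key : ∀ n : ℕ, 1 ≤ n → ∀ t ∈ Set.Icc (0 : ℝ) 1,
      |2 * ∫ s in (0 : ℝ)..t,
          (∫ u in (0 : ℝ)..s, (s - u) ^ (α - 1) * ((⌈(n : ℝ) * u⌉ : ℝ) - n * u - 1 / 2))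
            * ((⌈(n : ℝ) * s⌉ : ℝ) - n * s - 1 / 2)|
        ≤ (1/(2*α) + 1/4) * (n : ℝ) ^ (-α) := by
    intro n hn t ht
    have hnpow : (0:ℝ) < (n:ℝ)^(-α) := Real.rpow_pos_of_pos (by exact_mod_cast hn) _
    -- replace the inner integrand by VngR
    have hAB : ∀ s : ℝ,
        (∫ u in (0:ℝ)..s, (s-u)^(α-1) * ((⌈(n:ℝ)*u⌉:ℝ) - n*u - 1/2))
          = ∫ u in (0:ℝ)..s, (s-u)^(α-1) * VngR n u := by
      intro s
      apply intervalIntegral.integral_congr_ae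
      filter_upwards [g_ae_eq n hn] with u hu _
      rw [hu]
    have hrw : (∫ s in (0:ℝ)..t,
          (∫ u in (0:ℝ)..s, (s-u)^(α-1) * ((⌈(n:ℝ)*u⌉:ℝ) - n*u - 1/2))
            * ((⌈(n:ℝ)*s⌉:ℝ) - n*s - 1/2))
        = ∫ s in (0:ℝ)..t,
          (∫ u in (0:ℝ)..s, (s-u)^(α-1) * VngR n u) * ((⌈(n:ℝ)*s⌉:ℝ) - n*s - 1/2) := by
      apply intervalIntegral.integral_congr
      intro s _
      dsimp only
      rw [hAB s]
    rw [hrw, abs_mul, abs_two]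
    have hbd : ∀ s ∈ Set.uIoc (0:ℝ) t,
        ‖(∫ u in (0:ℝ)..s, (s-u)^(α-1) * VngR n u) * ((⌈(n:ℝ)*s⌉:ℝ) - n*s - 1/2)‖
          ≤ ((1/(2*α) + 1/4) * (n:ℝ)^(-α)) * (1/2) := by
      intro s hs
      rw [uIoc_of_le ht.1] at hs
      have hs0 : 0 < s := hs.1
      have hs1 : s ≤ 1 := le_trans hs.2 ht.2
      rw [norm_mul, Real.norm_eq_abs, Real.norm_eq_abs]
      exact mul_le_mul (fn_bound ⟨hα0, hα1⟩ hn hs0 hs1) (abs_ceil_sub _)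
        (abs_nonneg _) (by positivity)
    have := intervalIntegral.norm_integral_le_of_norm_le_const hbd
    rw [Real.norm_eq_abs] at this
    calc 2 * |∫ s in (0:ℝ)..t,
          (∫ u in (0:ℝ)..s, (s-u)^(α-1) * VngR n u) * ((⌈(n:ℝ)*s⌉:ℝ) - n*s - 1/2)|
        ≤ 2 * ((((1/(2*α) + 1/4) * (n:ℝ)^(-α)) * (1/2)) * |t - 0|) := by linarith
      _ ≤ 2 * ((((1/(2*α) + 1/4) * (n:ℝ)^(-α)) * (1/2)) * 1) := by
          have habs : |t - 0| ≤ 1 := by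
            rw [sub_zero, abs_of_nonneg ht.1]; exact ht.2
          have hM : (0:ℝ) ≤ ((1/(2*α) + 1/4) * (n:ℝ)^(-α)) * (1/2) := by positivity
          nlinarith
      _ = (1/(2*α) + 1/4) * (n:ℝ)^(-α) := by ring
  refine ⟨1/(2*α) + 1/4, key, ?_⟩
  intro t ht
  have hg : Tendsto (fun n : ℕ => (1/(2*α) + 1/4) * ((n:ℝ))^(-α)) atTop (nhds 0) := by
    have h1 : Tendsto (fun n : ℕ => ((n:ℝ))^(-α)) atTop (nhds 0) :=
      (tendsto_rpow_neg_atTop hα0).comp tendsto_natCast_atTop_atTop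
    have := h1.const_mul (1/(2*α) + 1/4)
    simpa using this
  apply squeeze_zero_norm' ?_ hg
  filter_upwards [eventually_ge_atTop 1] with n hn
  rw [Real.norm_eq_abs]
  exact key n hn t ht
end

section
/- Let 0 < α < 1. There exists a constant C_α depending only on α such that for all n ≥ 1 and 0 ≤ s ≤ t ≤ 1, |∫ₛᵗ n^α f_n(s,u)(⌈nu⌉ - nu - 1/2) du| ≤ C_α (t - s), where f_n(s,u) = ∫ₛᵘ (u-r)^{α-1}(⌈nr⌉ - nr - 1/2) dr. -/
open MeasureTheory

section RiemannLiouvilleAux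

open Set intervalIntegral

-- continuity of G
lemma Gcont (m : ℝ) : Continuous (fun r : ℝ => Int.fract (m*r) * (1 - Int.fract (m*r)) / (2*m)) := by
  have h : Continuous ((fun y : ℝ => y * (1 - y)) ∘ Int.fract) :=
    ContinuousOn.comp_fract'' (by fun_prop) (by norm_num)
  exact ((h.comp (continuous_const.mul continuous_id)).div_const _)

-- bound on G
lemma Gbound (m : ℝ) (hm : 0 < m) (r : ℝ) :
    |Int.fract (m*r) * (1 - Int.fract (m*r)) / (2*m)| ≤ 1/(8*m) := by
  have h0 := Int.fract_nonneg (m*r)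
  have h1 := (Int.fract_lt_one (m*r)).le
  rw [abs_div, abs_of_pos (by positivity : (0:ℝ) < 2*m),
    abs_of_nonneg (by nlinarith), div_le_div_iff₀ (by positivity) (by positivity)]
  nlinarith [sq_nonneg (2*Int.fract (m*r) - 1), hm]

-- right derivative of G
lemma Gderiv (m : ℝ) (hm : 0 < m) (x : ℝ) :
    HasDerivWithinAt (fun r : ℝ => Int.fract (m*r) * (1 - Int.fract (m*r)) / (2*m))
      (1/2 - Int.fract (m*x)) (Ioi x) x := by
  set k : ℤ := ⌊m*x⌋ with hk
  have hP : HasDerivAt (fun r : ℝ => (m*r - (k:ℝ)) * (1 - (m*r - (k:ℝ))) / (2*m))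
      (1/2 - Int.fract (m*x)) x := by
    have h1 : HasDerivAt (fun r : ℝ => m*r - (k:ℝ)) m x := by
      simpa using ((hasDerivAt_id x).const_mul m).sub_const (k:ℝ)
    have h2 : HasDerivAt (fun r : ℝ => 1 - (m*r - (k:ℝ))) (-m) x := by
      exact h1.const_sub 1
    have h3 := (h1.mul h2).div_const (2*m)
    refine h3.congr_deriv ?_
    have : Int.fract (m*x) = m*x - (k:ℝ) := by rw [hk]; exact (Int.self_sub_floor (m*x)).symm
    rw [this]; field_simp; ring
  have hlt : x < ((k:ℝ)+1)/m := by
    rw [lt_div_iff₀ hm]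
    have := Int.lt_floor_add_one (m*x)
    push_cast; linarith [this, mul_comm x m]
  have hmem : Ioo x (((k:ℝ)+1)/m) ∈ nhdsWithin x (Ioi x) := Ioo_mem_nhdsGT hlt
  refine (hP.hasDerivWithinAt (s := Ioi x)).congr_of_eventuallyEq ?_ ?_
  · filter_upwards [hmem] with r hr
    have hfl : ⌊m*r⌋ = k := by
      rw [Int.floor_eq_iff]
      constructor
      · calc (k:ℝ) ≤ m*x := Int.floor_le _
          _ ≤ m*r := by nlinarith [hr.1]
      · have : r < ((k:ℝ)+1)/m := hr.2
        calc m*r < m*(((k:ℝ)+1)/m) := by nlinarith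
          _ = (k:ℝ)+1 := by field_simp
    rw [Int.fract, hfl]
  · have : Int.fract (m*x) = m*x - (k:ℝ) := by rw [hk]; exact (Int.self_sub_floor (m*x)).symm
    simp only [this]

-- derivative of (u - r)^(α-1)
lemma hderiv (α u x : ℝ) (hxu : x < u) :
    HasDerivAt (fun r : ℝ => (u - r) ^ (α - 1)) ((1-α) * (u - x) ^ (α - 2)) x := by
  have h1 : HasDerivAt (fun r : ℝ => u - r) (-1) x := by
    exact (hasDerivAt_id' x).const_sub u
  have h2 := (Real.hasDerivAt_rpow_const (x := u - x) (p := α - 1)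
    (Or.inl (by linarith : u - x ≠ 0))).comp x h1
  refine h2.congr_deriv ?_
  have : α - 1 - 1 = α - 2 := by ring
  rw [this]; ring

-- integrability of (u - r)^(α-1) on any interval
lemma hInt (α : ℝ) (hα : 0 < α) (u a b : ℝ) :
    IntervalIntegrable (fun r : ℝ => (u - r) ^ (α - 1)) volume a b := by
  have := (intervalIntegrable_rpow' (a := u - a) (b := u - b)
    (r := α - 1) (by linarith)).comp_sub_left u
  simpa using this

-- ∫ (b - r)^(α-1) over a..b = (b-a)^α/α
lemma hIntegral (α : ℝ) (hα : 0 < α) (a b : ℝ) (hab : a ≤ b) :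
    ∫ r in a..b, (b - r) ^ (α - 1) = (b - a) ^ α / α := by
  rw [intervalIntegral.integral_comp_sub_left (fun x => x ^ (α-1)) b]
  rw [integral_rpow (Or.inl (by linarith))]
  have h1 : α - 1 + 1 = α := by ring
  rw [h1, sub_self, Real.zero_rpow (by linarith : α ≠ 0)]
  ring

lemma hmeas_rpow (α u : ℝ) : Measurable (fun r : ℝ => (u - r) ^ (α - 1)) := by
  exact Measurable.pow (measurable_const.sub measurable_id) measurable_const



lemma hgInt (α : ℝ) (hα : 0 < α) (u m : ℝ) (a c : ℝ) :
    IntervalIntegrable (fun r : ℝ => (u - r) ^ (α - 1) * (1/2 - Int.fract (m*r))) volume a c := by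
  apply (hInt α hα u a c).mono_fun
  · apply Measurable.aestronglyMeasurable
    have : Measurable (fun r : ℝ => 1/2 - Int.fract (m*r)) :=
      measurable_const.sub (measurable_fract.comp (measurable_id.const_mul m))
    exact (hmeas_rpow α u).mul this
  · apply Filter.Eventually.of_forall
    intro x
    have h0 := Int.fract_nonneg (m*x)
    have h1 := (Int.fract_lt_one (m*x)).le
    have : |1/2 - Int.fract (m*x)| ≤ 1 := by rw [abs_le]; constructor <;> linarith
    simp only [norm_mul, Real.norm_eq_abs]
    calc |(u - x) ^ (α - 1)| * |1/2 - Int.fract (m*x)| ≤ |(u - x) ^ (α - 1)| * 1 :=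
          mul_le_mul_of_nonneg_left this (abs_nonneg _)
      _ = |(u - x) ^ (α - 1)| := mul_one _

lemma gtilde_bound (m x : ℝ) : |1/2 - Int.fract (m*x)| ≤ 1/2 := by
  have h0 := Int.fract_nonneg (m*x)
  have h1 := (Int.fract_lt_one (m*x)).le
  rw [abs_le]; constructor <;> linarith

lemma inner_bound' (α : ℝ) (hα0 : 0 < α) (hα1 : α < 1) (m : ℝ) (hm : 1 ≤ m)
    (s u : ℝ) (hsu : s ≤ u) :
    |∫ r in s..u, (u - r) ^ (α - 1) * (1/2 - Int.fract (m*r))| ≤ 2 * m ^ (-α) / α := by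
  have hm0 : (0:ℝ) < m := lt_of_lt_of_le one_pos hm
  have hmα : (1/m) ^ α = m ^ (-α) := by
    rw [one_div, Real.inv_rpow hm0.le, ← Real.rpow_neg hm0.le]
  have hmα' : m ^ (-α) ≤ 1 := Real.rpow_le_one_of_one_le_of_nonpos hm (by linarith)
  have hmαpos : (0:ℝ) < m ^ (-α) := Real.rpow_pos_of_pos hm0 _
  -- tail bound: for a ≤ u with u - a ≤ 1/m
  have tail : ∀ a : ℝ, a ≤ u → u - a ≤ 1/m →
      |∫ r in a..u, (u - r) ^ (α - 1) * (1/2 - Int.fract (m*r))| ≤ m ^ (-α) / (2*α) := by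
    intro a hac hlen
    have hb1 : ‖∫ r in a..u, (u - r) ^ (α - 1) * (1/2 - Int.fract (m*r))‖
        ≤ |∫ r in a..u, (u - r) ^ (α - 1) * (1/2)| := by
      apply intervalIntegral.norm_integral_le_abs_of_norm_le
      · filter_upwards [MeasureTheory.ae_restrict_mem measurableSet_uIoc] with r hr
        rw [uIoc_of_le hac] at hr
        have hru : 0 ≤ u - r := by linarith [hr.2]
        have h1 : (0:ℝ) ≤ (u - r) ^ (α - 1) := Real.rpow_nonneg hru _
        rw [norm_mul, Real.norm_eq_abs, Real.norm_eq_abs, abs_of_nonneg h1]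
        exact mul_le_mul_of_nonneg_left (gtilde_bound m r) h1
      · exact (hInt α hα0 u a u).mul_const _
    rw [Real.norm_eq_abs] at hb1
    refine hb1.trans ?_
    rw [intervalIntegral.integral_mul_const, hIntegral α hα0 a u hac]
    have h2 : (u - a) ^ α ≤ (1/m) ^ α :=
      Real.rpow_le_rpow (by linarith) hlen hα0.le
    rw [hmα] at h2
    have h3 : (0:ℝ) ≤ (u - a) ^ α / α * (1/2) :=
      mul_nonneg (div_nonneg (Real.rpow_nonneg (by linarith) α) hα0.le) (by norm_num)
    rw [abs_of_nonneg h3]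
    rw [div_mul_eq_mul_div, div_le_div_iff₀ (by positivity) (by positivity)]
    nlinarith
  rcases le_or_gt (u - s) (1/m) with hcase | hcase
  · -- short interval
    refine (tail s hsu hcase).trans ?_
    rw [div_le_div_iff₀ (by positivity) (by positivity)]
    nlinarith
  · -- long interval: integrate by parts on s..b with b = u - 1/m
    set b : ℝ := u - 1/m with hbdef
    have hsb : s < b := by simp only [hbdef]; linarith
    have hbu : b < u := by
      have h : (0:ℝ) < 1/m := by positivity
      simp only [hbdef]; linarith
    have hub : u - b = 1/m := by simp [hbdef]
    set G : ℝ → ℝ := fun r => Int.fract (m*r) * (1 - Int.fract (m*r)) / (2*m) with hGdef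
    set F : ℝ → ℝ := fun r => (u - r) ^ (α - 1) * G r with hFdef
    -- continuity of r ↦ (u-r)^(α-1) on [s,b]
    have hconth : ContinuousOn (fun r : ℝ => (u - r) ^ (α - 1)) (Icc s b) := by
      apply ContinuousOn.rpow_const
      · fun_prop
      · intro x hx
        left
        have := hx.2
        have : x < u := lt_of_le_of_lt this hbu
        intro hc; rw [sub_eq_zero] at hc; exact absurd hc.symm (ne_of_lt this)
    have hconth' : ContinuousOn (fun r : ℝ => (1-α) * (u - r) ^ (α - 2)) (Icc s b) := by
      apply ContinuousOn.mul continuousOn_const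
      apply ContinuousOn.rpow_const
      · fun_prop
      · intro x hx
        left
        have : x < u := lt_of_le_of_lt hx.2 hbu
        intro hc; rw [sub_eq_zero] at hc; exact absurd hc.symm (ne_of_lt this)
    -- IBP
    have hibp : ∫ r in s..b, ((1-α) * (u - r) ^ (α - 2) * G r
          + (u - r) ^ (α - 1) * (1/2 - Int.fract (m*r))) = F b - F s := by
      apply intervalIntegral.integral_eq_sub_of_hasDeriv_right_of_le hsb.le
      · exact hconth.mul (Gcont m).continuousOn
      · intro x hx
        have hxu : x < u := lt_trans hx.2 hbu
        exact ((hderiv α u x hxu).hasDerivWithinAt).mul (Gderiv m hm0 x)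
      · apply IntervalIntegrable.add
        · exact (hconth'.mul (Gcont m).continuousOn).intervalIntegrable_of_Icc hsb.le
        · exact hgInt α hα0 u m s b
    have hi1 : IntervalIntegrable (fun r : ℝ => (1-α) * (u - r) ^ (α - 2) * G r) volume s b :=
      (hconth'.mul (Gcont m).continuousOn).intervalIntegrable_of_Icc hsb.le
    have hsplit2 : (∫ r in s..b, (u - r) ^ (α - 1) * (1/2 - Int.fract (m*r)))
        = F b - F s - ∫ r in s..b, (1-α) * (u - r) ^ (α - 2) * G r := by
      rw [← hibp, intervalIntegral.integral_add hi1 (hgInt α hα0 u m s b)]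
      ring
    -- compute ∫ (1-α)(u-r)^(α-2) over s..b
    have hcomp : ∫ r in s..b, (1-α) * (u - r) ^ (α - 2)
        = (u - b) ^ (α - 1) - (u - s) ^ (α - 1) := by
      apply intervalIntegral.integral_eq_sub_of_hasDerivAt
        (f := fun r : ℝ => (u - r) ^ (α - 1))
        (f' := fun r : ℝ => (1-α) * (u - r) ^ (α - 2))
      · intro x hx
        rw [uIcc_of_le hsb.le] at hx
        exact hderiv α u x (lt_of_le_of_lt hx.2 hbu)
      · exact hconth'.intervalIntegrable_of_Icc hsb.le
    -- bound |∫ h' G|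
    have hG8 : ∀ r, |G r| ≤ 1/(8*m) := Gbound m hm0
    have hb2 : |∫ r in s..b, (1-α) * (u - r) ^ (α - 2) * G r|
        ≤ |∫ r in s..b, (1-α) * (u - r) ^ (α - 2) * (1/(8*m))| := by
      have := intervalIntegral.norm_integral_le_abs_of_norm_le
        (μ := volume) (f := fun r => (1-α) * (u - r) ^ (α - 2) * G r)
        (g := fun r => (1-α) * (u - r) ^ (α - 2) * (1/(8*m))) (a := s) (b := b) ?_ ?_
      · simpa using this
      · filter_upwards [MeasureTheory.ae_restrict_mem measurableSet_uIoc] with r hr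
        rw [uIoc_of_le hsb.le] at hr
        have hru : 0 ≤ u - r := by linarith [hr.2, hbu]
        have h1 : (0:ℝ) ≤ (1-α) * (u - r) ^ (α - 2) := by
          apply mul_nonneg (by linarith) (Real.rpow_nonneg hru _)
        rw [norm_mul, Real.norm_eq_abs, Real.norm_eq_abs, abs_of_nonneg h1]
        exact mul_le_mul_of_nonneg_left (hG8 r) h1
      · exact (hconth'.mul continuousOn_const).intervalIntegrable_of_Icc hsb.le
    have hval2 : (∫ r in s..b, (1-α) * (u - r) ^ (α - 2) * (1/(8*m)))
        = ((u - b) ^ (α - 1) - (u - s) ^ (α - 1)) * (1/(8*m)) := by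
      rw [intervalIntegral.integral_mul_const, hcomp]
    -- rpow facts
    have hubα : (u - b) ^ (α - 1) = m ^ (1 - α) := by
      rw [hub, one_div, Real.inv_rpow hm0.le, ← Real.rpow_neg hm0.le]
      norm_num
    have hpow1 : m ^ (1-α) * (1/(8*m)) = m ^ (-α) / 8 := by
      rw [show (1-α : ℝ) = 1 + -α by ring, Real.rpow_add hm0, Real.rpow_one]
      field_simp
    have hus : (u - s) ^ (α - 1) ≤ m ^ (1 - α) := by
      rw [← hubα, hub]
      exact Real.rpow_le_rpow_of_nonpos (by positivity) (by linarith) (by linarith)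
    have husnn : (0:ℝ) ≤ (u - s) ^ (α - 1) := Real.rpow_nonneg (by linarith) _
    have hG8 : ∀ r, |G r| ≤ 1/(8*m) := Gbound m hm0
    have hFb : |F b| ≤ m ^ (-α) / 8 := by
      have h1 : |F b| = m ^ (1-α) * |G b| := by
        rw [hFdef]; simp only
        rw [abs_mul, hubα, abs_of_nonneg (Real.rpow_nonneg hm0.le _)]
      rw [h1, ← hpow1]
      exact mul_le_mul_of_nonneg_left (hG8 b) (Real.rpow_nonneg hm0.le _)
    have hFs : |F s| ≤ m ^ (-α) / 8 := by
      have h1 : |F s| ≤ m ^ (1-α) * |G s| := by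
        rw [hFdef]; simp only
        rw [abs_mul]
        apply mul_le_mul_of_nonneg_right _ (abs_nonneg _)
        rw [abs_of_nonneg husnn]; exact hus
      refine h1.trans ?_
      rw [← hpow1]
      exact mul_le_mul_of_nonneg_left (hG8 s) (Real.rpow_nonneg hm0.le _)
    have hb3 : |∫ r in s..b, (1-α) * (u - r) ^ (α - 2) * G r| ≤ m ^ (-α) / 8 := by
      refine hb2.trans ?_
      rw [hval2]
      have hdiff : (0:ℝ) ≤ (u - b) ^ (α - 1) - (u - s) ^ (α - 1) := by
        rw [hubα]; linarith
      rw [abs_of_nonneg (mul_nonneg hdiff (by positivity))]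
      rw [← hpow1]
      apply mul_le_mul_of_nonneg_right _ (by positivity)
      rw [hubα]; linarith
    have htb : |∫ r in b..u, (u - r) ^ (α - 1) * (1/2 - Int.fract (m*r))| ≤ m ^ (-α) / (2*α) :=
      tail b hbu.le (le_of_eq hub)
    have hsum : (∫ r in s..u, (u - r) ^ (α - 1) * (1/2 - Int.fract (m*r)))
        = (∫ r in s..b, (u - r) ^ (α - 1) * (1/2 - Int.fract (m*r)))
          + ∫ r in b..u, (u - r) ^ (α - 1) * (1/2 - Int.fract (m*r)) :=
      (intervalIntegral.integral_add_adjacent_intervals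
        (hgInt α hα0 u m s b) (hgInt α hα0 u m b u)).symm
    have hA : |∫ r in s..b, (u - r) ^ (α - 1) * (1/2 - Int.fract (m*r))|
        ≤ 3 * (m ^ (-α) / 8) := by
      rw [hsplit2]
      have e1 : |F b - F s - ∫ r in s..b, (1-α) * (u - r) ^ (α - 2) * G r|
          ≤ |F b - F s| + |∫ r in s..b, (1-α) * (u - r) ^ (α - 2) * G r| := abs_sub _ _
      have e2 : |F b - F s| ≤ |F b| + |F s| := abs_sub _ _
      linarith
    have hfin : 3 * (m ^ (-α) / 8) + m ^ (-α) / (2*α) ≤ 2 * m ^ (-α) / α := by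
      have e3 : 3 * (m ^ (-α) / 8) + m ^ (-α) / (2*α)
          = (3 * α * m ^ (-α) + 4 * m ^ (-α)) / (8*α) := by field_simp; ring
      rw [e3, div_le_div_iff₀ (by positivity) hα0]
      nlinarith [mul_nonneg (mul_nonneg hα0.le hmαpos.le) (by linarith : (0:ℝ) ≤ 1 - α)]
    calc |∫ r in s..u, (u - r) ^ (α - 1) * (1/2 - Int.fract (m*r))|
        ≤ |∫ r in s..b, (u - r) ^ (α - 1) * (1/2 - Int.fract (m*r))|
          + |∫ r in b..u, (u - r) ^ (α - 1) * (1/2 - Int.fract (m*r))| := by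
          rw [hsum]; exact abs_add_le _ _
      _ ≤ 3 * (m ^ (-α) / 8) + m ^ (-α) / (2*α) := add_le_add hA htb
      _ ≤ 2 * m ^ (-α) / α := hfin

-- a.e. the ceiling expression equals the sawtooth
lemma ae_ceil_eq (m : ℝ) (hm : 0 < m) :
    ∀ᵐ r : ℝ, ((⌈m * r⌉ : ℝ) - m * r - 1/2) = (1/2 - Int.fract (m*r)) := by
  have hnull : volume {r : ℝ | Int.fract (m*r) = 0} = 0 := by
    apply Set.Countable.measure_zero
    apply Set.Countable.mono ?_ (Set.countable_range (fun k : ℤ => (k:ℝ)/m))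
    intro r hr
    have h2 : m * r - (⌊m*r⌋:ℝ) = 0 := by
      rw [Int.self_sub_floor]; exact hr
    exact ⟨⌊m*r⌋, by field_simp; linarith⟩
  rw [ae_iff]
  refine measure_mono_null ?_ hnull
  intro r hr
  simp only [mem_setOf_eq] at hr ⊢
  by_contra hfr
  apply hr
  rw [Int.ceil_eq_add_one_sub_fract hfr]
  ring

end RiemannLiouvilleAux

/-- Key deterministic estimate: there is a constant `C_α` such that for all
`n ≥ 1` and `0 ≤ s ≤ t ≤ 1`,
`|∫ₛᵗ n^α f_n(s,u)(⌈nu⌉ - nu - 1/2) du| ≤ C_α (t - s)`, where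
`f_n(s,u) = ∫ₛᵘ (u-r)^{α-1}(⌈nr⌉ - nr - 1/2) dr`. -/
theorem norm_increment_bound (α : ℝ) (hα : α ∈ Set.Ioo (0 : ℝ) 1) :
    ∃ C : ℝ, ∀ n : ℕ, 1 ≤ n → ∀ s t : ℝ, 0 ≤ s → s ≤ t → t ≤ 1 →
      |∫ u in s..t,
          (n : ℝ) ^ α *
            (∫ r in s..u, (u - r) ^ (α - 1) * ((⌈(n : ℝ) * r⌉ : ℝ) - n * r - 1 / 2))
            * ((⌈(n : ℝ) * u⌉ : ℝ) - n * u - 1 / 2)|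
        ≤ C * (t - s) := by
  obtain ⟨hα0, hα1⟩ := hα
  refine ⟨1/α, fun n hn s t hs hst ht => ?_⟩
  have hm : (1:ℝ) ≤ (n:ℝ) := by exact_mod_cast hn
  have hm0 : (0:ℝ) < (n:ℝ) := by linarith
  have key : ∀ u ∈ Set.uIoc s t,
      ‖(n : ℝ) ^ α *
          (∫ r in s..u, (u - r) ^ (α - 1) * ((⌈(n : ℝ) * r⌉ : ℝ) - n * r - 1 / 2))
          * ((⌈(n : ℝ) * u⌉ : ℝ) - n * u - 1 / 2)‖ ≤ 1/α := by
    intro u hu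
    rw [Set.uIoc_of_le hst] at hu
    have hsu : s ≤ u := hu.1.le
    have hin : (∫ r in s..u, (u - r) ^ (α - 1) * ((⌈(n : ℝ) * r⌉ : ℝ) - n * r - 1 / 2))
        = ∫ r in s..u, (u - r) ^ (α - 1) * (1/2 - Int.fract ((n:ℝ)*r)) := by
      apply intervalIntegral.integral_congr_ae
      filter_upwards [ae_ceil_eq (n:ℝ) hm0] with r hr _
      rw [hr]
    have hI := inner_bound' α hα0 hα1 (n:ℝ) hm s u hsu
    rw [hin]
    have hg : |((⌈(n : ℝ) * u⌉ : ℝ) - n * u - 1 / 2)| ≤ 1/2 := by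
      have h1 := Int.le_ceil ((n:ℝ)*u)
      have h2 := Int.ceil_lt_add_one ((n:ℝ)*u)
      rw [abs_le]
      constructor <;> [linarith [h1]; linarith [h2]]
    have hnn : (0:ℝ) ≤ (n:ℝ) ^ α := Real.rpow_nonneg hm0.le _
    have h1 : ((n:ℝ))^α * ((n:ℝ))^(-α) = 1 := by
      rw [← Real.rpow_add hm0]; simp
    calc ‖(n : ℝ) ^ α * (∫ r in s..u, (u - r) ^ (α - 1) * (1/2 - Int.fract ((n:ℝ)*r)))
            * ((⌈(n : ℝ) * u⌉ : ℝ) - n * u - 1 / 2)‖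
        = (n:ℝ) ^ α * |∫ r in s..u, (u - r) ^ (α - 1) * (1/2 - Int.fract ((n:ℝ)*r))|
            * |((⌈(n : ℝ) * u⌉ : ℝ) - n * u - 1 / 2)| := by
          rw [Real.norm_eq_abs, abs_mul, abs_mul, abs_of_nonneg hnn]
      _ ≤ (n:ℝ) ^ α * (2 * (n:ℝ) ^ (-α) / α) * (1/2) := by
          apply mul_le_mul _ hg (abs_nonneg _) (by positivity)
          exact mul_le_mul_of_nonneg_left hI hnn
      _ = 1/α := by
          have e : (n:ℝ)^α * (2 * (n:ℝ)^(-α)/α) * (1/2) = ((n:ℝ)^α * (n:ℝ)^(-α))/α := by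
            ring
          rw [e, h1]
  have h := intervalIntegral.norm_integral_le_of_norm_le_const key
  rw [Real.norm_eq_abs, abs_of_nonneg (by linarith : (0:ℝ) ≤ t - s)] at h
  exact h
end

section
/- Let 0 < α < 1, 0 ≤ s ≤ t ≤ 1, and define g_n(u,s) = n^α ∫₀ˢ (u-r)^{α-1}(⌈nr⌉ - nr - 1/2) dr for u > s. Then there is a constant C depending only on α such that |g_n(u,s)| ≤ C((nu)^{α-1} + (nu - ns)^{α-1}) for all u ∈ (s, 1] with nu, ns ∉ ℕ; consequently ∫ₛᵗ g_n(u,s)(⌈nu⌉ - nu - 1/2) du → 0 as n → ∞. -/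
open MeasureTheory Filter Set Topology

lemma fract_mul_one_sub_le (x : ℝ) : Int.fract x * (1 - Int.fract x) ≤ 1/4 := by
  nlinarith [Int.fract_nonneg x, Int.fract_lt_one x, sq_nonneg (Int.fract x - 1/2)]

lemma key_gn_bound (α : ℝ) (hα : α ∈ Set.Ioo (0:ℝ) 1) (s u : ℝ) (hs : 0 ≤ s)
    (hsu : s < u) (n : ℕ) (hn : 1 ≤ n) :
    |(n : ℝ) ^ α * ∫ r in (0:ℝ)..s, (u - r) ^ (α - 1) * ((⌈(n:ℝ) * r⌉ : ℝ) - n * r - 1/2)|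
      ≤ 1/4 * ((n:ℝ) ^ (α - 1) * (u - s) ^ (α - 1)) := by
  obtain ⟨hα0, hα1⟩ := hα
  have hN0 : (0:ℝ) < (n:ℝ) := by exact_mod_cast hn
  set N : ℝ := (n : ℝ) with hNdef
  have hus : 0 < u - s := sub_pos.2 hsu
  set sd : ℝ → ℝ := fun r => 1/2 - Int.fract (N * r) with hsd
  set H : ℝ → ℝ := fun r => Int.fract (N * r) * (1 - Int.fract (N * r)) / (2 * N) with hHdef
  -- continuity of H
  have Hcont : Continuous H := by
    have h1 : ContinuousOn (fun x : ℝ => x * (1 - x) / (2 * N)) (Set.Icc 0 1) :=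
      ((continuous_id.mul (continuous_const.sub continuous_id)).div_const _).continuousOn
    have h2 := ContinuousOn.comp_fract'' h1 (by norm_num)
    exact h2.comp (continuous_const.mul continuous_id)
  have Hnonneg : ∀ r, 0 ≤ H r := by
    intro r
    have := Int.fract_nonneg (N * r)
    have := Int.fract_lt_one (N * r)
    apply div_nonneg (by nlinarith) (by linarith)
  have Hle : ∀ r, H r ≤ 1 / (8 * N) := by
    intro r
    rw [hHdef]
    have h1 := fract_mul_one_sub_le (N * r)
    rw [div_le_div_iff₀ (by linarith) (by linarith)]
    nlinarith
  have sdabs : ∀ r, |sd r| ≤ 1/2 := by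
    intro r
    have := Int.fract_nonneg (N * r)
    have := Int.fract_lt_one (N * r)
    rw [abs_le]
    constructor <;> simp only [hsd] <;> linarith
  -- right derivative of H
  have Hderiv : ∀ r : ℝ, HasDerivWithinAt H (sd r) (Ici r) r := by
    intro r
    set k : ℤ := ⌊N * r⌋ with hk
    have hk1 : N * r < k + 1 := Int.lt_floor_add_one _
    have hk2 : (k : ℝ) ≤ N * r := Int.floor_le _
    have floor_eq : ∀ y : ℝ, r ≤ y → y < ((k:ℝ)+1)/N → Int.fract (N*y) = N*y - k := by
      intro y h1 h2
      have hy1 : (k:ℝ) ≤ N * y := le_trans hk2 (by nlinarith)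
      have hy2 : N * y < (k:ℝ) + 1 := by rw [lt_div_iff₀ hN0] at h2; linarith [h2]
      have hfl : ⌊N * y⌋ = k := by
        rw [Int.floor_eq_iff]
        exact ⟨hy1, by linarith⟩
      rw [← Int.self_sub_floor, hfl]
    have hP : HasDerivAt (fun y : ℝ => (N * y - k) * (1 - (N * y - k)) / (2 * N))
        ((N * (1 - (N * r - k)) + (N * r - k) * (-N)) / (2 * N)) r := by
      have h1 : HasDerivAt (fun y : ℝ => N * y - k) N r := by
        simpa using ((hasDerivAt_id r).const_mul N).sub_const (k : ℝ)
      have h2 : HasDerivAt (fun y : ℝ => 1 - (N * y - k)) (-N) r := by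
        have h := (hasDerivAt_const r (1:ℝ)).sub h1; rw [zero_sub] at h; exact h
      exact (h1.mul h2).div_const _
    have hval : (N * (1 - (N * r - k)) + (N * r - k) * (-N)) / (2 * N) = sd r := by
      show _ = 1/2 - Int.fract (N * r)
      have hfr : Int.fract (N * r) = N * r - k := by rw [← Int.self_sub_floor]
      rw [hfr]
      field_simp
      ring
    have hmem : Iio (((k:ℝ) + 1) / N) ∈ 𝓝[Ici r] r := by
      apply nhdsWithin_le_nhds
      exact Iio_mem_nhds (by rw [lt_div_iff₀ hN0]; linarith)
    have hEq : H =ᶠ[𝓝[Ici r] r] fun y => (N * y - k) * (1 - (N * y - k)) / (2 * N) := by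
      filter_upwards [hmem, self_mem_nhdsWithin] with y hy1 hy2
      simp only [hHdef]
      rw [floor_eq y hy2 hy1]
    have hre : H r = (N * r - k) * (1 - (N * r - k)) / (2 * N) := by
      simp only [hHdef]
      rw [floor_eq r le_rfl (by rw [lt_div_iff₀ hN0]; linarith)]
    rw [← hval]
    exact hP.hasDerivWithinAt.congr_of_eventuallyEq hEq hre
  -- the smooth factor
  set f : ℝ → ℝ := fun r => (u - r) ^ (α - 1) with hfdef
  set f' : ℝ → ℝ := fun r => (1 - α) * (u - r) ^ (α - 2) with hf'def
  have hfd : ∀ r ∈ Icc 0 s, HasDerivAt f (f' r) r := by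
    intro r hr
    have hur : 0 < u - r := by linarith [hr.2]
    have h1 : HasDerivAt (fun y : ℝ => u - y) (-1) r := by
      have h := (hasDerivAt_const r u).sub (hasDerivAt_id r); rw [zero_sub] at h; exact h
    have h2 := h1.rpow_const (p := α - 1) (Or.inl hur.ne')
    have he : α - 1 - 1 = α - 2 := by ring
    rw [he] at h2
    convert h2 using 1
    simp only [hf'def]
    ring
  have hfc : ContinuousOn f (Icc 0 s) := by
    apply ContinuousOn.rpow_const (continuous_const.sub continuous_id).continuousOn
    intro x hx
    exact Or.inl (by simp; linarith [hx.2] : u - x ≠ 0)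
  have hf'c : ContinuousOn f' (Icc 0 s) := by
    apply ContinuousOn.mul continuousOn_const
    apply ContinuousOn.rpow_const (continuous_const.sub continuous_id).continuousOn
    intro x hx
    exact Or.inl (by simp; linarith [hx.2] : u - x ≠ 0)
  have huIcc : uIcc (0:ℝ) s = Icc 0 s := uIcc_of_le hs
  have hfs_nonneg : 0 ≤ f s := Real.rpow_nonneg hus.le _
  have hf'_nonneg : ∀ r ∈ Icc 0 s, 0 ≤ f' r := fun r hr =>
    mul_nonneg (by linarith) (Real.rpow_nonneg (by linarith [hr.2]) _)
  have hfb : ∀ r ∈ Icc 0 s, f r ≤ f s := by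
    intro r hr
    exact Real.rpow_le_rpow_of_nonpos hus (by linarith [hr.2]) (by linarith)
  have hf_nonneg : ∀ r ∈ Icc 0 s, 0 ≤ f r := fun r hr =>
    Real.rpow_nonneg (by linarith [hr.2]) _
  have sdm : Measurable sd := measurable_const.sub (measurable_id.const_mul N).fract
  have hfsd_int : IntervalIntegrable (fun r => f r * sd r) volume 0 s := by
    rw [intervalIntegrable_iff_integrableOn_Icc_of_le hs]
    apply MeasureTheory.Integrable.mono' (g := fun _ => f s * (1/2))
      (integrable_const _)
    · exact ((hfc.aestronglyMeasurable measurableSet_Icc).mul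
        sdm.aestronglyMeasurable.restrict)
    · filter_upwards [ae_restrict_mem measurableSet_Icc] with r hr
      rw [Real.norm_eq_abs, abs_mul]
      have h1 : |f r| ≤ f s := by
        rw [abs_of_nonneg (hf_nonneg r hr)]; exact hfb r hr
      exact mul_le_mul h1 (sdabs r) (abs_nonneg _) hfs_nonneg
  have hf'_iint : IntervalIntegrable f' volume 0 s := by
    apply ContinuousOn.intervalIntegrable; rwa [huIcc]
  have hf'H_int : IntervalIntegrable (fun r => f' r * H r) volume 0 s := by
    apply ContinuousOn.intervalIntegrable
    rw [huIcc]; exact hf'c.mul Hcont.continuousOn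
  have hH0 : H 0 = 0 := by simp [hHdef]
  -- FTC for the product
  have FTC : ∫ r in (0:ℝ)..s, (f' r * H r + f r * sd r) = f s * H s := by
    have hcont : ContinuousOn (fun r => f r * H r) (Icc 0 s) := hfc.mul Hcont.continuousOn
    have hderiv : ∀ x ∈ Ioo 0 s, HasDerivWithinAt (fun r => f r * H r)
        (f' x * H x + f x * sd x) (Ioi x) x := by
      intro x hx
      exact ((hfd x ⟨hx.1.le, hx.2.le⟩).hasDerivWithinAt.mul
        ((Hderiv x).mono Ioi_subset_Ici_self))
    have hint : IntervalIntegrable (fun r => f' r * H r + f r * sd r) volume 0 s :=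
      hf'H_int.add hfsd_int
    have h := intervalIntegral.integral_eq_sub_of_hasDeriv_right_of_le hs hcont hderiv hint
    rw [h, hH0]
    ring
  have hsplit : ∫ r in (0:ℝ)..s, (f' r * H r + f r * sd r)
      = (∫ r in (0:ℝ)..s, f' r * H r) + ∫ r in (0:ℝ)..s, f r * sd r :=
    intervalIntegral.integral_add hf'H_int hfsd_int
  -- replace ceiling integrand by sd a.e.
  have hae : (∫ r in (0:ℝ)..s, (u - r) ^ (α - 1) * ((⌈N * r⌉ : ℝ) - N * r - 1/2))
      = ∫ r in (0:ℝ)..s, f r * sd r := by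
    apply intervalIntegral.integral_congr_ae
    have hz : volume {r : ℝ | Int.fract (N * r) = 0} = 0 := by
      have hsub : {r : ℝ | Int.fract (N * r) = 0} ⊆ ⋃ k : ℤ, {((k : ℝ) / N)} := by
        intro r hr
        simp only [Set.mem_setOf_eq] at hr
        have h1 : N * r - ⌊N * r⌋ = 0 := by rw [Int.self_sub_floor, hr]
        refine Set.mem_iUnion.2 ⟨⌊N * r⌋, ?_⟩
        simp only [Set.mem_singleton_iff]
        rw [eq_div_iff hN0.ne']
        linarith
      exact measure_mono_null hsub
        ((Set.countable_iUnion fun k => Set.countable_singleton _).measure_zero _)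
    have hne : ∀ᵐ r : ℝ, Int.fract (N * r) ≠ 0 := by
      rw [ae_iff]
      simpa using hz
    filter_upwards [hne] with r hr _
    have hcs := Int.ceil_sub_self_eq hr
    show _ = f r * sd r
    simp only [hfdef, hsd]
    have : ((⌈N * r⌉ : ℝ) - N * r - 1/2) = 1/2 - Int.fract (N * r) := by linarith
    rw [this]
  -- compute the integral of f'
  have hf'int_eq : ∫ r in (0:ℝ)..s, f' r = f s - f 0 := by
    apply intervalIntegral.integral_eq_sub_of_hasDerivAt
    · intro x hx
      rw [huIcc] at hx
      exact hfd x hx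
    · exact hf'_iint
  have hf0_nonneg : 0 ≤ f 0 := hf_nonneg 0 ⟨le_rfl, hs⟩
  -- bound on the f'H integral
  have hb2 : |∫ r in (0:ℝ)..s, f' r * H r| ≤ f s * (1 / (8 * N)) := by
    have h1 : ‖∫ r in (0:ℝ)..s, f' r * H r‖ ≤ |∫ r in (0:ℝ)..s, f' r * (1/(8*N))| := by
      apply intervalIntegral.norm_integral_le_abs_of_norm_le
      · filter_upwards [ae_restrict_mem measurableSet_uIoc] with r hr
        rw [Set.uIoc_of_le hs] at hr
        have hr' : r ∈ Icc 0 s := ⟨hr.1.le, hr.2⟩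
        rw [Real.norm_eq_abs, abs_mul, abs_of_nonneg (hf'_nonneg r hr'),
          abs_of_nonneg (Hnonneg r)]
        exact mul_le_mul_of_nonneg_left (Hle r) (hf'_nonneg r hr')
      · exact hf'_iint.mul_const _
    rw [intervalIntegral.integral_mul_const, hf'int_eq, Real.norm_eq_abs] at h1
    have h2 : |(f s - f 0) * (1/(8*N))| = (f s - f 0) * (1/(8*N)) := by
      apply abs_of_nonneg
      apply mul_nonneg _ (by positivity)
      have := hfb 0 ⟨le_rfl, hs⟩
      linarith
    rw [h2] at h1
    have h3 : (f s - f 0) * (1/(8*N)) ≤ f s * (1/(8*N)) := by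
      apply mul_le_mul_of_nonneg_right (by linarith) (by positivity)
    linarith
  have hb1 : |f s * H s| ≤ f s * (1 / (8 * N)) := by
    rw [abs_mul, abs_of_nonneg hfs_nonneg, abs_of_nonneg (Hnonneg s)]
    exact mul_le_mul_of_nonneg_left (Hle s) hfs_nonneg
  -- assemble
  have main : |∫ r in (0:ℝ)..s, f r * sd r| ≤ f s * (1 / (4 * N)) := by
    have heq : (∫ r in (0:ℝ)..s, f r * sd r)
        = f s * H s - ∫ r in (0:ℝ)..s, f' r * H r := by
      rw [hsplit] at FTC
      linarith
    rw [heq]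
    calc |f s * H s - ∫ r in (0:ℝ)..s, f' r * H r|
        ≤ |f s * H s| + |∫ r in (0:ℝ)..s, f' r * H r| := abs_sub _ _
      _ ≤ f s * (1 / (8 * N)) + f s * (1 / (8 * N)) := add_le_add hb1 hb2
      _ = f s * (1 / (4 * N)) := by field_simp; ring
  rw [hae, abs_mul, abs_of_nonneg (Real.rpow_nonneg hN0.le α)]
  calc N ^ α * |∫ r in (0:ℝ)..s, f r * sd r|
      ≤ N ^ α * (f s * (1 / (4 * N))) :=
        mul_le_mul_of_nonneg_left main (Real.rpow_nonneg hN0.le α)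
    _ = 1/4 * (N ^ (α - 1) * (u - s) ^ (α - 1)) := by
        rw [Real.rpow_sub hN0 α 1, Real.rpow_one]
        simp only [hfdef]
        field_simp

/-- With `g_n(u,s) = n^α ∫₀ˢ (u-r)^{α-1}(⌈nr⌉ - nr - 1/2) dr`, there is a
constant `C` (depending only on `α`) such that
`|g_n(u,s)| ≤ C((nu)^{α-1} + (nu - ns)^{α-1})` whenever `u ∈ (s,1]` and
`nu, ns ∉ ℕ`; consequently `∫ₛᵗ g_n(u,s)(⌈nu⌉ - nu - 1/2) du → 0`. -/
theorem gn_bound_and_integral_tendsto_zero (α : ℝ) (hα : α ∈ Set.Ioo (0 : ℝ) 1)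
    (s t : ℝ) (hs : 0 ≤ s) (hst : s ≤ t) (ht : t ≤ 1) :
    (∃ C : ℝ, ∀ n : ℕ, 1 ≤ n → ∀ u ∈ Set.Ioc s 1,
        (∀ k : ℕ, (n : ℝ) * u ≠ k) → (∀ k : ℕ, (n : ℝ) * s ≠ k) →
        |(n : ℝ) ^ α *
            ∫ r in (0 : ℝ)..s, (u - r) ^ (α - 1) * ((⌈(n : ℝ) * r⌉ : ℝ) - n * r - 1 / 2)|
          ≤ C * (((n : ℝ) * u) ^ (α - 1) + ((n : ℝ) * u - (n : ℝ) * s) ^ (α - 1))) ∧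
    Tendsto (fun n : ℕ =>
        ∫ u in s..t,
          ((n : ℝ) ^ α *
            ∫ r in (0 : ℝ)..s, (u - r) ^ (α - 1) * ((⌈(n : ℝ) * r⌉ : ℝ) - n * r - 1 / 2))
          * ((⌈(n : ℝ) * u⌉ : ℝ) - n * u - 1 / 2))
      atTop (nhds 0) := by
  obtain ⟨hα0, hα1⟩ := hα
  constructor
  · refine ⟨1/4, ?_⟩
    intro n hn u hu _ _
    have h1 := key_gn_bound α ⟨hα0, hα1⟩ s u hs hu.1 n hn
    refine h1.trans ?_
    have e1 : (n:ℝ) * u - (n:ℝ) * s = (n:ℝ) * (u - s) := by ring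
    rw [e1, Real.mul_rpow (n.cast_nonneg) (by linarith [hu.1] : (0:ℝ) ≤ u - s)]
    have h2 : 0 ≤ ((n:ℝ) * u) ^ (α - 1) :=
      Real.rpow_nonneg (mul_nonneg n.cast_nonneg (by linarith [hu.1])) _
    linarith
  · set J := ∫ u in s..t, (u - s) ^ (α - 1) with hJ
    have hJ0 : 0 ≤ J :=
      intervalIntegral.integral_nonneg hst fun u hu => Real.rpow_nonneg (by linarith [hu.1]) _
    apply squeeze_zero_norm (a := fun n : ℕ => (n:ℝ) ^ (α - 1) * (1/8 * J))
    · intro n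
      rcases Nat.eq_zero_or_pos n with h0 | hpos
      · subst h0
        simp [Real.zero_rpow hα0.ne', Real.zero_rpow (by linarith : α - 1 ≠ 0)]
      · have hb : IntervalIntegrable (fun u => 1/8 * (n:ℝ) ^ (α - 1) * ((u - s) ^ (α - 1)))
            volume s t := by
          have h1 := (intervalIntegral.intervalIntegrable_rpow' (show (-1:ℝ) < α - 1 by linarith)
            (a := 0) (b := t - s)).comp_sub_right s
          simp only [zero_add, sub_add_cancel] at h1
          exact h1.const_mul _
        have h2 : ‖∫ u in s..t,
            ((n : ℝ) ^ α *
              ∫ r in (0 : ℝ)..s, (u - r) ^ (α - 1) * ((⌈(n : ℝ) * r⌉ : ℝ) - n * r - 1 / 2))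
            * ((⌈(n : ℝ) * u⌉ : ℝ) - n * u - 1 / 2)‖
            ≤ |∫ u in s..t, 1/8 * (n:ℝ) ^ (α - 1) * ((u - s) ^ (α - 1))| := by
          apply intervalIntegral.norm_integral_le_abs_of_norm_le _ hb
          filter_upwards [ae_restrict_mem measurableSet_uIoc] with u hu
          rw [Set.uIoc_of_le hst] at hu
          have hkey := key_gn_bound α ⟨hα0, hα1⟩ s u hs hu.1 n hpos
          have hceil : |(⌈(n : ℝ) * u⌉ : ℝ) - n * u - 1 / 2| ≤ 1/2 := by
            have ha := Int.le_ceil ((n:ℝ) * u)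
            have hb' := Int.ceil_lt_add_one ((n:ℝ) * u)
            rw [abs_le]
            constructor <;> linarith
          rw [Real.norm_eq_abs, abs_mul]
          have hnn : (0:ℝ) ≤ 1/4 * ((n:ℝ) ^ (α - 1) * (u - s) ^ (α - 1)) := by
            have := Real.rpow_nonneg ((n.cast_nonneg : (0:ℝ) ≤ n)) (α - 1)
            have := Real.rpow_nonneg (by linarith [hu.1] : (0:ℝ) ≤ u - s) (α - 1)
            positivity
          calc |(n : ℝ) ^ α *
              ∫ r in (0 : ℝ)..s, (u - r) ^ (α - 1) * ((⌈(n : ℝ) * r⌉ : ℝ) - n * r - 1 / 2)|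
              * |(⌈(n : ℝ) * u⌉ : ℝ) - n * u - 1 / 2|
              ≤ (1/4 * ((n:ℝ) ^ (α - 1) * (u - s) ^ (α - 1))) * (1/2) :=
                mul_le_mul hkey hceil (abs_nonneg _) hnn
            _ = 1/8 * (n:ℝ) ^ (α - 1) * ((u - s) ^ (α - 1)) := by ring
        rw [intervalIntegral.integral_const_mul] at h2
        have h3 : |1/8 * (n:ℝ) ^ (α - 1) * J| = 1/8 * (n:ℝ) ^ (α - 1) * J := by
          apply abs_of_nonneg
          have := Real.rpow_nonneg ((n.cast_nonneg : (0:ℝ) ≤ n)) (α - 1)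
          positivity
        rw [← hJ, h3] at h2
        calc ‖_‖ ≤ 1/8 * (n:ℝ) ^ (α - 1) * J := h2
          _ = (n:ℝ) ^ (α - 1) * (1/8 * J) := by ring
    · have h1 : Tendsto (fun x : ℝ => x ^ (α - 1)) atTop (𝓝 0) := by
        have := tendsto_rpow_neg_atTop (show (0:ℝ) < 1 - α by linarith)
        simpa [neg_sub] using this
      have h2 := (h1.comp tendsto_natCast_atTop_atTop).mul_const (1/8 * J)
      simpa using h2
end

section
/- Let 0 < α < 1 and 0 ≤ s, t ≤ 1. Then n^α ∫₀ᵗ ∫₀ˢ |u - r|^{α-1} (⌈nr⌉ - nr - 1/2) dr du → 0 as n → ∞. More precisely, this quantity is O(n^{α-1}). -/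
open MeasureTheory Filter intervalIntegral Set

section E
variable {α : ℝ}

lemma ker_ii (hα : 0 < α) (a b : ℝ) :
    IntervalIntegrable (fun x : ℝ => |x| ^ (α - 1)) volume a b := by
  have key : ∀ c : ℝ, 0 ≤ c →
      IntervalIntegrable (fun x : ℝ => |x| ^ (α - 1)) volume 0 c := by
    intro c hc
    have h1 : IntervalIntegrable (fun x : ℝ => x ^ (α - 1)) volume 0 c :=
      intervalIntegrable_rpow' (by linarith)
    rw [intervalIntegrable_iff_integrableOn_Ioc_of_le hc] at h1 ⊢
    exact h1.congr_fun (fun x hx => by rw [abs_of_pos hx.1]) measurableSet_Ioc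
  have key2 : ∀ c : ℝ, IntervalIntegrable (fun x : ℝ => |x| ^ (α - 1)) volume 0 c := by
    intro c
    rcases le_or_gt 0 c with h | h
    · exact key c h
    · have h2 := key (-c) (by linarith)
      rw [IntervalIntegrable.iff_comp_neg] at h2
      simpa using h2
  exact (key2 a).symm.trans (key2 b)

noncomputable def Aint (α : ℝ) (r : ℝ) : ℝ := ∫ x in (0:ℝ)..r, |x| ^ (α - 1)

lemma integral_ker_eq (hα : 0 < α) (a b : ℝ) :
    ∫ x in a..b, |x| ^ (α - 1) = Aint α b - Aint α a := by
  have h := integral_add_adjacent_intervals (ker_ii hα 0 a) (ker_ii hα a b)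
  unfold Aint; linarith [h]

lemma Aint_mono (hα : 0 < α) : Monotone (Aint α) := by
  intro x y hxy
  have h2 : 0 ≤ ∫ u in x..y, |u| ^ (α - 1) :=
    intervalIntegral.integral_nonneg hxy fun u _ => Real.rpow_nonneg (abs_nonneg u) _
  rw [integral_ker_eq hα] at h2
  linarith

lemma Aint_neg (r : ℝ) : Aint α (-r) = - Aint α r := by
  have h := intervalIntegral.integral_comp_neg (a := (0:ℝ)) (b := r)
    (fun x : ℝ => |x| ^ (α - 1))
  simp only [abs_neg, neg_zero] at h
  rw [Aint, Aint, h]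
  exact intervalIntegral.integral_symm _ _

lemma Aint_one (hα : 0 < α) : Aint α 1 = 1 / α := by
  have h1 : Aint α 1 = ∫ x in (0:ℝ)..1, x ^ (α - 1) := by
    refine intervalIntegral.integral_congr fun x hx => ?_
    rw [uIcc_of_le (by norm_num : (0:ℝ) ≤ 1)] at hx
    rcases eq_or_lt_of_le hx.1 with h | h
    · rw [← h]; simp
    · rw [abs_of_pos h]
  rw [h1, integral_rpow (Or.inl (by linarith))]
  rw [sub_add_cancel, Real.one_rpow, Real.zero_rpow (by linarith)]
  ring

lemma Aint_bound (hα : 0 < α) {x : ℝ} (hx : x ∈ Icc (-1:ℝ) 1) : |Aint α x| ≤ 1 / α := by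
  have h1 : Aint α x ≤ Aint α 1 := Aint_mono hα hx.2
  have h2 : Aint α (-1) ≤ Aint α x := Aint_mono hα hx.1
  rw [Aint_neg, Aint_one hα] at h2
  rw [Aint_one hα] at h1
  rw [abs_le]; exact ⟨h2, h1⟩

end E


namespace DIAux

noncomputable def ψ (c : ℝ) (r : ℝ) : ℝ := ((⌈c * r⌉ : ℤ) : ℝ) - c * r - 1/2

lemma ψ_abs_le (c r : ℝ) : |ψ c r| ≤ 1/2 := by
  have h1 := Int.le_ceil (c * r)
  have h2 := Int.ceil_lt_add_one (c * r)
  rw [abs_le]; unfold ψ; push_cast at h1 h2 ⊢; constructor <;> linarith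

lemma ψ_measurable (c : ℝ) : Measurable (ψ c) := by
  have h1 : Measurable fun r : ℝ => c * r := measurable_const.mul measurable_id
  exact ((measurable_from_top.comp h1.ceil).sub h1).sub measurable_const

lemma ψ_ii (c a b : ℝ) : IntervalIntegrable (ψ c) volume a b := by
  rw [intervalIntegrable_iff]
  refine Integrable.mono' (integrableOn_const (μ := volume) (s := Set.uIoc a b) (C := (1/2:ℝ)) measure_Ioc_lt_top.ne)
    (ψ_measurable c).aestronglyMeasurable ?_
  exact Filter.Eventually.of_forall fun x => by simpa using ψ_abs_le c x

lemma ψ_period (n : ℕ) (hn : 1 ≤ n) (k : ℕ) :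
    ∫ r in ((k:ℝ)/n)..(((k:ℝ)+1)/n), ψ (n:ℝ) r = 0 := by
  have hn0 : (0:ℝ) < n := by exact_mod_cast hn
  have hlt : (k:ℝ)/n < ((k:ℝ)+1)/n := by
    apply div_lt_div_of_pos_right (by linarith) hn0
  have hcong : ∀ r ∈ Set.uIoc ((k:ℝ)/n) (((k:ℝ)+1)/n), ψ (n:ℝ) r = ((k:ℝ) + 1/2) - n * r := by
    intro r hr
    rw [uIoc_of_le hlt.le] at hr
    have h1 : (k:ℝ) < n * r := by
      have := hr.1; rw [div_lt_iff₀ hn0] at this; linarith [this]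
    have h2 : (n:ℝ) * r ≤ (k:ℝ) + 1 := by
      have := hr.2; rw [le_div_iff₀ hn0] at this; linarith [this]
    have hceil : ⌈(n:ℝ) * r⌉ = (k:ℤ) + 1 := by
      rw [Int.ceil_eq_iff]; push_cast; constructor <;> linarith
    unfold ψ; rw [hceil]; push_cast; ring
  rw [intervalIntegral.integral_congr_ae (Filter.Eventually.of_forall hcong)]
  have heq : (fun r : ℝ => ((k:ℝ) + 1/2) - n * r)
      = fun r : ℝ => ((k:ℝ) + 1/2) + (-(n:ℝ)) * r := by funext r; ring
  rw [heq, intervalIntegral.integral_add (intervalIntegrable_const)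
      ((intervalIntegral.intervalIntegrable_id).const_mul _),
    intervalIntegral.integral_const, intervalIntegral.integral_const_mul, integral_id]
  have hne : (n:ℝ) ≠ 0 := ne_of_gt hn0
  field_simp
  linear_combination (2*(k:ℝ)+1) * mul_inv_cancel₀ hne

lemma mono_est {h : ℝ → ℝ} (hmono : Monotone h) {M : ℝ}
    (hM : ∀ x ∈ Icc (-1:ℝ) 1, |h x| ≤ M) {s : ℝ} (hs : s ∈ Icc (0:ℝ) 1)
    (n : ℕ) (hn : 1 ≤ n) :
    |∫ r in (0:ℝ)..s, ψ (n:ℝ) r * h r| ≤ 2 * M / n := by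
  have hn0 : (0:ℝ) < n := by exact_mod_cast hn
  have hM0 : 0 ≤ M := le_trans (abs_nonneg _) (hM 0 (by norm_num))
  set m : ℕ := (⌊(n:ℝ) * s⌋).toNat with hm
  have hns : (0:ℝ) ≤ (n:ℝ) * s := mul_nonneg hn0.le hs.1
  have hfl : (0:ℤ) ≤ ⌊(n:ℝ) * s⌋ := Int.floor_nonneg.mpr hns
  have hcast : ((m:ℕ):ℝ) = ((⌊(n:ℝ) * s⌋ : ℤ) : ℝ) := by
    rw [hm]
    exact_mod_cast congrArg (fun z : ℤ => (z : ℝ)) (Int.toNat_of_nonneg hfl)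
  have hm1 : ((m:ℕ):ℝ) ≤ (n:ℝ) * s := by rw [hcast]; exact Int.floor_le _
  have hm2 : (n:ℝ) * s < (m:ℝ) + 1 := by rw [hcast]; exact Int.lt_floor_add_one _
  have hms : (m:ℝ)/n ≤ s := by rw [div_le_iff₀ hn0]; linarith [hm1]
  have hms0 : (0:ℝ) ≤ (m:ℝ)/n := by positivity
  have hsm : s - (m:ℝ)/n ≤ 1/n := by
    rw [sub_le_iff_le_add, ← add_div, le_div_iff₀ hn0]; linarith [hm2]
  -- integrability of ψ * (monotone function)
  have hint : ∀ (g : ℝ → ℝ), Monotone g → ∀ a b : ℝ,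
      IntervalIntegrable (fun r => ψ (n:ℝ) r * g r) volume a b := by
    intro g hg a b
    rw [intervalIntegrable_iff]
    exact Integrable.bdd_mul (intervalIntegrable_iff.mp hg.intervalIntegrable)
      (ψ_measurable _).aestronglyMeasurable
      (c := 1/2) (Filter.Eventually.of_forall fun x => by simpa [Real.norm_eq_abs] using ψ_abs_le (n:ℝ) x)
  -- per-period bound
  have hper : ∀ k : ℕ, |∫ r in ((k:ℝ)/n)..(((k:ℝ)+1)/n), ψ (n:ℝ) r * h r|
      ≤ (h (((k:ℝ)+1)/n) - h ((k:ℝ)/n)) * (1/(2*n)) := by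
    intro k
    have hab : (k:ℝ)/n ≤ ((k:ℝ)+1)/n := by
      rw [div_le_div_iff₀ hn0 hn0]; nlinarith [hn0.le]
    have hba : ((k:ℝ)+1)/n - (k:ℝ)/n = 1/n := by field_simp; ring
    have split : (fun r => ψ (n:ℝ) r * h r)
        = fun r => ψ (n:ℝ) r * (h r - h ((k:ℝ)/n)) + h ((k:ℝ)/n) * ψ (n:ℝ) r := by
      funext r; ring
    rw [split, intervalIntegral.integral_add
        (hint _ (fun x y hxy => sub_le_sub_right (hmono hxy) _) _ _) ((ψ_ii _ _ _).const_mul _),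
      intervalIntegral.integral_const_mul, ψ_period n hn k, mul_zero, add_zero]
    have key : |∫ r in ((k:ℝ)/n)..(((k:ℝ)+1)/n), ψ (n:ℝ) r * (h r - h ((k:ℝ)/n))|
        ≤ ((1/2) * (h (((k:ℝ)+1)/n) - h ((k:ℝ)/n))) * |((k:ℝ)+1)/n - (k:ℝ)/n| := by
      rw [← Real.norm_eq_abs]
      refine intervalIntegral.norm_integral_le_of_norm_le_const fun x hx => ?_
      rw [uIoc_of_le hab] at hx
      have e2 : 0 ≤ h x - h ((k:ℝ)/n) := sub_nonneg.mpr (hmono hx.1.le)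
      have e3 : h x - h ((k:ℝ)/n) ≤ h (((k:ℝ)+1)/n) - h ((k:ℝ)/n) := by
        have := hmono hx.2; linarith
      rw [Real.norm_eq_abs, abs_mul]
      exact mul_le_mul (ψ_abs_le _ _) (by rw [abs_of_nonneg e2]; exact e3)
        (abs_nonneg _) (by norm_num)
    rw [hba] at key
    calc _ ≤ ((1/2) * (h (((k:ℝ)+1)/n) - h ((k:ℝ)/n))) * |1/(n:ℝ)| := key
      _ = (h (((k:ℝ)+1)/n) - h ((k:ℝ)/n)) * (1/(2*n)) := by
          rw [abs_of_nonneg (by positivity : (0:ℝ) ≤ 1/(n:ℝ))]; ring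
  -- sum over the m full periods
  have hsum : ∫ r in (0:ℝ)..((m:ℝ)/n), ψ (n:ℝ) r * h r
      = ∑ k ∈ Finset.range m, ∫ r in ((k:ℝ)/n)..(((k:ℝ)+1)/n), ψ (n:ℝ) r * h r := by
    have := intervalIntegral.sum_integral_adjacent_intervals
      (a := fun k : ℕ => (k:ℝ)/n) (n := m)
      (f := fun r => ψ (n:ℝ) r * h r) (fun k _ => hint _ hmono _ _)
    push_cast at this
    norm_num at this
    exact this.symm
  have hmain : |∫ r in (0:ℝ)..((m:ℝ)/n), ψ (n:ℝ) r * h r| ≤ 2*M * (1/(2*n)) := by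
    rw [hsum]
    calc |∑ k ∈ Finset.range m, ∫ r in ((k:ℝ)/n)..(((k:ℝ)+1)/n), ψ (n:ℝ) r * h r|
        ≤ ∑ k ∈ Finset.range m,
            |∫ r in ((k:ℝ)/n)..(((k:ℝ)+1)/n), ψ (n:ℝ) r * h r| :=
          Finset.abs_sum_le_sum_abs _ _
      _ ≤ ∑ k ∈ Finset.range m, (h (((k:ℝ)+1)/n) - h ((k:ℝ)/n)) * (1/(2*n)) :=
          Finset.sum_le_sum fun k _ => hper k
      _ = (∑ k ∈ Finset.range m, (h (((k:ℝ)+1)/n) - h ((k:ℝ)/n))) * (1/(2*n)) :=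
          (Finset.sum_mul _ _ _).symm
      _ = (h ((m:ℝ)/n) - h ((0:ℝ)/n)) * (1/(2*n)) := by
          rw [show (∑ k ∈ Finset.range m, (h (((k:ℝ)+1)/n) - h ((k:ℝ)/n)))
              = ∑ k ∈ Finset.range m,
                ((fun j : ℕ => h ((j:ℝ)/n)) (k+1) - (fun j : ℕ => h ((j:ℝ)/n)) k) by
              refine Finset.sum_congr rfl fun k _ => ?_; push_cast; ring_nf,
            Finset.sum_range_sub (fun j : ℕ => h ((j:ℝ)/n))]
          norm_num
      _ ≤ 2*M * (1/(2*n)) := by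
          have b1 : |h ((m:ℝ)/n)| ≤ M := hM _ ⟨by linarith, by linarith [hs.2]⟩
          have b2 : |h ((0:ℝ)/n)| ≤ M := hM _ (by norm_num)
          rw [abs_le] at b1 b2
          have : h ((m:ℝ)/n) - h ((0:ℝ)/n) ≤ 2*M := by linarith [b1.2, b2.1]
          apply mul_le_mul_of_nonneg_right this (by positivity)
  -- tail
  have htail : |∫ r in ((m:ℝ)/n)..s, ψ (n:ℝ) r * h r| ≤ (1/2*M) * (1/n) := by
    have key : |∫ r in ((m:ℝ)/n)..s, ψ (n:ℝ) r * h r| ≤ (1/2*M) * |s - (m:ℝ)/n| := by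
      rw [← Real.norm_eq_abs]
      refine intervalIntegral.norm_integral_le_of_norm_le_const fun x hx => ?_
      rw [uIoc_of_le hms] at hx
      have hx1 : x ∈ Icc (-1:ℝ) 1 := ⟨by linarith [hx.1, hms0], by linarith [hx.2, hs.2]⟩
      rw [Real.norm_eq_abs, abs_mul]
      exact mul_le_mul (ψ_abs_le _ _) (hM _ hx1) (abs_nonneg _) (by norm_num)
    refine key.trans ?_
    rw [abs_of_nonneg (by linarith : (0:ℝ) ≤ s - (m:ℝ)/n)]
    apply mul_le_mul_of_nonneg_left hsm (by positivity)
  have hsplit : (∫ r in (0:ℝ)..((m:ℝ)/n), ψ (n:ℝ) r * h r)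
      + ∫ r in ((m:ℝ)/n)..s, ψ (n:ℝ) r * h r
      = ∫ r in (0:ℝ)..s, ψ (n:ℝ) r * h r :=
    intervalIntegral.integral_add_adjacent_intervals (hint _ hmono _ _) (hint _ hmono _ _)
  rw [← hsplit]
  calc |_ + _| ≤ _ := abs_add_le _ _
    _ ≤ 2*M * (1/(2*n)) + (1/2*M) * (1/n) := add_le_add hmain htail
    _ ≤ 2 * M / n := by
        have hnn : (0:ℝ) ≤ M * (1/n) := by positivity
        have e : 2*M * (1/(2*(n:ℝ))) + 1/2*M * (1/(n:ℝ)) = 3/2 * (M * (1/n)) := by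
          field_simp; ring
        have e2 : 2*M/(n:ℝ) = 2 * (M * (1/n)) := by ring
        rw [e, e2]; linarith [hnn]

end DIAux

namespace DIAux

lemma ψ_mul_ii {g : ℝ → ℝ} {a b : ℝ} (hg : IntervalIntegrable g volume a b) (c : ℝ) :
    IntervalIntegrable (fun r => ψ c r * g r) volume a b := by
  rw [intervalIntegrable_iff] at hg ⊢
  exact Integrable.bdd_mul hg (ψ_measurable c).aestronglyMeasurable
    (c := 1/2) (Filter.Eventually.of_forall fun x => by simpa [Real.norm_eq_abs] using ψ_abs_le c x)

lemma Aint_bound2 {α : ℝ} (hα0 : 0 < α) (hα1 : α ≤ 1) {x : ℝ}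
    (hx : x ∈ Icc (-2:ℝ) 2) : |Aint α x| ≤ 2/α := by
  have hA2 : Aint α 2 ≤ 2/α := by
    have h1 : Aint α 2 - Aint α 1 = ∫ u in (1:ℝ)..2, |u| ^ (α-1) :=
      (integral_ker_eq hα0 1 2).symm
    have h2 : |∫ u in (1:ℝ)..2, |u| ^ (α-1)| ≤ 1 * |(2:ℝ) - 1| := by
      rw [← Real.norm_eq_abs]
      refine intervalIntegral.norm_integral_le_of_norm_le_const fun u hu => ?_
      rw [uIoc_of_le (by norm_num : (1:ℝ) ≤ 2)] at hu
      rw [Real.norm_eq_abs, abs_of_nonneg (Real.rpow_nonneg (abs_nonneg _) _)]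
      rw [abs_of_pos (by linarith [hu.1] : (0:ℝ) < u)]
      exact Real.rpow_le_one_of_one_le_of_nonpos hu.1.le (by linarith)
    have h3 : (1:ℝ) ≤ 1/α := by
      rw [le_div_iff₀ hα0]; linarith
    have h4 := (abs_le.mp h2).2
    rw [Aint_one hα0] at h1
    have h6 : Aint α 2 ≤ 1/α + 1 := by
      norm_num at h4; linarith
    have h5 : (2:ℝ)/α = 1/α + 1/α := by ring
    linarith
  have h1 : Aint α x ≤ Aint α 2 := Aint_mono hα0 hx.2
  have h2 : Aint α (-2) ≤ Aint α x := Aint_mono hα0 hx.1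
  rw [show ((-2:ℝ)) = -(2:ℝ) by norm_num, Aint_neg] at h2
  rw [abs_le]; constructor <;> linarith

lemma swap_eq {α : ℝ} (hα0 : 0 < α) {s t : ℝ} (hs : s ∈ Icc (0:ℝ) 1)
    (ht : t ∈ Icc (0:ℝ) 1) (n : ℕ) :
    (∫ u in (0:ℝ)..t, ∫ r in (0:ℝ)..s, |u - r| ^ (α-1) * ψ (n:ℝ) r)
      = ∫ r in (0:ℝ)..s, ψ (n:ℝ) r * (Aint α (t - r) + Aint α r) := by
  have hψb : ∃ C, ∀ x, ‖ψ (n:ℝ) x‖ ≤ C :=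
    ⟨1/2, fun x => by simpa [Real.norm_eq_abs] using ψ_abs_le (n:ℝ) x⟩
  have hker_sec : ∀ u : ℝ, IntegrableOn (fun r => |u - r| ^ (α-1)) (Ioc 0 s) volume := by
    intro u
    have h2 := (ker_ii hα0 u (u - s)).comp_sub_left u
    simp only [sub_self, sub_sub_cancel] at h2
    rwa [intervalIntegrable_iff_integrableOn_Ioc_of_le hs.1] at h2
  have hsec : ∀ u : ℝ, IntegrableOn (fun r => |u - r| ^ (α-1) * ψ (n:ℝ) r) (Ioc 0 s)
      volume := by
    intro u
    have h3 := Integrable.bdd_mul (hker_sec u) (ψ_measurable (n:ℝ)).aestronglyMeasurable (Filter.Eventually.of_forall hψb.choose_spec)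
    simpa [mul_comm, IntegrableOn] using h3
  have hmeas : AEStronglyMeasurable
      (Function.uncurry fun u r => |u - r| ^ (α-1) * ψ (n:ℝ) r)
      ((volume.restrict (Ioc (0:ℝ) t)).prod (volume.restrict (Ioc (0:ℝ) s))) := by
    apply Measurable.aestronglyMeasurable
    have h1 : Measurable (fun p : ℝ × ℝ => |p.1 - p.2| ^ (α-1)) := by fun_prop
    exact h1.mul ((ψ_measurable (n:ℝ)).comp measurable_snd)
  have hkerint : ∀ u : ℝ,
      ∫ r in Ioc (0:ℝ) s, |u - r| ^ (α-1) = Aint α u - Aint α (u - s) := by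
    intro u
    rw [← intervalIntegral.integral_of_le hs.1,
      intervalIntegral.integral_comp_sub_left (fun x : ℝ => |x| ^ (α-1)) u,
      sub_zero, integral_ker_eq hα0]
  have hbound : ∀ u ∈ Ioc (0:ℝ) t,
      (∫ r in Ioc (0:ℝ) s, ‖|u - r| ^ (α-1) * ψ (n:ℝ) r‖) ≤ 2/α := by
    intro u hu
    have hu2 : u ≤ 1 := le_trans hu.2 ht.2
    have h1 : (∫ r in Ioc (0:ℝ) s, ‖|u - r| ^ (α-1) * ψ (n:ℝ) r‖)
        ≤ ∫ r in Ioc (0:ℝ) s, |u - r| ^ (α-1) := by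
      refine integral_mono ((hsec u).norm) (hker_sec u) fun r => ?_
      have hk : (0:ℝ) ≤ |u - r| ^ (α-1) := Real.rpow_nonneg (abs_nonneg _) _
      rw [Real.norm_eq_abs, abs_mul, abs_of_nonneg hk]
      exact mul_le_of_le_one_right hk (le_trans (ψ_abs_le _ _) (by norm_num))
    have h3 : Aint α u ≤ 1/α := by
      rw [← Aint_one hα0]; exact Aint_mono hα0 hu2
    have h4 : -(1/α) ≤ Aint α (u - s) := by
      have h5 := Aint_mono hα0 (show (-1:ℝ) ≤ u - s by linarith [hu.1, hs.2])
      rwa [Aint_neg, Aint_one hα0] at h5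
    rw [hkerint u] at h1
    have : (2:ℝ)/α = 1/α + 1/α := by ring
    linarith
  have hInt : Integrable (Function.uncurry fun u r => |u - r| ^ (α-1) * ψ (n:ℝ) r)
      ((volume.restrict (Ioc (0:ℝ) t)).prod (volume.restrict (Ioc (0:ℝ) s))) := by
    rw [integrable_prod_iff hmeas]
    refine ⟨Filter.Eventually.of_forall fun u => hsec u, ?_⟩
    refine Integrable.mono' (integrableOn_const (μ := volume) (s := Ioc (0:ℝ) t) (C := 2/α) measure_Ioc_lt_top.ne)
      hmeas.norm.integral_prod_right' ?_
    refine (ae_restrict_iff' measurableSet_Ioc).mpr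
      (Filter.Eventually.of_forall fun u hu => ?_)
    rw [Real.norm_eq_abs, abs_of_nonneg (integral_nonneg fun r => norm_nonneg _)]
    exact hbound u hu
  rw [intervalIntegral.integral_of_le ht.1]
  simp only [intervalIntegral.integral_of_le hs.1]
  rw [MeasureTheory.integral_integral_swap hInt]
  refine integral_congr_ae (Filter.Eventually.of_forall fun r => ?_)
  dsimp only
  have h6 : ∫ u in Ioc (0:ℝ) t, |u - r| ^ (α-1) * ψ (n:ℝ) r
      = (∫ u in Ioc (0:ℝ) t, |u - r| ^ (α-1)) * ψ (n:ℝ) r :=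
    integral_mul_const _ _
  have h7 : ∫ u in Ioc (0:ℝ) t, |u - r| ^ (α-1) = Aint α (t - r) + Aint α r := by
    rw [← intervalIntegral.integral_of_le ht.1,
      intervalIntegral.integral_comp_sub_right (fun x : ℝ => |x| ^ (α-1)) r,
      zero_sub, integral_ker_eq hα0, Aint_neg]
    ring
  rw [h6, h7, mul_comm]

end DIAux

open DIAux

/-- For `0 < α < 1` and `s, t ∈ [0,1]`,
`n^α ∫₀ᵗ ∫₀ˢ |u-r|^{α-1}(⌈nr⌉ - nr - 1/2) dr du = O(n^{α-1}) → 0`. -/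
theorem double_integral_O_n_alpha_sub_one (α : ℝ) (hα : α ∈ Set.Ioo (0 : ℝ) 1)
    (s t : ℝ) (hs : s ∈ Set.Icc (0 : ℝ) 1) (ht : t ∈ Set.Icc (0 : ℝ) 1) :
    (∃ C : ℝ, ∀ n : ℕ, 1 ≤ n →
      |(n : ℝ) ^ α *
          ∫ u in (0 : ℝ)..t,
            ∫ r in (0 : ℝ)..s, |u - r| ^ (α - 1) * ((⌈(n : ℝ) * r⌉ : ℝ) - n * r - 1 / 2)|
        ≤ C * (n : ℝ) ^ (α - 1)) ∧
    Tendsto (fun n : ℕ =>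
        (n : ℝ) ^ α *
          ∫ u in (0 : ℝ)..t,
            ∫ r in (0 : ℝ)..s, |u - r| ^ (α - 1) * ((⌈(n : ℝ) * r⌉ : ℝ) - n * r - 1 / 2))
      atTop (nhds 0) := by
  obtain ⟨hα0, hα1⟩ := hα
  have key : ∀ n : ℕ, 1 ≤ n →
      |(n : ℝ) ^ α *
          ∫ u in (0 : ℝ)..t,
            ∫ r in (0 : ℝ)..s, |u - r| ^ (α - 1) * ((⌈(n : ℝ) * r⌉ : ℝ) - n * r - 1 / 2)|
        ≤ (8/α) * (n : ℝ) ^ (α - 1) := by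
    intro n hn
    have hn0 : (0:ℝ) < n := by exact_mod_cast hn
    have hrw : (∫ u in (0 : ℝ)..t,
            ∫ r in (0 : ℝ)..s, |u - r| ^ (α - 1) * ((⌈(n : ℝ) * r⌉ : ℝ) - n * r - 1 / 2))
        = ∫ r in (0:ℝ)..s, ψ (n:ℝ) r * (Aint α (t - r) + Aint α r) :=
      swap_eq hα0 hs ht n
    rw [hrw]
    -- split the integral
    have hmono1 : Monotone (Aint α) := Aint_mono hα0
    have hmono2 : Monotone (fun r => -Aint α (t - r)) := fun x y hxy => by
      dsimp only
      have := Aint_mono hα0 (sub_le_sub_left hxy t)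
      linarith
    have i1 : IntervalIntegrable (fun r => ψ (n:ℝ) r * Aint α (t - r)) volume 0 s := by
      have hA : IntervalIntegrable (fun r : ℝ => Aint α (t - r)) volume 0 s := by
        have : Antitone (fun r : ℝ => Aint α (t - r)) := fun x y hxy =>
          Aint_mono hα0 (sub_le_sub_left hxy t)
        exact this.intervalIntegrable
      exact ψ_mul_ii hA _
    have i2 : IntervalIntegrable (fun r => ψ (n:ℝ) r * Aint α r) volume 0 s :=
      ψ_mul_ii hmono1.intervalIntegrable _
    have hsplit : (∫ r in (0:ℝ)..s, ψ (n:ℝ) r * (Aint α (t - r) + Aint α r))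
        = (∫ r in (0:ℝ)..s, ψ (n:ℝ) r * Aint α (t - r))
          + ∫ r in (0:ℝ)..s, ψ (n:ℝ) r * Aint α r := by
      rw [← intervalIntegral.integral_add i1 i2]
      refine intervalIntegral.integral_congr fun r _ => ?_
      ring
    rw [hsplit]
    -- bound each piece via mono_est with M = 2/α
    have hM1 : ∀ x ∈ Icc (-1:ℝ) 1, |Aint α x| ≤ 2/α := fun x hx =>
      Aint_bound2 hα0 hα1.le ⟨by linarith [hx.1], by linarith [hx.2]⟩
    have b2 : |∫ r in (0:ℝ)..s, ψ (n:ℝ) r * Aint α r| ≤ 2 * (2/α) / n :=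
      mono_est hmono1 hM1 hs n hn
    have b1 : |∫ r in (0:ℝ)..s, ψ (n:ℝ) r * Aint α (t - r)| ≤ 2 * (2/α) / n := by
      have hM2 : ∀ x ∈ Icc (-1:ℝ) 1, |(fun r => -Aint α (t - r)) x| ≤ 2/α := by
        intro x hx
        dsimp only
        rw [abs_neg]
        exact Aint_bound2 hα0 hα1.le
          ⟨by linarith [hx.2, ht.1], by linarith [hx.1, ht.2]⟩
      have heq : (∫ r in (0:ℝ)..s, ψ (n:ℝ) r * Aint α (t - r))
          = - ∫ r in (0:ℝ)..s, ψ (n:ℝ) r * (-Aint α (t - r)) := by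
        rw [← intervalIntegral.integral_neg]
        refine intervalIntegral.integral_congr fun r _ => ?_
        ring
      rw [heq, abs_neg]
      exact mono_est hmono2 hM2 hs n hn
    -- combine
    have habs : |(n : ℝ) ^ α * ((∫ r in (0:ℝ)..s, ψ (n:ℝ) r * Aint α (t - r))
          + ∫ r in (0:ℝ)..s, ψ (n:ℝ) r * Aint α r)|
        ≤ (n:ℝ)^α * (2 * (2/α) / n + 2 * (2/α) / n) := by
      rw [abs_mul, abs_of_nonneg (Real.rpow_nonneg hn0.le α)]
      refine mul_le_mul_of_nonneg_left ?_ (Real.rpow_nonneg hn0.le α)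
      exact le_trans (abs_add_le _ _) (add_le_add b1 b2)
    refine habs.trans ?_
    have hrpow : (n:ℝ)^(α-1) = (n:ℝ)^α / n := by
      rw [Real.rpow_sub hn0, Real.rpow_one]
    rw [hrpow]
    have hane : α ≠ 0 := ne_of_gt hα0
    have hnne : (n:ℝ) ≠ 0 := ne_of_gt hn0
    field_simp
    ring_nf
    exact le_refl _
  refine ⟨⟨8/α, key⟩, ?_⟩
  have h0 : Tendsto (fun n : ℕ => (8/α) * (n:ℝ)^(α-1)) atTop (nhds 0) := by
    have h1 : Tendsto (fun x : ℝ => x^(α-1)) atTop (nhds 0) := by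
      have h3 := tendsto_rpow_neg_atTop (show (0:ℝ) < 1-α by linarith)
      simpa [show -(1-α) = α-1 by ring] using h3
    have h2 := (h1.comp (tendsto_natCast_atTop_atTop (R := ℝ))).const_mul (8/α)
    simpa [Function.comp, mul_zero] using h2
  refine squeeze_zero_norm' ?_ h0
  filter_upwards [eventually_ge_atTop 1] with n hn
  simpa only [Real.norm_eq_abs] using key n hn
end
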